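/- arXiv:2010.06162 — 4 statements merged into one kernel-verified Lean document; each statement's English description precedes it below -/
import Mathlib

section
/- For every n ≥ 2, the canonical monoid homomorphism from the singular braid monoid SM_n to the singular braid group SB_n, sending σ_i ↦ σ_i, σ_i⁻¹ ↦ σ_i⁻¹ and τ_i ↦ τ_i for 1 ≤ i ≤ n−1, is injective; in particular SM_n embeds in a group. -/
/-!
The singular braid monoid `SM n` (n ≥ 2), presented by generators
σ_1,…,σ_{n−1}, σ_1⁻¹,…,σ_{n−1}⁻¹, τ_1,…,τ_{n−1} subject to:
σ_i σ_i⁻¹ = σ_i⁻¹ σ_i = 1; σ_i σ_{i+1} σ_i = σ_{i+1} σ_i σ_{i+1};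
σ_i σ_j = σ_j σ_i for |i−j| ≥ 2; τ_i τ_j = τ_j τ_i for |i−j| ≥ 2;
τ_i σ_j^{±1} = σ_j^{±1} τ_i for |i−j| ≥ 2; τ_i σ_i^{±1} = σ_i^{±1} τ_i;
σ_i σ_{i+1} τ_i = τ_{i+1} σ_i σ_{i+1}; σ_{i+1} σ_i τ_{i+1} = τ_i σ_{i+1} σ_i.
-/

/-- Generators of the singular braid monoid: σ_i, σ_i⁻¹ and τ_i for 1 ≤ i ≤ n−1. -/
inductive SMGen (n : ℕ) : Type
  | sig (i : ℕ) (h : 1 ≤ i ∧ i ≤ n - 1) : SMGen n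
  | sigInv (i : ℕ) (h : 1 ≤ i ∧ i ≤ n - 1) : SMGen n
  | tau (i : ℕ) (h : 1 ≤ i ∧ i ≤ n - 1) : SMGen n

/-- The word σ_i in the free monoid on the generators. -/
def smS (n i : ℕ) : FreeMonoid (SMGen n) :=
  if h : 1 ≤ i ∧ i ≤ n - 1 then FreeMonoid.of (SMGen.sig i h) else 1

/-- The word σ_i⁻¹ in the free monoid on the generators. -/
def smSI (n i : ℕ) : FreeMonoid (SMGen n) :=
  if h : 1 ≤ i ∧ i ≤ n - 1 then FreeMonoid.of (SMGen.sigInv i h) else 1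

/-- The word τ_i in the free monoid on the generators. -/
def smT (n i : ℕ) : FreeMonoid (SMGen n) :=
  if h : 1 ≤ i ∧ i ≤ n - 1 then FreeMonoid.of (SMGen.tau i h) else 1

/-- The defining relations of the singular braid monoid `SM n`. -/
inductive SMRel (n : ℕ) : FreeMonoid (SMGen n) → FreeMonoid (SMGen n) → Prop
  | inv_right (i : ℕ) (h : 1 ≤ i ∧ i ≤ n - 1) :
      SMRel n (smS n i * smSI n i) 1
  | inv_left (i : ℕ) (h : 1 ≤ i ∧ i ≤ n - 1) :
      SMRel n (smSI n i * smS n i) 1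
  | braid (i : ℕ) (h : 1 ≤ i ∧ i + 1 ≤ n - 1) :
      SMRel n (smS n i * smS n (i+1) * smS n i) (smS n (i+1) * smS n i * smS n (i+1))
  | sig_comm (i j : ℕ) (hi : 1 ≤ i ∧ i ≤ n - 1) (hj : 1 ≤ j ∧ j ≤ n - 1)
      (hij : i + 2 ≤ j ∨ j + 2 ≤ i) :
      SMRel n (smS n i * smS n j) (smS n j * smS n i)
  | p_comm (i j : ℕ) (hi : 1 ≤ i ∧ i ≤ n - 1) (hj : 1 ≤ j ∧ j ≤ n - 1)
      (hij : i + 2 ≤ j ∨ j + 2 ≤ i) :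
      SMRel n (smT n i * smT n j) (smT n j * smT n i)
  | p_sig_far_pos (i j : ℕ) (hi : 1 ≤ i ∧ i ≤ n - 1) (hj : 1 ≤ j ∧ j ≤ n - 1)
      (hij : i + 2 ≤ j ∨ j + 2 ≤ i) :
      SMRel n (smT n i * smS n j) (smS n j * smT n i)
  | p_sig_far_neg (i j : ℕ) (hi : 1 ≤ i ∧ i ≤ n - 1) (hj : 1 ≤ j ∧ j ≤ n - 1)
      (hij : i + 2 ≤ j ∨ j + 2 ≤ i) :
      SMRel n (smT n i * smSI n j) (smSI n j * smT n i)
  | p_sig_pos (i : ℕ) (h : 1 ≤ i ∧ i ≤ n - 1) :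
      SMRel n (smT n i * smS n i) (smS n i * smT n i)
  | p_sig_neg (i : ℕ) (h : 1 ≤ i ∧ i ≤ n - 1) :
      SMRel n (smT n i * smSI n i) (smSI n i * smT n i)
  | ssp (i : ℕ) (h : 1 ≤ i ∧ i + 1 ≤ n - 1) :
      SMRel n (smS n i * smS n (i+1) * smT n i) (smT n (i+1) * smS n i * smS n (i+1))
  | ssp' (i : ℕ) (h : 1 ≤ i ∧ i + 1 ≤ n - 1) :
      SMRel n (smS n (i+1) * smS n i * smT n (i+1)) (smT n i * smS n (i+1) * smS n i)

/-- The singular braid monoid `SM n`. -/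
def SM (n : ℕ) := (conGen (SMRel n)).Quotient

instance (n : ℕ) : Monoid (SM n) :=
  inferInstanceAs (Monoid ((conGen (SMRel n)).Quotient))

/-- The generator σ_i of `SM n` (defined for 1 ≤ i ≤ n−1; junk value 1 otherwise). -/
def SM.s (n i : ℕ) : SM n := (conGen (SMRel n)).mk' (smS n i)

/-- The generator σ_i⁻¹ of `SM n` (defined for 1 ≤ i ≤ n−1; junk value 1 otherwise). -/
def SM.sInv (n i : ℕ) : SM n := (conGen (SMRel n)).mk' (smSI n i)

/-- The generator τ_i of `SM n` (defined for 1 ≤ i ≤ n−1; junk value 1 otherwise). -/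
def SM.tau (n i : ℕ) : SM n := (conGen (SMRel n)).mk' (smT n i)

/-!
The singular braid group `SB n` (n ≥ 2), presented by generators σ_1,…,σ_{n−1},
τ_1,…,τ_{n−1} subject to: σ_i σ_{i+1} σ_i = σ_{i+1} σ_i σ_{i+1};
σ_i σ_j = σ_j σ_i for |i−j| ≥ 2; τ_i τ_j = τ_j τ_i for |i−j| ≥ 2;
τ_i σ_j = σ_j τ_i for |i−j| ≥ 2; τ_i σ_i = σ_i τ_i;
σ_i σ_{i+1} τ_i = τ_{i+1} σ_i σ_{i+1}; σ_{i+1} σ_i τ_{i+1} = τ_i σ_{i+1} σ_i.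
-/

/-- Generators of the singular braid group: σ_i and τ_i for 1 ≤ i ≤ n−1. -/
inductive SBGen (n : ℕ) : Type
  | sig (i : ℕ) (h : 1 ≤ i ∧ i ≤ n - 1) : SBGen n
  | tau (i : ℕ) (h : 1 ≤ i ∧ i ≤ n - 1) : SBGen n

/-- The element σ_i of the free group on the generators. -/
def sbS (n i : ℕ) : FreeGroup (SBGen n) :=
  if h : 1 ≤ i ∧ i ≤ n - 1 then FreeGroup.of (SBGen.sig i h) else 1

/-- The element τ_i of the free group on the generators. -/
def sbT (n i : ℕ) : FreeGroup (SBGen n) :=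
  if h : 1 ≤ i ∧ i ≤ n - 1 then FreeGroup.of (SBGen.tau i h) else 1

/-- The relators of the singular braid group `SB n` (each relation l = r is recorded
as the relator l * r⁻¹). -/
inductive SBRel (n : ℕ) : FreeGroup (SBGen n) → Prop
  | braid (i : ℕ) (h : 1 ≤ i ∧ i + 1 ≤ n - 1) :
      SBRel n (sbS n i * sbS n (i+1) * sbS n i * (sbS n (i+1) * sbS n i * sbS n (i+1))⁻¹)
  | sig_comm (i j : ℕ) (hi : 1 ≤ i ∧ i ≤ n - 1) (hj : 1 ≤ j ∧ j ≤ n - 1)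
      (hij : i + 2 ≤ j ∨ j + 2 ≤ i) :
      SBRel n (sbS n i * sbS n j * (sbS n j * sbS n i)⁻¹)
  | tau_comm (i j : ℕ) (hi : 1 ≤ i ∧ i ≤ n - 1) (hj : 1 ≤ j ∧ j ≤ n - 1)
      (hij : i + 2 ≤ j ∨ j + 2 ≤ i) :
      SBRel n (sbT n i * sbT n j * (sbT n j * sbT n i)⁻¹)
  | tau_sig_far (i j : ℕ) (hi : 1 ≤ i ∧ i ≤ n - 1) (hj : 1 ≤ j ∧ j ≤ n - 1)
      (hij : i + 2 ≤ j ∨ j + 2 ≤ i) :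
      SBRel n (sbT n i * sbS n j * (sbS n j * sbT n i)⁻¹)
  | tau_sig (i : ℕ) (h : 1 ≤ i ∧ i ≤ n - 1) :
      SBRel n (sbT n i * sbS n i * (sbS n i * sbT n i)⁻¹)
  | sst (i : ℕ) (h : 1 ≤ i ∧ i + 1 ≤ n - 1) :
      SBRel n (sbS n i * sbS n (i+1) * sbT n i * (sbT n (i+1) * sbS n i * sbS n (i+1))⁻¹)
  | sst' (i : ℕ) (h : 1 ≤ i ∧ i + 1 ≤ n - 1) :
      SBRel n (sbS n (i+1) * sbS n i * sbT n (i+1) * (sbT n i * sbS n (i+1) * sbS n i)⁻¹)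

/-- The singular braid group `SB n`. -/
def SB (n : ℕ) := PresentedGroup {x : FreeGroup (SBGen n) | SBRel n x}

instance (n : ℕ) : Group (SB n) :=
  inferInstanceAs (Group (PresentedGroup {x : FreeGroup (SBGen n) | SBRel n x}))

/-- The generator σ_i of `SB n` (defined for 1 ≤ i ≤ n−1; junk value 1 otherwise). -/
def SB.s (n i : ℕ) : SB n :=
  if h : 1 ≤ i ∧ i ≤ n - 1 then PresentedGroup.of (SBGen.sig i h) else 1

/-- The generator τ_i of `SB n` (defined for 1 ≤ i ≤ n−1; junk value 1 otherwise). -/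
def SB.t (n i : ℕ) : SB n :=
  if h : 1 ≤ i ∧ i ≤ n - 1 then PresentedGroup.of (SBGen.tau i h) else 1


namespace SBEmb
section Trace
variable {V : Type} (E : V → V → Prop)

def trRel : FreeMonoid V → FreeMonoid V → Prop :=
  fun u v => ∃ a b, E a b ∧ u = FreeMonoid.of a * FreeMonoid.of b ∧
    v = FreeMonoid.of b * FreeMonoid.of a

def trCon : Con (FreeMonoid V) := conGen (trRel E)

def TrM := (trCon E).Quotient
instance : Monoid (TrM E) := inferInstanceAs (Monoid (trCon E).Quotient)

def trRels : Set (FreeGroup V) :=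
  {x | ∃ a b, E a b ∧ x = FreeGroup.of a * FreeGroup.of b *
    (FreeGroup.of b * FreeGroup.of a)⁻¹}

def TrG := PresentedGroup (trRels E)
instance : Group (TrG E) := inferInstanceAs (Group (PresentedGroup _))

def trOf : V → TrM E := fun x => (trCon E).mk' (FreeMonoid.of x)

def trGOf : V → TrG E := fun x => PresentedGroup.of x

lemma trG_comm {a b : V} (h : E a b) :
    (trGOf E a) * trGOf E b = trGOf E b * trGOf E a := by
  have h1 : (PresentedGroup.mk (trRels E)) (FreeGroup.of a * FreeGroup.of b *
      (FreeGroup.of b * FreeGroup.of a)⁻¹) = 1 :=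
    (QuotientGroup.eq_one_iff _).2 (Subgroup.subset_normalClosure ⟨a, b, h, rfl⟩)
  simp only [map_mul, map_inv] at h1
  exact mul_inv_eq_one.1 h1

lemma trM_comm {a b : V} (h : E a b) :
    (trOf E a) * trOf E b = trOf E b * trOf E a := by
  exact (Con.eq _).2 (ConGen.Rel.of _ _ ⟨a, b, h, rfl, rfl⟩)

/-- The canonical monoid homomorphism from the trace monoid to the trace group. -/
def trμ : TrM E →* TrG E :=
  (trCon E).lift ((PresentedGroup.mk (trRels E)).comp (FreeMonoid.lift FreeGroup.of))
    (Con.conGen_le.2 (by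
      rintro x y ⟨a, b, h, rfl, rfl⟩
      have h2 := trG_comm E h
      show (PresentedGroup.mk (trRels E)).comp (FreeMonoid.lift FreeGroup.of)
          (FreeMonoid.of a * FreeMonoid.of b) =
        (PresentedGroup.mk (trRels E)).comp (FreeMonoid.lift FreeGroup.of)
          (FreeMonoid.of b * FreeMonoid.of a)
      simp only [Con.ker_rel, MonoidHom.comp_apply, map_mul, FreeMonoid.lift_eval_of]
      exact h2))

@[simp] lemma trμ_of (x : V) : trμ E (trOf E x) = trGOf E x :=
  Con.lift_mk' _ (FreeMonoid.of x)

/-- Universal property of the trace group. -/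
def trToGroup {P : Type*} [Group P] (g : V → P)
    (hg : ∀ a b, E a b → Commute (g a) (g b)) : TrG E →* P :=
  PresentedGroup.toGroup (f := g) (by
    rintro r ⟨a, b, h, rfl⟩
    simp only [map_mul, map_inv, FreeGroup.lift_apply_of]
    exact mul_inv_eq_one.2 (hg a b h).eq)

@[simp] lemma trToGroup_of {P : Type*} [Group P] (g : V → P)
    (hg : ∀ a b, E a b → Commute (g a) (g b)) (x : V) :
    trToGroup E g hg (trGOf E x) = g x :=
  PresentedGroup.toGroup.of _

def listProd (u : List V) : TrM E := (trCon E).mk' (FreeMonoid.ofList u)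

lemma listProd_nil : listProd E [] = 1 := rfl

lemma listProd_cons (x : V) (u : List V) :
    listProd E (x :: u) = trOf E x * listProd E u := by
  rw [listProd, FreeMonoid.ofList_cons, map_mul]; rfl

lemma listProd_append (u v : List V) :
    listProd E (u ++ v) = listProd E u * listProd E v := by
  induction u with
  | nil => rw [listProd_nil, one_mul]; rfl
  | cons x t ih =>
      rw [List.cons_append, listProd_cons, listProd_cons, ih, mul_assoc]

lemma listProd_surj (x : TrM E) : ∃ u : List V, x = listProd E u := by
  obtain ⟨w, rfl⟩ := Con.mk'_surjective x
  exact ⟨FreeMonoid.toList w, rfl⟩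


/-! ### Projections and injectivity of `trμ` -/

noncomputable def gOB (f : V → Option Bool) : V → FreeGroup Bool :=
  fun x => (f x).elim 1 FreeGroup.of

noncomputable def projHom (f : V → Option Bool)
    (hc : ∀ a b, E a b → Commute (gOB f a) (gOB f b)) : TrG E →* FreeGroup Bool :=
  trToGroup E (gOB f) hc

lemma projHom_eval (f : V → Option Bool)
    (hc : ∀ a b, E a b → Commute (gOB f a) (gOB f b)) (u : List V) :
    projHom E f hc (trμ E (listProd E u)) = ((u.filterMap f).map FreeGroup.of).prod := by
  induction u with
  | nil => simp [listProd_nil]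
  | cons x t ih =>
    rw [listProd_cons, map_mul, map_mul, trμ_of]
    have h1 : projHom E f hc (trGOf E x) = gOB f x := trToGroup_of E _ hc x
    rw [h1, List.filterMap_cons]
    cases hfx : f x with
    | none => simp [gOB, hfx, ih]
    | some b => simp [gOB, hfx, ih]

lemma pos_mk (L : List Bool) :
    (L.map FreeGroup.of).prod = FreeGroup.mk (L.map (fun b => (b, true))) := by
  induction L with
  | nil => rfl
  | cons b t ih =>
    rw [List.map_cons, List.prod_cons, ih, List.map_cons]
    rw [show (FreeGroup.of b : FreeGroup Bool) = FreeGroup.mk [(b, true)] from rfl,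
      FreeGroup.mul_mk]
    rfl

lemma reduce_pos {α : Type} [DecidableEq α] (L : List α) :
    FreeGroup.reduce (L.map (fun x => (x, true))) = L.map (fun x => (x, true)) := by
  induction L with
  | nil => rfl
  | cons a t ih =>
    rw [List.map_cons, FreeGroup.reduce.cons, ih]
    cases t with
    | nil => rfl
    | cons b t' => simp

lemma posProd_inj {L₁ L₂ : List Bool}
    (h : (L₁.map FreeGroup.of).prod = (L₂.map FreeGroup.of).prod) : L₁ = L₂ := by
  rw [pos_mk, pos_mk] at h
  have h2 := FreeGroup.reduce.sound h
  rw [reduce_pos, reduce_pos] at h2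
  have hinj : Function.Injective (fun b : Bool => (b, true)) := by
    intro x y hxy
    simpa using congrArg Prod.fst hxy
  exact List.map_injective_iff.2 hinj h2

lemma proj_eq (f : V → Option Bool)
    (hc : ∀ a b, E a b → Commute (gOB f a) (gOB f b)) {u v : List V}
    (h : trμ E (listProd E u) = trμ E (listProd E v)) :
    u.filterMap f = v.filterMap f := by
  have h2 := congrArg (projHom E f hc) h
  rw [projHom_eval, projHom_eval] at h2
  exact posProd_inj h2

noncomputable def f1 (a : V) : V → Option Bool :=
  fun x => @ite _ (x = a) (Classical.dec _) (some true) none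

lemma f1_comm (a : V) : ∀ x y, E x y → Commute (gOB (f1 a) x) (gOB (f1 a) y) := by
  intro x y _
  by_cases hx : x = a <;> by_cases hy : y = a <;>
    simp only [gOB, f1, hx, hy, if_pos, if_neg, Option.elim] <;>
    first
      | exact Commute.refl _
      | exact Commute.one_left _
      | exact Commute.one_right _

noncomputable def f2 (a b : V) : V → Option Bool :=
  fun x => @ite _ (x = a) (Classical.dec _) (some true)
    (@ite _ (x = b) (Classical.dec _) (some false) none)

lemma f2_comm (a b : V) (hab : a ≠ b) (h1 : ¬ E a b) (h2 : ¬ E b a) :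
    ∀ x y, E x y → Commute (gOB (f2 a b) x) (gOB (f2 a b) y) := by
  intro x y hxy
  by_cases hxa : x = a
  · by_cases hya : y = a
    · subst hxa; subst hya; exact Commute.refl _
    · by_cases hyb : y = b
      · exact absurd (hyb ▸ hxa ▸ hxy) h1
      · simp only [gOB, f2, hya, hyb, if_neg, Option.elim]
        exact Commute.one_right _
  · by_cases hxb : x = b
    · by_cases hya : y = a
      · exact absurd (hya ▸ hxb ▸ hxy) h2
      · by_cases hyb : y = b
        · subst hxb; subst hyb; exact Commute.refl _
        · simp only [gOB, f2, hya, hyb, if_neg, Option.elim]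
          exact Commute.one_right _
    · simp only [gOB, f2, hxa, hxb, if_neg, Option.elim]
      exact Commute.one_left _

lemma exists_split {a : V} {v : List V} (hv : a ∈ v) :
    ∃ v₁ v₂, v = v₁ ++ a :: v₂ ∧ a ∉ v₁ := by
  induction v with
  | nil => exact absurd hv (List.not_mem_nil)
  | cons y t ih =>
    by_cases hya : y = a
    · exact ⟨[], t, by rw [hya]; rfl, List.not_mem_nil⟩
    · have hat : a ∈ t := by
        rcases List.mem_cons.1 hv with h | h
        · exact absurd h.symm hya
        · exact h
      obtain ⟨v₁, v₂, rfl, hnm⟩ := ih hat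
      exact ⟨y :: v₁, v₂, rfl, by
        intro hmem
        rcases List.mem_cons.1 hmem with h | h
        · exact hya h.symm
        · exact hnm h⟩

lemma shift (a : V) (v₂ : List V) :
    ∀ v₁ : List V, (∀ x ∈ v₁, E a x ∨ E x a) →
      listProd E (v₁ ++ a :: v₂) = listProd E (a :: (v₁ ++ v₂)) := by
  intro v₁
  induction v₁ with
  | nil => intro _; rfl
  | cons x t ih =>
    intro hx
    have hswap : trOf E a * trOf E x = trOf E x * trOf E a := by
      rcases hx x (List.mem_cons_self) with h | h
      · exact trM_comm E h
      · exact (trM_comm E h).symm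
    calc listProd E (x :: t ++ a :: v₂)
        = trOf E x * listProd E (t ++ a :: v₂) := by
          rw [List.cons_append, listProd_cons]
      _ = trOf E x * (trOf E a * listProd E (t ++ v₂)) := by
          rw [ih (fun z hz => hx z (List.mem_cons_of_mem x hz)), listProd_cons]
      _ = trOf E a * (trOf E x * listProd E (t ++ v₂)) := by
          rw [← mul_assoc, ← mul_assoc, ← hswap]
      _ = listProd E (a :: (x :: t ++ v₂)) := by
          rw [listProd_cons, List.cons_append, listProd_cons]

theorem trμ_inj : Function.Injective (trμ E) := by
  suffices H : ∀ (k : ℕ) (u v : List V), u.length ≤ k →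
      trμ E (listProd E u) = trμ E (listProd E v) → listProd E u = listProd E v by
    intro x y hxy
    obtain ⟨u, rfl⟩ := listProd_surj E x
    obtain ⟨v, rfl⟩ := listProd_surj E y
    exact H u.length u v le_rfl hxy
  intro k
  induction k with
  | zero =>
    intro u v hu h
    have hu0 : u = [] := List.length_eq_zero_iff.1 (Nat.le_zero.1 hu)
    subst hu0
    cases v with
    | nil => rfl
    | cons y v' =>
      exfalso
      have h2 := proj_eq E (f1 y) (f1_comm E y) h
      rw [show ([] : List V).filterMap (f1 y) = [] from rfl] at h2
      have : (y :: v').filterMap (f1 y) = true :: v'.filterMap (f1 y) := by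
        rw [List.filterMap_cons, show f1 y y = some true from if_pos rfl]
      rw [this] at h2
      exact nomatch h2
  | succ k ih =>
    intro u v hu h
    cases u with
    | nil =>
      cases v with
      | nil => rfl
      | cons y v' =>
        exfalso
        have h2 := proj_eq E (f1 y) (f1_comm E y) h
        rw [show ([] : List V).filterMap (f1 y) = [] from rfl] at h2
        have : (y :: v').filterMap (f1 y) = true :: v'.filterMap (f1 y) := by
          rw [List.filterMap_cons, show f1 y y = some true from if_pos rfl]
        rw [this] at h2
        exact nomatch h2
    | cons a u' =>
      -- a occurs in v
      have hav : a ∈ v := by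
        by_contra hnot
        have h2 := proj_eq E (f1 a) (f1_comm E a) h
        have hl : (a :: u').filterMap (f1 a) = true :: u'.filterMap (f1 a) := by
          rw [List.filterMap_cons, show f1 a a = some true from if_pos rfl]
        have hr : v.filterMap (f1 a) = [] := by
          rw [List.filterMap_eq_nil_iff]
          intro z hz
          have hza : z ≠ a := fun hc => hnot (hc ▸ hz)
          simp [f1, hza]
        rw [hl, hr] at h2
        exact nomatch h2
      obtain ⟨v₁, v₂, rfl, hnm⟩ := exists_split hav
      -- every element of v₁ commutes with a
      have hcm : ∀ x ∈ v₁, E a x ∨ E x a := by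
        intro x hx
        by_contra hc
        push_neg at hc
        have hxa : x ≠ a := fun hc' => hnm (hc' ▸ hx)
        have hax : a ≠ x := fun hc' => hxa hc'.symm
        have h2 := proj_eq E (f2 a x) (f2_comm E a x hax hc.1 hc.2) h
        have hl : (a :: u').filterMap (f2 a x) = true :: u'.filterMap (f2 a x) := by
          rw [List.filterMap_cons, show f2 a x a = some true from if_pos rfl]
        have hwf : ∀ z ∈ v₁, ∀ w, f2 a x z = some w → w = false := by
          intro z hz w hw
          have hza : z ≠ a := fun hc' => hnm (hc' ▸ hz)
          by_cases hzx : z = x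
          · rw [f2, if_neg hza, if_pos hzx] at hw
            exact (Option.some.inj hw).symm
          · rw [f2, if_neg hza, if_neg hzx] at hw
            exact nomatch hw
        have hmem : false ∈ v₁.filterMap (f2 a x) := by
          refine List.mem_filterMap.2 ⟨x, hx, ?_⟩
          rw [f2, if_neg hxa, if_pos rfl]
        have hr : (v₁ ++ a :: v₂).filterMap (f2 a x) =
            v₁.filterMap (f2 a x) ++ (a :: v₂).filterMap (f2 a x) := by
          rw [List.filterMap_append]
        rw [hl, hr] at h2
        cases hL : v₁.filterMap (f2 a x) with
        | nil => rw [hL] at hmem; exact absurd hmem List.not_mem_nil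
        | cons c L' =>
          have hcfalse : c = false := by
            have hcm : c ∈ v₁.filterMap (f2 a x) := by rw [hL]; exact List.mem_cons_self
            obtain ⟨z, hz, hzc⟩ := List.mem_filterMap.1 hcm
            exact hwf z hz c hzc
          rw [hL, List.cons_append] at h2
          injection h2 with h21 _
          rw [hcfalse] at h21
          exact Bool.noConfusion h21
      have hshift := shift E a v₂ v₁ hcm
      have hμcancel : trμ E (listProd E u') = trμ E (listProd E (v₁ ++ v₂)) := by
        have h3 : trμ E (listProd E (a :: u')) = trμ E (listProd E (a :: (v₁ ++ v₂))) := by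
          rw [← hshift]; exact h
        rw [listProd_cons, listProd_cons, map_mul, map_mul, trμ_of] at h3
        exact mul_left_cancel h3
      have hlen : u'.length ≤ k := by
        simp only [List.length_cons] at hu
        omega
      have hrec := ih u' (v₁ ++ v₂) hlen hμcancel
      rw [listProd_cons, hrec, hshift, listProd_cons]

end Trace
end SBEmb
namespace SBEmb
variable {n : ℕ}

/-- generic: relator membership gives equality in a presented group -/
lemma presented_eq {α : Type*} {rels : Set (FreeGroup α)} {u v : FreeGroup α}
    (h : u * v⁻¹ ∈ rels) : PresentedGroup.mk rels u = PresentedGroup.mk rels v := by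
  have h1 : PresentedGroup.mk rels (u * v⁻¹) = 1 :=
    (QuotientGroup.eq_one_iff _).2 (Subgroup.subset_normalClosure h)
  simp only [map_mul, map_inv] at h1
  exact mul_inv_eq_one.1 h1

/-- generic hom-extensionality for quotients of free monoids by congruences -/
lemma conFM_homext {γ : Type*} {P : Type*} [Monoid P] {c : Con (FreeMonoid γ)}
    {f g : c.Quotient →* P}
    (h : ∀ x : γ, f (c.mk' (FreeMonoid.of x)) = g (c.mk' (FreeMonoid.of x))) : f = g := by
  refine MonoidHom.ext fun x => ?_
  obtain ⟨w, rfl⟩ := Con.mk'_surjective x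
  exact DFunLike.congr_fun
    (FreeMonoid.hom_eq (f := f.comp c.mk') (g := g.comp c.mk') h) w

/-- The relators of the braid group. -/
inductive BRel (n : ℕ) : FreeGroup ℕ → Prop
  | braid (i : ℕ) (h : 1 ≤ i ∧ i + 1 ≤ n - 1) :
      BRel n (.of i * .of (i+1) * .of i * (.of (i+1) * .of i * .of (i+1))⁻¹)
  | comm (i j : ℕ) (hi : 1 ≤ i ∧ i ≤ n - 1) (hj : 1 ≤ j ∧ j ≤ n - 1)
      (hij : i + 2 ≤ j ∨ j + 2 ≤ i) :
      BRel n (.of i * .of j * (.of j * .of i)⁻¹)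

/-- The braid group (with extra junk free generators of index outside `[1, n-1]`). -/
def B (n : ℕ) := PresentedGroup {x : FreeGroup ℕ | BRel n x}
instance : Group (B n) := inferInstanceAs (Group (PresentedGroup _))

/-- The braid generators. -/
def bs (n i : ℕ) : B n := PresentedGroup.of i

lemma b_braid (i : ℕ) (h : 1 ≤ i ∧ i + 1 ≤ n - 1) :
    bs n i * bs n (i+1) * bs n i = bs n (i+1) * bs n i * bs n (i+1) := by
  have h1 := presented_eq (rels := {x : FreeGroup ℕ | BRel n x}) (BRel.braid i h)
  simp only [map_mul] at h1
  exact h1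

lemma b_comm (i j : ℕ) (hi : 1 ≤ i ∧ i ≤ n - 1) (hj : 1 ≤ j ∧ j ≤ n - 1)
    (hij : i + 2 ≤ j ∨ j + 2 ≤ i) :
    bs n i * bs n j = bs n j * bs n i := by
  have h1 := presented_eq (rels := {x : FreeGroup ℕ | BRel n x}) (BRel.comm i j hi hj hij)
  simp only [map_mul] at h1
  exact h1

/-! ### Basic equalities in `SM n` -/

lemma smrel_eq {u v : FreeMonoid (SMGen n)} (h : SMRel n u v) :
    (conGen (SMRel n)).mk' u = (conGen (SMRel n)).mk' v :=
  (Con.eq _).2 (ConGen.Rel.of _ _ h)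

lemma sm_inv_right (i : ℕ) (h : 1 ≤ i ∧ i ≤ n - 1) :
    SM.s n i * SM.sInv n i = 1 := by
  have h1 := smrel_eq (SMRel.inv_right i h)
  simp only [map_mul, map_one] at h1
  exact h1

lemma sm_inv_left (i : ℕ) (h : 1 ≤ i ∧ i ≤ n - 1) :
    SM.sInv n i * SM.s n i = 1 := by
  have h1 := smrel_eq (SMRel.inv_left i h)
  simp only [map_mul, map_one] at h1
  exact h1

lemma sm_braid (i : ℕ) (h : 1 ≤ i ∧ i + 1 ≤ n - 1) :
    SM.s n i * SM.s n (i+1) * SM.s n i = SM.s n (i+1) * SM.s n i * SM.s n (i+1) := by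
  have h1 := smrel_eq (SMRel.braid i h)
  simp only [map_mul] at h1
  exact h1

lemma sm_sig_comm (i j : ℕ) (hi : 1 ≤ i ∧ i ≤ n - 1) (hj : 1 ≤ j ∧ j ≤ n - 1)
    (hij : i + 2 ≤ j ∨ j + 2 ≤ i) : SM.s n i * SM.s n j = SM.s n j * SM.s n i := by
  have h1 := smrel_eq (SMRel.sig_comm i j hi hj hij)
  simp only [map_mul] at h1
  exact h1

lemma sm_p_comm (i j : ℕ) (hi : 1 ≤ i ∧ i ≤ n - 1) (hj : 1 ≤ j ∧ j ≤ n - 1)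
    (hij : i + 2 ≤ j ∨ j + 2 ≤ i) : SM.tau n i * SM.tau n j = SM.tau n j * SM.tau n i := by
  have h1 := smrel_eq (SMRel.p_comm i j hi hj hij)
  simp only [map_mul] at h1
  exact h1

lemma sm_p_sig_far_pos (i j : ℕ) (hi : 1 ≤ i ∧ i ≤ n - 1) (hj : 1 ≤ j ∧ j ≤ n - 1)
    (hij : i + 2 ≤ j ∨ j + 2 ≤ i) : SM.tau n i * SM.s n j = SM.s n j * SM.tau n i := by
  have h1 := smrel_eq (SMRel.p_sig_far_pos i j hi hj hij)
  simp only [map_mul] at h1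
  exact h1

lemma sm_p_sig_pos (i : ℕ) (h : 1 ≤ i ∧ i ≤ n - 1) :
    SM.tau n i * SM.s n i = SM.s n i * SM.tau n i := by
  have h1 := smrel_eq (SMRel.p_sig_pos i h)
  simp only [map_mul] at h1
  exact h1

lemma sm_ssp (i : ℕ) (h : 1 ≤ i ∧ i + 1 ≤ n - 1) :
    SM.s n i * SM.s n (i+1) * SM.tau n i = SM.tau n (i+1) * SM.s n i * SM.s n (i+1) := by
  have h1 := smrel_eq (SMRel.ssp i h)
  simp only [map_mul] at h1
  exact h1

lemma sm_ssp' (i : ℕ) (h : 1 ≤ i ∧ i + 1 ≤ n - 1) :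
    SM.s n (i+1) * SM.s n i * SM.tau n (i+1) = SM.tau n i * SM.s n (i+1) * SM.s n i := by
  have h1 := smrel_eq (SMRel.ssp' i h)
  simp only [map_mul] at h1
  exact h1

/-- σ_i as a unit of `SM n`. -/
def sUnit (i : ℕ) (h : 1 ≤ i ∧ i ≤ n - 1) : (SM n)ˣ :=
  ⟨SM.s n i, SM.sInv n i, sm_inv_right i h, sm_inv_left i h⟩

/-- The homomorphism from the braid group to the units of `SM n`. -/
def iotaU : B n →* (SM n)ˣ :=
  PresentedGroup.toGroup
    (f := fun i => if h : 1 ≤ i ∧ i ≤ n - 1 then sUnit i h else 1)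
    (by
      rintro r (⟨i, h⟩ | ⟨i, j, hi, hj, hij⟩)
      · have hi1 : 1 ≤ i ∧ i ≤ n - 1 := ⟨h.1, le_trans (Nat.le_succ i) h.2⟩
        have hi2 : 1 ≤ i + 1 ∧ i + 1 ≤ n - 1 := ⟨Nat.le_add_left 1 i, h.2⟩
        simp only [map_mul, map_inv, FreeGroup.lift_apply_of, dif_pos hi1, dif_pos hi2]
        rw [mul_inv_eq_one]
        apply Units.ext
        simp only [Units.val_mul, sUnit]
        exact sm_braid i h
      · simp only [map_mul, map_inv, FreeGroup.lift_apply_of, dif_pos hi, dif_pos hj]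
        rw [mul_inv_eq_one]
        apply Units.ext
        simp only [Units.val_mul, sUnit]
        exact sm_sig_comm i j hi hj hij)

lemma iotaU_bs (i : ℕ) (h : 1 ≤ i ∧ i ≤ n - 1) : iotaU (bs n i) = sUnit i h := by
  have h1 : iotaU (n := n) (bs n i) =
      if h' : 1 ≤ i ∧ i ≤ n - 1 then sUnit i h' else 1 :=
    PresentedGroup.toGroup.of _
  rw [h1, dif_pos h]

end SBEmb
namespace SBEmb

/-! ### Functorial maps of trace monoids and groups -/

section TraceMap
variable {V : Type} (E : V → V → Prop)

/-- A self-map of the vertices preserving `E` induces an endomorphism of the trace monoid. -/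
def trMmap (g : V → V) (hg : ∀ a b, E a b → E (g a) (g b)) : TrM E →* TrM E :=
  (trCon E).lift (FreeMonoid.lift (fun x => trOf E (g x)))
    (Con.conGen_le.2 (by
      rintro x y ⟨a, b, h, rfl, rfl⟩
      simp only [Con.ker_rel, map_mul, FreeMonoid.lift_eval_of]
      exact trM_comm E (hg a b h)))

@[simp] lemma trMmap_of (g : V → V) (hg : ∀ a b, E a b → E (g a) (g b)) (x : V) :
    trMmap E g hg (trOf E x) = trOf E (g x) :=
  Con.lift_mk' _ (FreeMonoid.of x)

/-- A self-map of the vertices preserving `E` induces an endomorphism of the trace group. -/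
def trGmap (g : V → V) (hg : ∀ a b, E a b → E (g a) (g b)) : TrG E →* TrG E :=
  trToGroup E (fun x => trGOf E (g x)) (fun a b h => trG_comm E (hg a b h))

@[simp] lemma trGmap_of (g : V → V) (hg : ∀ a b, E a b → E (g a) (g b)) (x : V) :
    trGmap E g hg (trGOf E x) = trGOf E (g x) :=
  trToGroup_of E _ _ x

lemma trM_homext {P : Type*} [Monoid P] {f g : TrM E →* P}
    (h : ∀ x : V, f (trOf E x) = g (trOf E x)) : f = g :=
  conFM_homext h

lemma trG_homext {P : Type*} [Group P] {f g : TrG E →* P}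
    (h : ∀ x : V, f (trGOf E x) = g (trGOf E x)) : f = g :=
  PresentedGroup.ext h

end TraceMap

/-! ### The set of marked bands -/

variable {n : ℕ}

/-- Moves on marked bands. -/
inductive Rmove (n : ℕ) : (B n × ℕ) → (B n × ℕ) → Prop
  | sig (b : B n) (i : ℕ) (h : 1 ≤ i ∧ i ≤ n - 1) :
      Rmove n (b, i) (b * bs n i, i)
  | far (b : B n) (i j : ℕ) (hi : 1 ≤ i ∧ i ≤ n - 1) (hj : 1 ≤ j ∧ j ≤ n - 1)
      (hij : i + 2 ≤ j ∨ j + 2 ≤ i) :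
      Rmove n (b, i) (b * bs n j, i)
  | ssp (b : B n) (i : ℕ) (h : 1 ≤ i ∧ i + 1 ≤ n - 1) :
      Rmove n (b * bs n i * bs n (i+1), i) (b, i+1)
  | ssp' (b : B n) (i : ℕ) (h : 1 ≤ i ∧ i + 1 ≤ n - 1) :
      Rmove n (b * bs n (i+1) * bs n i, i+1) (b, i)

/-- The set of marked bands: pairs (braid, index) modulo the moves. -/
def Lam (n : ℕ) := Quot (Rmove n)

/-- The class of a pair. -/
def lam (b : B n) (i : ℕ) : Lam n := Quot.mk _ (b, i)

lemma lam_sig (b : B n) (i : ℕ) (h : 1 ≤ i ∧ i ≤ n - 1) :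
    lam (b * bs n i) i = lam b i :=
  (Quot.sound (Rmove.sig b i h)).symm

lemma lam_far (b : B n) (i j : ℕ) (hi : 1 ≤ i ∧ i ≤ n - 1) (hj : 1 ≤ j ∧ j ≤ n - 1)
    (hij : i + 2 ≤ j ∨ j + 2 ≤ i) : lam (b * bs n j) i = lam b i :=
  (Quot.sound (Rmove.far b i j hi hj hij)).symm

lemma lam_ssp (b : B n) (i : ℕ) (h : 1 ≤ i ∧ i + 1 ≤ n - 1) :
    lam (b * bs n i * bs n (i+1)) i = lam b (i+1) :=
  Quot.sound (Rmove.ssp b i h)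

lemma lam_ssp' (b : B n) (i : ℕ) (h : 1 ≤ i ∧ i + 1 ≤ n - 1) :
    lam (b * bs n (i+1) * bs n i) (i+1) = lam b i :=
  Quot.sound (Rmove.ssp' b i h)

/-- Useful variants. -/
lemma lam_sig' (b : B n) (i : ℕ) (h : 1 ≤ i ∧ i ≤ n - 1) :
    lam (b * (bs n i)⁻¹) i = lam b i := by
  have h1 := lam_sig (b * (bs n i)⁻¹) i h
  rw [mul_assoc, inv_mul_cancel, mul_one] at h1
  exact h1.symm

lemma lam_far' (b : B n) (i j : ℕ) (hi : 1 ≤ i ∧ i ≤ n - 1) (hj : 1 ≤ j ∧ j ≤ n - 1)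
    (hij : i + 2 ≤ j ∨ j + 2 ≤ i) : lam (b * (bs n j)⁻¹) i = lam b i := by
  have h1 := lam_far (b * (bs n j)⁻¹) i j hi hj hij
  rw [mul_assoc, inv_mul_cancel, mul_one] at h1
  exact h1.symm

/-- The commutation relation on marked bands. -/
def bandE (n : ℕ) : Lam n → Lam n → Prop := fun x y =>
  ∃ (b : B n) (i j : ℕ), (1 ≤ i ∧ i ≤ n - 1) ∧ (1 ≤ j ∧ j ≤ n - 1) ∧
    (i + 2 ≤ j ∨ j + 2 ≤ i) ∧ x = lam b i ∧ y = lam b j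

/-- Left action of the braid group on marked bands. -/
def actLam (b : B n) : Lam n → Lam n :=
  Quot.lift (fun p => lam (b * p.1) p.2) (by
    rintro p q (⟨c, i, h⟩ | ⟨c, i, j, hi, hj, hij⟩ | ⟨c, i, h⟩ | ⟨c, i, h⟩)
    · show lam (b * c) i = lam (b * (c * bs n i)) i
      rw [← mul_assoc, lam_sig _ _ h]
    · show lam (b * c) i = lam (b * (c * bs n j)) i
      rw [← mul_assoc, lam_far _ i j hi hj hij]
    · show lam (b * (c * bs n i * bs n (i+1))) i = lam (b * c) (i+1)
      rw [← mul_assoc, ← mul_assoc, lam_ssp _ _ h]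
    · show lam (b * (c * bs n (i+1) * bs n i)) (i+1) = lam (b * c) i
      rw [← mul_assoc, ← mul_assoc, lam_ssp' _ _ h])

@[simp] lemma actLam_lam (b c : B n) (i : ℕ) : actLam b (lam c i) = lam (b * c) i := rfl

lemma actLam_one (x : Lam n) : actLam 1 x = x := by
  induction x using Quot.ind with
  | _ p => show lam (1 * p.1) p.2 = lam p.1 p.2; rw [one_mul]

lemma actLam_mul (a b : B n) (x : Lam n) : actLam (a * b) x = actLam a (actLam b x) := by
  induction x using Quot.ind with
  | _ p =>
      show lam (a * b * p.1) p.2 = lam (a * (b * p.1)) p.2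
      rw [mul_assoc]

lemma actLam_bandE (b : B n) {x y : Lam n} (h : bandE n x y) :
    bandE n (actLam b x) (actLam b y) := by
  obtain ⟨c, i, j, hi, hj, hij, rfl, rfl⟩ := h
  exact ⟨b * c, i, j, hi, hj, hij, rfl, rfl⟩

end SBEmb
namespace SBEmb
variable {n : ℕ}

/-! ### The braid action on the trace monoid and trace group of bands -/

/-- The action of a braid on the trace monoid of bands. -/
def actM (b : B n) : TrM (bandE n) →* TrM (bandE n) :=
  trMmap (bandE n) (actLam b) (fun _ _ h => actLam_bandE b h)

@[simp] lemma actM_of (b c : B n) (i : ℕ) :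
    actM b (trOf (bandE n) (lam c i)) = trOf (bandE n) (lam (b * c) i) := by
  rw [actM, trMmap_of, actLam_lam]

@[simp] lemma actM_one (m : TrM (bandE n)) : actM 1 m = m := by
  have h1 : actM (n := n) 1 = MonoidHom.id _ := by
    apply trM_homext
    intro x
    induction x using Quot.ind with
    | _ p =>
        show actM 1 (trOf (bandE n) (lam p.1 p.2)) = trOf (bandE n) (lam p.1 p.2)
        rw [actM_of, one_mul]
  rw [h1]; rfl

lemma actM_mul (a b : B n) (m : TrM (bandE n)) : actM (a * b) m = actM a (actM b m) := by
  have h1 : actM (n := n) (a * b) = (actM a).comp (actM b) := by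
    apply trM_homext
    intro x
    induction x using Quot.ind with
    | _ p =>
        show actM (a * b) (trOf (bandE n) (lam p.1 p.2)) =
          (actM a) ((actM b) (trOf (bandE n) (lam p.1 p.2)))
        rw [actM_of, actM_of, actM_of, mul_assoc]
  rw [h1]; rfl

/-- The action of a braid on the trace group of bands. -/
def actG (b : B n) : TrG (bandE n) →* TrG (bandE n) :=
  trGmap (bandE n) (actLam b) (fun _ _ h => actLam_bandE b h)

@[simp] lemma actG_of (b c : B n) (i : ℕ) :
    actG b (trGOf (bandE n) (lam c i)) = trGOf (bandE n) (lam (b * c) i) := by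
  rw [actG, trGmap_of, actLam_lam]

lemma actG_one (x : TrG (bandE n)) : actG 1 x = x := by
  have h1 : actG (n := n) 1 = MonoidHom.id _ := by
    apply trG_homext
    intro y
    induction y using Quot.ind with
    | _ p =>
        show actG 1 (trGOf (bandE n) (lam p.1 p.2)) = trGOf (bandE n) (lam p.1 p.2)
        rw [actG_of, one_mul]
  rw [h1]; rfl

lemma actG_mul (a b : B n) (x : TrG (bandE n)) : actG (a * b) x = actG a (actG b x) := by
  have h1 : actG (n := n) (a * b) = (actG a).comp (actG b) := by
    apply trG_homext
    intro y
    induction y using Quot.ind with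
    | _ p =>
        show actG (a * b) (trGOf (bandE n) (lam p.1 p.2)) =
          (actG a) ((actG b) (trGOf (bandE n) (lam p.1 p.2)))
        rw [actG_of, actG_of, actG_of, mul_assoc]
  rw [h1]; rfl

/-- The braid group acts on the trace group of bands by automorphisms. -/
def phiAut : B n →* MulAut (TrG (bandE n)) where
  toFun b :=
    { toFun := actG b
      invFun := actG b⁻¹
      left_inv := fun x => by rw [← actG_mul, inv_mul_cancel, actG_one]
      right_inv := fun x => by rw [← actG_mul, mul_inv_cancel, actG_one]
      map_mul' := (actG b).map_mul }
  map_one' := by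
    apply MulEquiv.ext
    intro x
    exact actG_one x
  map_mul' a b := by
    apply MulEquiv.ext
    intro x
    exact actG_mul a b x

lemma phiAut_apply (b : B n) (x : TrG (bandE n)) : phiAut b x = actG b x := rfl

/-! ### The twisted product monoid `Tw n` -/

@[ext] structure Tw (n : ℕ) where
  m : TrM (bandE n)
  b : B n

instance : Mul (Tw n) := ⟨fun x y => ⟨x.m * actM x.b y.m, x.b * y.b⟩⟩
instance : One (Tw n) := ⟨⟨1, 1⟩⟩

lemma tw_mul_m (x y : Tw n) : (x * y).m = x.m * actM x.b y.m := rfl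
lemma tw_mul_b (x y : Tw n) : (x * y).b = x.b * y.b := rfl
lemma tw_one_m : (1 : Tw n).m = 1 := rfl
lemma tw_one_b : (1 : Tw n).b = 1 := rfl

instance : Monoid (Tw n) where
  mul_assoc x y z := by
    apply Tw.ext
    · simp only [tw_mul_m, tw_mul_b, map_mul, actM_mul, mul_assoc]
    · simp only [tw_mul_b, mul_assoc]
  one_mul x := by
    apply Tw.ext
    · simp only [tw_mul_m, tw_one_m, tw_one_b, actM_one, one_mul]
    · simp only [tw_mul_b, tw_one_b, one_mul]
  mul_one x := by
    apply Tw.ext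
    · simp only [tw_mul_m, tw_one_m, tw_one_b, map_one, mul_one]
    · simp only [tw_mul_b, tw_one_b, mul_one]

/-- images of the generators in `Tw n` -/
def twS (i : ℕ) : Tw n := ⟨1, bs n i⟩
def twSI (i : ℕ) : Tw n := ⟨1, (bs n i)⁻¹⟩
def twT (i : ℕ) : Tw n := ⟨trOf (bandE n) (lam 1 i), 1⟩

lemma twS_m (i : ℕ) : (twS (n := n) i).m = 1 := rfl
lemma twS_b (i : ℕ) : (twS (n := n) i).b = bs n i := rfl
lemma twSI_m (i : ℕ) : (twSI (n := n) i).m = 1 := rfl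
lemma twSI_b (i : ℕ) : (twSI (n := n) i).b = (bs n i)⁻¹ := rfl
lemma twT_m (i : ℕ) : (twT (n := n) i).m = trOf (bandE n) (lam 1 i) := rfl
lemma twT_b (i : ℕ) : (twT (n := n) i).b = 1 := rfl

/-! ### The defining relations of `SM n` hold in `Tw n` -/

lemma tw_inv_right (i : ℕ) : twS (n := n) i * twSI i = 1 := by
  apply Tw.ext
  · simp only [tw_mul_m, twS_m, twSI_m, map_one, mul_one, tw_one_m]
  · simp only [tw_mul_b, twS_b, twSI_b, mul_inv_cancel, tw_one_b]

lemma tw_inv_left (i : ℕ) : twSI (n := n) i * twS i = 1 := by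
  apply Tw.ext
  · simp only [tw_mul_m, twS_m, twSI_m, map_one, mul_one, tw_one_m]
  · simp only [tw_mul_b, twS_b, twSI_b, inv_mul_cancel, tw_one_b]

lemma tw_braid (i : ℕ) (h : 1 ≤ i ∧ i + 1 ≤ n - 1) :
    twS (n := n) i * twS (i+1) * twS i = twS (i+1) * twS i * twS (i+1) := by
  apply Tw.ext
  · simp only [tw_mul_m, twS_m, map_one, mul_one]
  · simp only [tw_mul_b, twS_b]
    exact b_braid i h

lemma tw_sig_comm (i j : ℕ) (hi : 1 ≤ i ∧ i ≤ n - 1) (hj : 1 ≤ j ∧ j ≤ n - 1)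
    (hij : i + 2 ≤ j ∨ j + 2 ≤ i) : twS (n := n) i * twS j = twS j * twS i := by
  apply Tw.ext
  · simp only [tw_mul_m, twS_m, map_one, mul_one]
  · simp only [tw_mul_b, twS_b]
    exact b_comm i j hi hj hij

lemma tw_p_comm (i j : ℕ) (hi : 1 ≤ i ∧ i ≤ n - 1) (hj : 1 ≤ j ∧ j ≤ n - 1)
    (hij : i + 2 ≤ j ∨ j + 2 ≤ i) : twT (n := n) i * twT j = twT j * twT i := by
  apply Tw.ext
  · simp only [tw_mul_m, twT_m, twT_b, actM_one]
    exact trM_comm (bandE n) ⟨1, i, j, hi, hj, hij, rfl, rfl⟩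
  · simp only [tw_mul_b, twT_b, mul_one]

lemma tw_p_sig_far_pos (i j : ℕ) (hi : 1 ≤ i ∧ i ≤ n - 1) (hj : 1 ≤ j ∧ j ≤ n - 1)
    (hij : i + 2 ≤ j ∨ j + 2 ≤ i) : twT (n := n) i * twS j = twS j * twT i := by
  have hl : lam (bs n j) i = lam (1 : B n) i := by
    have h1 := lam_far (1 : B n) i j hi hj hij
    rwa [one_mul] at h1
  apply Tw.ext
  · simp only [tw_mul_m, twT_m, twT_b, twS_m, twS_b, map_one, mul_one, one_mul, actM_of, hl]
  · simp only [tw_mul_b, twT_b, twS_b, mul_one, one_mul]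

lemma tw_p_sig_far_neg (i j : ℕ) (hi : 1 ≤ i ∧ i ≤ n - 1) (hj : 1 ≤ j ∧ j ≤ n - 1)
    (hij : i + 2 ≤ j ∨ j + 2 ≤ i) : twT (n := n) i * twSI j = twSI j * twT i := by
  have hl : lam ((bs n j)⁻¹) i = lam (1 : B n) i := by
    have h1 := lam_far' (1 : B n) i j hi hj hij
    rwa [one_mul] at h1
  apply Tw.ext
  · simp only [tw_mul_m, twT_m, twT_b, twSI_m, twSI_b, map_one, mul_one, one_mul, actM_of, hl]
  · simp only [tw_mul_b, twT_b, twSI_b, mul_one, one_mul]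

lemma tw_p_sig_pos (i : ℕ) (h : 1 ≤ i ∧ i ≤ n - 1) :
    twT (n := n) i * twS i = twS i * twT i := by
  have hl : lam (bs n i) i = lam (1 : B n) i := by
    have h1 := lam_sig (1 : B n) i h
    rwa [one_mul] at h1
  apply Tw.ext
  · simp only [tw_mul_m, twT_m, twT_b, twS_m, twS_b, map_one, mul_one, one_mul, actM_of, hl]
  · simp only [tw_mul_b, twT_b, twS_b, mul_one, one_mul]

lemma tw_p_sig_neg (i : ℕ) (h : 1 ≤ i ∧ i ≤ n - 1) :
    twT (n := n) i * twSI i = twSI i * twT i := by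
  have hl : lam ((bs n i)⁻¹) i = lam (1 : B n) i := by
    have h1 := lam_sig' (1 : B n) i h
    rwa [one_mul] at h1
  apply Tw.ext
  · simp only [tw_mul_m, twT_m, twT_b, twSI_m, twSI_b, map_one, mul_one, one_mul, actM_of, hl]
  · simp only [tw_mul_b, twT_b, twSI_b, mul_one, one_mul]

lemma tw_ssp (i : ℕ) (h : 1 ≤ i ∧ i + 1 ≤ n - 1) :
    twS (n := n) i * twS (i+1) * twT i = twT (i+1) * twS i * twS (i+1) := by
  have hl : lam (bs n i * bs n (i+1)) i = lam (1 : B n) (i+1) := by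
    have h1 := lam_ssp (1 : B n) i h
    rwa [one_mul] at h1
  apply Tw.ext
  · simp only [tw_mul_m, tw_mul_b, twT_m, twT_b, twS_m, twS_b, map_one, mul_one, one_mul,
      actM_of, hl]
  · simp only [tw_mul_b, twT_b, twS_b, mul_one, one_mul]

lemma tw_ssp' (i : ℕ) (h : 1 ≤ i ∧ i + 1 ≤ n - 1) :
    twS (n := n) (i+1) * twS i * twT (i+1) = twT i * twS (i+1) * twS i := by
  have hl : lam (bs n (i+1) * bs n i) (i+1) = lam (1 : B n) i := by
    have h1 := lam_ssp' (1 : B n) i h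
    rwa [one_mul] at h1
  apply Tw.ext
  · simp only [tw_mul_m, tw_mul_b, twT_m, twT_b, twS_m, twS_b, map_one, mul_one, one_mul,
      actM_of, hl]
  · simp only [tw_mul_b, twT_b, twS_b, mul_one, one_mul]

end SBEmb
namespace SBEmb
variable {n : ℕ}

/-! ### The homomorphism `Θ : SM n →* Tw n` -/

def thImg : SMGen n → Tw n
  | .sig i _ => twS i
  | .sigInv i _ => twSI i
  | .tau i _ => twT i

lemma liftTh_smS (i : ℕ) (h : 1 ≤ i ∧ i ≤ n - 1) :
    FreeMonoid.lift (thImg (n := n)) (smS n i) = twS i := by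
  rw [smS, dif_pos h, FreeMonoid.lift_eval_of]; rfl

lemma liftTh_smSI (i : ℕ) (h : 1 ≤ i ∧ i ≤ n - 1) :
    FreeMonoid.lift (thImg (n := n)) (smSI n i) = twSI i := by
  rw [smSI, dif_pos h, FreeMonoid.lift_eval_of]; rfl

lemma liftTh_smT (i : ℕ) (h : 1 ≤ i ∧ i ≤ n - 1) :
    FreeMonoid.lift (thImg (n := n)) (smT n i) = twT i := by
  rw [smT, dif_pos h, FreeMonoid.lift_eval_of]; rfl

def Theta : SM n →* Tw n :=
  (conGen (SMRel n)).lift (FreeMonoid.lift thImg) (Con.conGen_le.2 (by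
    intro x y hxy
    cases hxy with
    | inv_right i h =>
        simp only [Con.ker_rel, map_mul, map_one, liftTh_smS i h, liftTh_smSI i h]
        exact tw_inv_right i
    | inv_left i h =>
        simp only [Con.ker_rel, map_mul, map_one, liftTh_smS i h, liftTh_smSI i h]
        exact tw_inv_left i
    | braid i h =>
        have hi : 1 ≤ i ∧ i ≤ n - 1 := ⟨h.1, le_trans (Nat.le_succ i) h.2⟩
        have hi1 : 1 ≤ i + 1 ∧ i + 1 ≤ n - 1 := ⟨Nat.le_add_left 1 i, h.2⟩
        simp only [Con.ker_rel, map_mul, liftTh_smS i hi, liftTh_smS (i+1) hi1]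
        exact tw_braid i h
    | sig_comm i j hi hj hij =>
        simp only [Con.ker_rel, map_mul, liftTh_smS i hi, liftTh_smS j hj]
        exact tw_sig_comm i j hi hj hij
    | p_comm i j hi hj hij =>
        simp only [Con.ker_rel, map_mul, liftTh_smT i hi, liftTh_smT j hj]
        exact tw_p_comm i j hi hj hij
    | p_sig_far_pos i j hi hj hij =>
        simp only [Con.ker_rel, map_mul, liftTh_smT i hi, liftTh_smS j hj]
        exact tw_p_sig_far_pos i j hi hj hij
    | p_sig_far_neg i j hi hj hij =>
        simp only [Con.ker_rel, map_mul, liftTh_smT i hi, liftTh_smSI j hj]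
        exact tw_p_sig_far_neg i j hi hj hij
    | p_sig_pos i h =>
        simp only [Con.ker_rel, map_mul, liftTh_smT i h, liftTh_smS i h]
        exact tw_p_sig_pos i h
    | p_sig_neg i h =>
        simp only [Con.ker_rel, map_mul, liftTh_smT i h, liftTh_smSI i h]
        exact tw_p_sig_neg i h
    | ssp i h =>
        have hi : 1 ≤ i ∧ i ≤ n - 1 := ⟨h.1, le_trans (Nat.le_succ i) h.2⟩
        have hi1 : 1 ≤ i + 1 ∧ i + 1 ≤ n - 1 := ⟨Nat.le_add_left 1 i, h.2⟩
        simp only [Con.ker_rel, map_mul, liftTh_smS i hi, liftTh_smS (i+1) hi1,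
          liftTh_smT i hi, liftTh_smT (i+1) hi1]
        exact tw_ssp i h
    | ssp' i h =>
        have hi : 1 ≤ i ∧ i ≤ n - 1 := ⟨h.1, le_trans (Nat.le_succ i) h.2⟩
        have hi1 : 1 ≤ i + 1 ∧ i + 1 ≤ n - 1 := ⟨Nat.le_add_left 1 i, h.2⟩
        simp only [Con.ker_rel, map_mul, liftTh_smS i hi, liftTh_smS (i+1) hi1,
          liftTh_smT i hi, liftTh_smT (i+1) hi1]
        exact tw_ssp' i h))

lemma Theta_s (i : ℕ) (h : 1 ≤ i ∧ i ≤ n - 1) : Theta (SM.s n i) = twS i := by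
  have h1 : Theta (SM.s n i) = FreeMonoid.lift (thImg (n := n)) (smS n i) :=
    Con.lift_mk' _ _
  rw [h1, liftTh_smS i h]

lemma Theta_sInv (i : ℕ) (h : 1 ≤ i ∧ i ≤ n - 1) : Theta (SM.sInv n i) = twSI i := by
  have h1 : Theta (SM.sInv n i) = FreeMonoid.lift (thImg (n := n)) (smSI n i) :=
    Con.lift_mk' _ _
  rw [h1, liftTh_smSI i h]

lemma Theta_tau (i : ℕ) (h : 1 ≤ i ∧ i ≤ n - 1) : Theta (SM.tau n i) = twT i := by
  have h1 : Theta (SM.tau n i) = FreeMonoid.lift (thImg (n := n)) (smT n i) :=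
    Con.lift_mk' _ _
  rw [h1, liftTh_smT i h]

/-! ### Conjugation computations in `SM n` -/

lemma conj_mul_conj (U : (SM n)ˣ) (x y : SM n) :
    (↑U * x * ↑U⁻¹) * (↑U * y * ↑U⁻¹) = ↑U * (x * y) * ↑U⁻¹ := by
  simp only [mul_assoc, Units.inv_mul_cancel_left]

lemma conj_mul (U V : (SM n)ˣ) (x : SM n) :
    ↑(U * V) * x * ↑(U * V)⁻¹ = ↑U * (↑V * x * ↑V⁻¹) * ↑U⁻¹ := by
  rw [mul_inv_rev, Units.val_mul, Units.val_mul]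
  simp only [mul_assoc]

lemma sUnit_inv_val (i : ℕ) (h : 1 ≤ i ∧ i ≤ n - 1) :
    ((sUnit (n := n) i h)⁻¹ : (SM n)ˣ) = (SM.sInv n i : SM n) := rfl

lemma conj_sig (i : ℕ) (h : 1 ≤ i ∧ i ≤ n - 1) :
    ↑(sUnit (n := n) i h) * SM.tau n i * ↑(sUnit i h)⁻¹ = SM.tau n i := by
  rw [sUnit_inv_val]
  show SM.s n i * SM.tau n i * SM.sInv n i = SM.tau n i
  rw [← sm_p_sig_pos i h, mul_assoc, sm_inv_right i h, mul_one]

lemma conj_far (i j : ℕ) (hi : 1 ≤ i ∧ i ≤ n - 1) (hj : 1 ≤ j ∧ j ≤ n - 1)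
    (hij : i + 2 ≤ j ∨ j + 2 ≤ i) :
    ↑(sUnit (n := n) j hj) * SM.tau n i * ↑(sUnit j hj)⁻¹ = SM.tau n i := by
  rw [sUnit_inv_val]
  show SM.s n j * SM.tau n i * SM.sInv n j = SM.tau n i
  rw [← sm_p_sig_far_pos i j hi hj hij, mul_assoc, sm_inv_right j hj, mul_one]

lemma conj_ssp (i : ℕ) (h : 1 ≤ i ∧ i + 1 ≤ n - 1) :
    ↑(sUnit (n := n) i ⟨h.1, le_trans (Nat.le_succ i) h.2⟩) *
      (↑(sUnit (i+1) ⟨Nat.le_add_left 1 i, h.2⟩) * SM.tau n i *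
        ↑(sUnit (i+1) ⟨Nat.le_add_left 1 i, h.2⟩)⁻¹) *
      ↑(sUnit i ⟨h.1, le_trans (Nat.le_succ i) h.2⟩)⁻¹ = SM.tau n (i+1) := by
  have hi : 1 ≤ i ∧ i ≤ n - 1 := ⟨h.1, le_trans (Nat.le_succ i) h.2⟩
  have hi1 : 1 ≤ i + 1 ∧ i + 1 ≤ n - 1 := ⟨Nat.le_add_left 1 i, h.2⟩
  rw [sUnit_inv_val, sUnit_inv_val]
  show SM.s n i * (SM.s n (i+1) * SM.tau n i * SM.sInv n (i+1)) * SM.sInv n i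
      = SM.tau n (i+1)
  have h1 : SM.s n i * (SM.s n (i+1) * SM.tau n i * SM.sInv n (i+1)) * SM.sInv n i
      = SM.s n i * SM.s n (i+1) * SM.tau n i * (SM.sInv n (i+1) * SM.sInv n i) := by
    simp only [mul_assoc]
  rw [h1, sm_ssp i h, mul_assoc, mul_assoc, ← mul_assoc (SM.s n (i+1)),
    sm_inv_right (i+1) hi1, one_mul, sm_inv_right i hi, mul_one]

lemma conj_ssp' (i : ℕ) (h : 1 ≤ i ∧ i + 1 ≤ n - 1) :
    ↑(sUnit (n := n) (i+1) ⟨Nat.le_add_left 1 i, h.2⟩) *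
      (↑(sUnit i ⟨h.1, le_trans (Nat.le_succ i) h.2⟩) * SM.tau n (i+1) *
        ↑(sUnit i ⟨h.1, le_trans (Nat.le_succ i) h.2⟩)⁻¹) *
      ↑(sUnit (i+1) ⟨Nat.le_add_left 1 i, h.2⟩)⁻¹ = SM.tau n i := by
  have hi : 1 ≤ i ∧ i ≤ n - 1 := ⟨h.1, le_trans (Nat.le_succ i) h.2⟩
  have hi1 : 1 ≤ i + 1 ∧ i + 1 ≤ n - 1 := ⟨Nat.le_add_left 1 i, h.2⟩
  rw [sUnit_inv_val, sUnit_inv_val]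
  show SM.s n (i+1) * (SM.s n i * SM.tau n (i+1) * SM.sInv n i) * SM.sInv n (i+1)
      = SM.tau n i
  have h1 : SM.s n (i+1) * (SM.s n i * SM.tau n (i+1) * SM.sInv n i) * SM.sInv n (i+1)
      = SM.s n (i+1) * SM.s n i * SM.tau n (i+1) * (SM.sInv n i * SM.sInv n (i+1)) := by
    simp only [mul_assoc]
  rw [h1, sm_ssp' i h, mul_assoc, mul_assoc, ← mul_assoc (SM.s n i),
    sm_inv_right i hi, one_mul, sm_inv_right (i+1) hi1, mul_one]

/-! ### The homomorphism `ψ` from the trace monoid of bands to `SM n` -/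

/-- A marked band gives a well-defined element of `SM n`. -/
def psiHat : Lam n → SM n :=
  Quot.lift
    (fun p => ↑(iotaU p.1) * SM.tau n p.2 * (↑(iotaU p.1)⁻¹ : (SM n)ˣ))
    (by
      rintro p q (⟨c, i, h⟩ | ⟨c, i, j, hi, hj, hij⟩ | ⟨c, i, h⟩ | ⟨c, i, h⟩)
      · show ↑(iotaU c) * SM.tau n i * (↑(iotaU c)⁻¹ : (SM n)ˣ)
            = ↑(iotaU (c * bs n i)) * SM.tau n i * (↑(iotaU (c * bs n i))⁻¹ : (SM n)ˣ)
        rw [map_mul, iotaU_bs i h, conj_mul, conj_sig i h]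
      · show ↑(iotaU c) * SM.tau n i * (↑(iotaU c)⁻¹ : (SM n)ˣ)
            = ↑(iotaU (c * bs n j)) * SM.tau n i * (↑(iotaU (c * bs n j))⁻¹ : (SM n)ˣ)
        rw [map_mul, iotaU_bs j hj, conj_mul, conj_far i j hi hj hij]
      · show ↑(iotaU (c * bs n i * bs n (i+1))) * SM.tau n i *
              (↑(iotaU (c * bs n i * bs n (i+1)))⁻¹ : (SM n)ˣ)
            = ↑(iotaU c) * SM.tau n (i+1) * (↑(iotaU c)⁻¹ : (SM n)ˣ)
        have hi : 1 ≤ i ∧ i ≤ n - 1 := ⟨h.1, le_trans (Nat.le_succ i) h.2⟩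
        have hi1 : 1 ≤ i + 1 ∧ i + 1 ≤ n - 1 := ⟨Nat.le_add_left 1 i, h.2⟩
        rw [map_mul, map_mul, iotaU_bs i hi, iotaU_bs (i+1) hi1, conj_mul, conj_mul,
          conj_ssp i h]
      · show ↑(iotaU (c * bs n (i+1) * bs n i)) * SM.tau n (i+1) *
              (↑(iotaU (c * bs n (i+1) * bs n i))⁻¹ : (SM n)ˣ)
            = ↑(iotaU c) * SM.tau n i * (↑(iotaU c)⁻¹ : (SM n)ˣ)
        have hi : 1 ≤ i ∧ i ≤ n - 1 := ⟨h.1, le_trans (Nat.le_succ i) h.2⟩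
        have hi1 : 1 ≤ i + 1 ∧ i + 1 ≤ n - 1 := ⟨Nat.le_add_left 1 i, h.2⟩
        rw [map_mul, map_mul, iotaU_bs (i+1) hi1, iotaU_bs i hi, conj_mul, conj_mul,
          conj_ssp' i h])

lemma psiHat_lam (b : B n) (i : ℕ) :
    psiHat (lam b i) = ↑(iotaU b) * SM.tau n i * (↑(iotaU b)⁻¹ : (SM n)ˣ) := rfl

def psi : TrM (bandE n) →* SM n :=
  (trCon (bandE n)).lift (FreeMonoid.lift psiHat)
    (Con.conGen_le.2 (by
      rintro x y ⟨a, b, hE, rfl, rfl⟩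
      obtain ⟨c, i, j, hi, hj, hij, rfl, rfl⟩ := hE
      simp only [Con.ker_rel, map_mul, FreeMonoid.lift_eval_of, psiHat_lam]
      rw [conj_mul_conj, conj_mul_conj, sm_p_comm i j hi hj hij]))

lemma psi_of (b : B n) (i : ℕ) :
    psi (trOf (bandE n) (lam b i))
      = ↑(iotaU b) * SM.tau n i * (↑(iotaU b)⁻¹ : (SM n)ˣ) :=
  Con.lift_mk' _ _

/-- Conjugation by a unit, as a monoid homomorphism. -/
def conjHom (U : (SM n)ˣ) : SM n →* SM n where
  toFun x := ↑U * x * (↑U⁻¹ : (SM n)ˣ)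
  map_one' := by simp only [mul_one, Units.mul_inv]
  map_mul' x y := (conj_mul_conj U x y).symm

lemma psi_equivariant (b : B n) (m : TrM (bandE n)) :
    psi (actM b m) = ↑(iotaU b) * psi m * (↑(iotaU b)⁻¹ : (SM n)ˣ) := by
  have h1 : psi.comp (actM b) = (conjHom (iotaU b)).comp psi := by
    apply trM_homext
    intro x
    induction x using Quot.ind with
    | _ p =>
        show psi (actM b (trOf (bandE n) (lam p.1 p.2)))
          = conjHom (iotaU b) (psi (trOf (bandE n) (lam p.1 p.2)))
        rw [actM_of, psi_of, psi_of, map_mul]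
        exact conj_mul (iotaU b) (iotaU p.1) (SM.tau n p.2)
  exact DFunLike.congr_fun h1 m

/-- The retraction `Tw n →* SM n`. -/
def rho : Tw n →* SM n where
  toFun x := psi x.m * ↑(iotaU x.b)
  map_one' := by
    show psi (1 : Tw n).m * ↑(iotaU (1 : Tw n).b) = 1
    rw [tw_one_m, tw_one_b, map_one, map_one, Units.val_one, one_mul]
  map_mul' x y := by
    show psi (x * y).m * ↑(iotaU (x * y).b) = _
    rw [tw_mul_m, tw_mul_b, map_mul, map_mul, psi_equivariant, Units.val_mul]
    simp only [mul_assoc, Units.inv_mul_cancel_left]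

lemma rho_Theta : (rho (n := n)).comp Theta = MonoidHom.id (SM n) := by
  apply conFM_homext
  intro g
  cases g with
  | sig i h =>
      show rho (Theta ((conGen (SMRel n)).mk' (FreeMonoid.of (SMGen.sig i h)))) = _
      have h0 : (conGen (SMRel n)).mk' (FreeMonoid.of (SMGen.sig i h)) = SM.s n i := by
        rw [SM.s, smS, dif_pos h]
      rw [h0, Theta_s i h]
      show psi (twS (n := n) i).m * ↑(iotaU (twS (n := n) i).b) = SM.s n i
      rw [twS_m, twS_b, map_one, one_mul, iotaU_bs i h]
      rfl
  | sigInv i h =>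
      show rho (Theta ((conGen (SMRel n)).mk' (FreeMonoid.of (SMGen.sigInv i h)))) = _
      have h0 : (conGen (SMRel n)).mk' (FreeMonoid.of (SMGen.sigInv i h)) = SM.sInv n i := by
        rw [SM.sInv, smSI, dif_pos h]
      rw [h0, Theta_sInv i h]
      show psi (twSI (n := n) i).m * ↑(iotaU (twSI (n := n) i).b) = SM.sInv n i
      rw [twSI_m, twSI_b, map_one, one_mul, map_inv, iotaU_bs i h]
      rfl
  | tau i h =>
      show rho (Theta ((conGen (SMRel n)).mk' (FreeMonoid.of (SMGen.tau i h)))) = _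
      have h0 : (conGen (SMRel n)).mk' (FreeMonoid.of (SMGen.tau i h)) = SM.tau n i := by
        rw [SM.tau, smT, dif_pos h]
      rw [h0, Theta_tau i h]
      show psi (twT (n := n) i).m * ↑(iotaU (twT (n := n) i).b) = SM.tau n i
      rw [twT_m, twT_b, map_one, Units.val_one, mul_one, psi_of, map_one]
      simp

theorem Theta_inj : Function.Injective (Theta (n := n)) := by
  intro a b hab
  have h1 := congrArg (rho (n := n)) hab
  have h2 := DFunLike.congr_fun (rho_Theta (n := n))
  rw [show rho (Theta a) = a from h2 a, show rho (Theta b) = b from h2 b] at h1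
  exact h1

end SBEmb
namespace SBEmb
variable {n : ℕ}

/-! ### The target group `Hgrp n` and the injection `Φ = Ξ ∘ Θ` -/

abbrev Hgrp (n : ℕ) := (TrG (bandE n)) ⋊[phiAut] (B n)

lemma mu_equivariant (b : B n) (m : TrM (bandE n)) :
    trμ (bandE n) (actM b m) = actG b (trμ (bandE n) m) := by
  have h1 : (trμ (bandE n)).comp (actM b) = (actG b).comp (trμ (bandE n)) := by
    apply trM_homext
    intro x
    induction x using Quot.ind with
    | _ p =>
        show trμ (bandE n) (actM b (trOf (bandE n) (lam p.1 p.2)))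
          = actG b (trμ (bandE n) (trOf (bandE n) (lam p.1 p.2)))
        rw [actM_of, trμ_of, trμ_of, actG_of]
  exact DFunLike.congr_fun h1 m

def Xi : Tw n →* Hgrp n where
  toFun x := ⟨trμ (bandE n) x.m, x.b⟩
  map_one' := by
    apply SemidirectProduct.ext
    · show trμ (bandE n) (1 : Tw n).m = 1
      rw [tw_one_m, map_one]
    · rfl
  map_mul' x y := by
    apply SemidirectProduct.ext
    · show trμ (bandE n) ((x * y).m) = _
      rw [tw_mul_m, map_mul, mu_equivariant]
      rfl
    · rfl

lemma Xi_inj : Function.Injective (Xi (n := n)) := by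
  intro x y h
  apply Tw.ext
  · exact trμ_inj (bandE n) (congrArg SemidirectProduct.left h)
  · exact congrArg SemidirectProduct.right h

def Phi : SM n →* Hgrp n := (Xi (n := n)).comp Theta

lemma Phi_inj : Function.Injective (Phi (n := n)) :=
  fun _ _ h => Theta_inj (Xi_inj h)

lemma Xi_twS (i : ℕ) : Xi (twS (n := n) i) = SemidirectProduct.inr (bs n i) := by
  apply SemidirectProduct.ext
  · show trμ (bandE n) (twS (n := n) i).m = _
    rw [twS_m, map_one]
    rfl
  · rfl

lemma Xi_twSI (i : ℕ) : Xi (twSI (n := n) i) = SemidirectProduct.inr ((bs n i)⁻¹) := by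
  apply SemidirectProduct.ext
  · show trμ (bandE n) (twSI (n := n) i).m = _
    rw [twSI_m, map_one]
    rfl
  · rfl

lemma Xi_twT (i : ℕ) :
    Xi (twT (n := n) i) = SemidirectProduct.inl (trGOf (bandE n) (lam 1 i)) := by
  apply SemidirectProduct.ext
  · show trμ (bandE n) (twT (n := n) i).m = _
    rw [twT_m, trμ_of]
    rfl
  · rfl

/-! ### The canonical homomorphism `f : SM n →* SB n` -/

def fImg : SMGen n → SB n
  | .sig i h => PresentedGroup.of (SBGen.sig i h)
  | .sigInv i h => (PresentedGroup.of (SBGen.sig i h))⁻¹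
  | .tau i h => PresentedGroup.of (SBGen.tau i h)

lemma liftf_smS (i : ℕ) : FreeMonoid.lift (fImg (n := n)) (smS n i) = SB.s n i := by
  by_cases h : 1 ≤ i ∧ i ≤ n - 1
  · rw [smS, dif_pos h, FreeMonoid.lift_eval_of, (show SB.s n i = PresentedGroup.of (SBGen.sig i h) from dif_pos h)]; rfl
  · rw [smS, dif_neg h, map_one, (show SB.s n i = 1 from dif_neg h)]

lemma liftf_smSI (i : ℕ) : FreeMonoid.lift (fImg (n := n)) (smSI n i) = (SB.s n i)⁻¹ := by
  by_cases h : 1 ≤ i ∧ i ≤ n - 1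
  · rw [smSI, dif_pos h, FreeMonoid.lift_eval_of, (show SB.s n i = PresentedGroup.of (SBGen.sig i h) from dif_pos h)]; rfl
  · rw [smSI, dif_neg h, map_one, (show SB.s n i = 1 from dif_neg h), inv_one]

lemma liftf_smT (i : ℕ) : FreeMonoid.lift (fImg (n := n)) (smT n i) = SB.t n i := by
  by_cases h : 1 ≤ i ∧ i ≤ n - 1
  · rw [smT, dif_pos h, FreeMonoid.lift_eval_of, (show SB.t n i = PresentedGroup.of (SBGen.tau i h) from dif_pos h)]; rfl
  · rw [smT, dif_neg h, map_one, (show SB.t n i = 1 from dif_neg h)]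

lemma mk_sbS (i : ℕ) : PresentedGroup.mk {x | SBRel n x} (sbS n i) = SB.s n i := by
  by_cases h : 1 ≤ i ∧ i ≤ n - 1
  · rw [sbS, dif_pos h, (show SB.s n i = PresentedGroup.of (SBGen.sig i h) from dif_pos h)]; rfl
  · rw [sbS, dif_neg h, map_one, (show SB.s n i = 1 from dif_neg h)]; rfl

lemma mk_sbT (i : ℕ) : PresentedGroup.mk {x | SBRel n x} (sbT n i) = SB.t n i := by
  by_cases h : 1 ≤ i ∧ i ≤ n - 1
  · rw [sbT, dif_pos h, (show SB.t n i = PresentedGroup.of (SBGen.tau i h) from dif_pos h)]; rfl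
  · rw [sbT, dif_neg h, map_one, (show SB.t n i = 1 from dif_neg h)]; rfl

lemma sb_braid (i : ℕ) (h : 1 ≤ i ∧ i + 1 ≤ n - 1) :
    SB.s n i * SB.s n (i+1) * SB.s n i = SB.s n (i+1) * SB.s n i * SB.s n (i+1) := by
  have h1 := presented_eq (rels := {x | SBRel n x}) (SBRel.braid i h)
  simp only [map_mul, mk_sbS] at h1
  exact h1

lemma sb_sig_comm (i j : ℕ) (hi : 1 ≤ i ∧ i ≤ n - 1) (hj : 1 ≤ j ∧ j ≤ n - 1)
    (hij : i + 2 ≤ j ∨ j + 2 ≤ i) : SB.s n i * SB.s n j = SB.s n j * SB.s n i := by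
  have h1 := presented_eq (rels := {x | SBRel n x}) (SBRel.sig_comm i j hi hj hij)
  simp only [map_mul, mk_sbS] at h1
  exact h1

lemma sb_tau_comm (i j : ℕ) (hi : 1 ≤ i ∧ i ≤ n - 1) (hj : 1 ≤ j ∧ j ≤ n - 1)
    (hij : i + 2 ≤ j ∨ j + 2 ≤ i) : SB.t n i * SB.t n j = SB.t n j * SB.t n i := by
  have h1 := presented_eq (rels := {x | SBRel n x}) (SBRel.tau_comm i j hi hj hij)
  simp only [map_mul, mk_sbS, mk_sbT] at h1
  exact h1

lemma sb_tau_sig_far (i j : ℕ) (hi : 1 ≤ i ∧ i ≤ n - 1) (hj : 1 ≤ j ∧ j ≤ n - 1)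
    (hij : i + 2 ≤ j ∨ j + 2 ≤ i) : SB.t n i * SB.s n j = SB.s n j * SB.t n i := by
  have h1 := presented_eq (rels := {x | SBRel n x}) (SBRel.tau_sig_far i j hi hj hij)
  simp only [map_mul, mk_sbS, mk_sbT] at h1
  exact h1

lemma sb_tau_sig (i : ℕ) (h : 1 ≤ i ∧ i ≤ n - 1) :
    SB.t n i * SB.s n i = SB.s n i * SB.t n i := by
  have h1 := presented_eq (rels := {x | SBRel n x}) (SBRel.tau_sig i h)
  simp only [map_mul, mk_sbS, mk_sbT] at h1
  exact h1

lemma sb_sst (i : ℕ) (h : 1 ≤ i ∧ i + 1 ≤ n - 1) :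
    SB.s n i * SB.s n (i+1) * SB.t n i = SB.t n (i+1) * SB.s n i * SB.s n (i+1) := by
  have h1 := presented_eq (rels := {x | SBRel n x}) (SBRel.sst i h)
  simp only [map_mul, mk_sbS, mk_sbT] at h1
  exact h1

lemma sb_sst' (i : ℕ) (h : 1 ≤ i ∧ i + 1 ≤ n - 1) :
    SB.s n (i+1) * SB.s n i * SB.t n (i+1) = SB.t n i * SB.s n (i+1) * SB.s n i := by
  have h1 := presented_eq (rels := {x | SBRel n x}) (SBRel.sst' i h)
  simp only [map_mul, mk_sbS, mk_sbT] at h1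
  exact h1

/-- The canonical homomorphism `SM n →* SB n`. -/
def fcan : SM n →* SB n :=
  (conGen (SMRel n)).lift (FreeMonoid.lift fImg) (Con.conGen_le.2 (by
    intro x y hxy
    cases hxy with
    | inv_right i h =>
        simp only [Con.ker_rel, map_mul, map_one, liftf_smS, liftf_smSI]
        exact mul_inv_cancel _
    | inv_left i h =>
        simp only [Con.ker_rel, map_mul, map_one, liftf_smS, liftf_smSI]
        exact inv_mul_cancel _
    | braid i h =>
        simp only [Con.ker_rel, map_mul, liftf_smS]
        exact sb_braid i h
    | sig_comm i j hi hj hij =>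
        simp only [Con.ker_rel, map_mul, liftf_smS]
        exact sb_sig_comm i j hi hj hij
    | p_comm i j hi hj hij =>
        simp only [Con.ker_rel, map_mul, liftf_smT]
        exact sb_tau_comm i j hi hj hij
    | p_sig_far_pos i j hi hj hij =>
        simp only [Con.ker_rel, map_mul, liftf_smT, liftf_smS]
        exact sb_tau_sig_far i j hi hj hij
    | p_sig_far_neg i j hi hj hij =>
        simp only [Con.ker_rel, map_mul, liftf_smT, liftf_smSI]
        exact (Commute.inv_right (sb_tau_sig_far i j hi hj hij)).eq
    | p_sig_pos i h =>
        simp only [Con.ker_rel, map_mul, liftf_smT, liftf_smS]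
        exact sb_tau_sig i h
    | p_sig_neg i h =>
        simp only [Con.ker_rel, map_mul, liftf_smT, liftf_smSI]
        exact (Commute.inv_right (sb_tau_sig i h)).eq
    | ssp i h =>
        simp only [Con.ker_rel, map_mul, liftf_smS, liftf_smT]
        exact sb_sst i h
    | ssp' i h =>
        simp only [Con.ker_rel, map_mul, liftf_smS, liftf_smT]
        exact sb_sst' i h))

lemma fcan_s (i : ℕ) : fcan (SM.s n i) = SB.s n i := by
  have h1 : fcan (SM.s n i) = FreeMonoid.lift (fImg (n := n)) (smS n i) := Con.lift_mk' _ _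
  rw [h1, liftf_smS]

lemma fcan_sInv (i : ℕ) : fcan (SM.sInv n i) = (SB.s n i)⁻¹ := by
  have h1 : fcan (SM.sInv n i) = FreeMonoid.lift (fImg (n := n)) (smSI n i) := Con.lift_mk' _ _
  rw [h1, liftf_smSI]

lemma fcan_t (i : ℕ) : fcan (SM.tau n i) = SB.t n i := by
  have h1 : fcan (SM.tau n i) = FreeMonoid.lift (fImg (n := n)) (smT n i) := Con.lift_mk' _ _
  rw [h1, liftf_smT]

/-! ### The homomorphism `SB n →* Hgrp n` -/

def hImg : SBGen n → Hgrp n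
  | .sig i _ => SemidirectProduct.inr (bs n i)
  | .tau i _ => SemidirectProduct.inl (trGOf (bandE n) (lam 1 i))

lemma lifth_sbS (i : ℕ) (h : 1 ≤ i ∧ i ≤ n - 1) :
    FreeGroup.lift (hImg (n := n)) (sbS n i) = Xi (twS i) := by
  rw [sbS, dif_pos h, FreeGroup.lift_apply_of, Xi_twS]
  rfl

lemma lifth_sbT (i : ℕ) (h : 1 ≤ i ∧ i ≤ n - 1) :
    FreeGroup.lift (hImg (n := n)) (sbT n i) = Xi (twT i) := by
  rw [sbT, dif_pos h, FreeGroup.lift_apply_of, Xi_twT]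
  rfl

def hbar : SB n →* Hgrp n :=
  PresentedGroup.toGroup (f := hImg) (by
    intro r hr
    cases hr with
    | braid i h =>
        have hi : 1 ≤ i ∧ i ≤ n - 1 := ⟨h.1, le_trans (Nat.le_succ i) h.2⟩
        have hi1 : 1 ≤ i + 1 ∧ i + 1 ≤ n - 1 := ⟨Nat.le_add_left 1 i, h.2⟩
        have h2 := congrArg (Xi (n := n)) (tw_braid i h)
        simp only [map_mul] at h2
        simp only [map_mul, map_inv, lifth_sbS i hi, lifth_sbS (i+1) hi1]
        exact mul_inv_eq_one.2 h2
    | sig_comm i j hi hj hij =>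
        have h2 := congrArg (Xi (n := n)) (tw_sig_comm i j hi hj hij)
        simp only [map_mul] at h2
        simp only [map_mul, map_inv, lifth_sbS i hi, lifth_sbS j hj]
        exact mul_inv_eq_one.2 h2
    | tau_comm i j hi hj hij =>
        have h2 := congrArg (Xi (n := n)) (tw_p_comm i j hi hj hij)
        simp only [map_mul] at h2
        simp only [map_mul, map_inv, lifth_sbT i hi, lifth_sbT j hj]
        exact mul_inv_eq_one.2 h2
    | tau_sig_far i j hi hj hij =>
        have h2 := congrArg (Xi (n := n)) (tw_p_sig_far_pos i j hi hj hij)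
        simp only [map_mul] at h2
        simp only [map_mul, map_inv, lifth_sbS j hj, lifth_sbT i hi]
        exact mul_inv_eq_one.2 h2
    | tau_sig i h =>
        have h2 := congrArg (Xi (n := n)) (tw_p_sig_pos i h)
        simp only [map_mul] at h2
        simp only [map_mul, map_inv, lifth_sbS i h, lifth_sbT i h]
        exact mul_inv_eq_one.2 h2
    | sst i h =>
        have hi : 1 ≤ i ∧ i ≤ n - 1 := ⟨h.1, le_trans (Nat.le_succ i) h.2⟩
        have hi1 : 1 ≤ i + 1 ∧ i + 1 ≤ n - 1 := ⟨Nat.le_add_left 1 i, h.2⟩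
        have h2 := congrArg (Xi (n := n)) (tw_ssp i h)
        simp only [map_mul] at h2
        simp only [map_mul, map_inv, lifth_sbS i hi, lifth_sbS (i+1) hi1,
          lifth_sbT i hi, lifth_sbT (i+1) hi1]
        exact mul_inv_eq_one.2 h2
    | sst' i h =>
        have hi : 1 ≤ i ∧ i ≤ n - 1 := ⟨h.1, le_trans (Nat.le_succ i) h.2⟩
        have hi1 : 1 ≤ i + 1 ∧ i + 1 ≤ n - 1 := ⟨Nat.le_add_left 1 i, h.2⟩
        have h2 := congrArg (Xi (n := n)) (tw_ssp' i h)
        simp only [map_mul] at h2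
        simp only [map_mul, map_inv, lifth_sbS i hi, lifth_sbS (i+1) hi1,
          lifth_sbT i hi, lifth_sbT (i+1) hi1]
        exact mul_inv_eq_one.2 h2)

lemma hbar_of (g : SBGen n) : hbar (PresentedGroup.of g) = hImg g :=
  PresentedGroup.toGroup.of _

lemma hbar_fcan : (hbar (n := n)).comp fcan = Phi := by
  apply conFM_homext
  intro g
  cases g with
  | sig i h =>
      have h1 : fcan ((conGen (SMRel n)).mk' (FreeMonoid.of (SMGen.sig i h)))
          = PresentedGroup.of (SBGen.sig i h) := Con.lift_mk' _ _
      have h2 : Theta ((conGen (SMRel n)).mk' (FreeMonoid.of (SMGen.sig i h)))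
          = twS i := Con.lift_mk' _ _
      show hbar (fcan ((conGen (SMRel n)).mk' (FreeMonoid.of (SMGen.sig i h))))
        = Xi (Theta ((conGen (SMRel n)).mk' (FreeMonoid.of (SMGen.sig i h))))
      rw [h1, h2, hbar_of, Xi_twS]
      rfl
  | sigInv i h =>
      have h1 : fcan ((conGen (SMRel n)).mk' (FreeMonoid.of (SMGen.sigInv i h)))
          = @Inv.inv (SB n) _ (PresentedGroup.of (SBGen.sig i h)) := Con.lift_mk' _ _
      have h2 : Theta ((conGen (SMRel n)).mk' (FreeMonoid.of (SMGen.sigInv i h)))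
          = twSI i := Con.lift_mk' _ _
      show hbar (fcan ((conGen (SMRel n)).mk' (FreeMonoid.of (SMGen.sigInv i h))))
        = Xi (Theta ((conGen (SMRel n)).mk' (FreeMonoid.of (SMGen.sigInv i h))))
      rw [h1, h2]
      refine (map_inv hbar _).trans ?_
      rw [hbar_of, Xi_twSI]
      show (SemidirectProduct.inr (bs n i))⁻¹ = _
      rw [← map_inv]
  | tau i h =>
      have h1 : fcan ((conGen (SMRel n)).mk' (FreeMonoid.of (SMGen.tau i h)))
          = PresentedGroup.of (SBGen.tau i h) := Con.lift_mk' _ _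
      have h2 : Theta ((conGen (SMRel n)).mk' (FreeMonoid.of (SMGen.tau i h)))
          = twT i := Con.lift_mk' _ _
      show hbar (fcan ((conGen (SMRel n)).mk' (FreeMonoid.of (SMGen.tau i h))))
        = Xi (Theta ((conGen (SMRel n)).mk' (FreeMonoid.of (SMGen.tau i h))))
      rw [h1, h2, hbar_of, Xi_twT]
      rfl

lemma fcan_inj : Function.Injective (fcan (n := n)) := by
  intro a b hab
  apply Phi_inj (n := n)
  have h1 := congrArg (hbar (n := n)) hab
  have h2 := DFunLike.congr_fun (hbar_fcan (n := n))
  rw [← h2 a, ← h2 b]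
  exact h1

end SBEmb

/-- For every n ≥ 2, the canonical monoid homomorphism from the singular braid monoid
`SM n` to the singular braid group `SB n` — sending σ_i ↦ σ_i, σ_i⁻¹ ↦ σ_i⁻¹ and
τ_i ↦ τ_i for 1 ≤ i ≤ n−1 — is injective; in particular `SM n` embeds in a group. -/
theorem sm_embeds_in_sb (n : ℕ) (hn : 2 ≤ n) :
    ∃ f : SM n →* SB n,
      (∀ i : ℕ, 1 ≤ i → i ≤ n - 1 →
        f (SM.s n i) = SB.s n i ∧
        f (SM.sInv n i) = (SB.s n i)⁻¹ ∧
        f (SM.tau n i) = SB.t n i) ∧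
      Function.Injective f := by
  exact ⟨SBEmb.fcan,
    fun i _ _ => ⟨SBEmb.fcan_s i, SBEmb.fcan_sInv i, SBEmb.fcan_t i⟩,
    SBEmb.fcan_inj⟩
end

section
/- For every n ≥ 2, the pseudo braid monoid PM_n embeds in a group: there exist a group G and an injective monoid homomorphism from PM_n to G. -/
/-!
The pseudo braid monoid `PM n` (n ≥ 2), presented by generators
σ_1,…,σ_{n−1}, σ_1⁻¹,…,σ_{n−1}⁻¹, p_1,…,p_{n−1} subject to:
σ_i σ_i⁻¹ = σ_i⁻¹ σ_i = 1; σ_i σ_{i+1} σ_i = σ_{i+1} σ_i σ_{i+1};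
σ_i σ_j = σ_j σ_i for |i−j| ≥ 2; p_i p_j = p_j p_i for |i−j| ≥ 2;
p_i σ_j^{±1} = σ_j^{±1} p_i for |i−j| ≥ 2; p_i σ_i^{±1} = σ_i^{±1} p_i;
σ_i σ_{i+1} p_i = p_{i+1} σ_i σ_{i+1}; σ_{i+1} σ_i p_{i+1} = p_i σ_{i+1} σ_i.
-/

/-- Generators of the pseudo braid monoid: σ_i, σ_i⁻¹ and p_i for 1 ≤ i ≤ n−1. -/
inductive PMGen (n : ℕ) : Type
  | sig (i : ℕ) (h : 1 ≤ i ∧ i ≤ n - 1) : PMGen n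
  | sigInv (i : ℕ) (h : 1 ≤ i ∧ i ≤ n - 1) : PMGen n
  | p (i : ℕ) (h : 1 ≤ i ∧ i ≤ n - 1) : PMGen n

/-- The word σ_i in the free monoid on the generators. -/
def pmS (n i : ℕ) : FreeMonoid (PMGen n) :=
  if h : 1 ≤ i ∧ i ≤ n - 1 then FreeMonoid.of (PMGen.sig i h) else 1

/-- The word σ_i⁻¹ in the free monoid on the generators. -/
def pmSI (n i : ℕ) : FreeMonoid (PMGen n) :=
  if h : 1 ≤ i ∧ i ≤ n - 1 then FreeMonoid.of (PMGen.sigInv i h) else 1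

/-- The word p_i in the free monoid on the generators. -/
def pmP (n i : ℕ) : FreeMonoid (PMGen n) :=
  if h : 1 ≤ i ∧ i ≤ n - 1 then FreeMonoid.of (PMGen.p i h) else 1

/-- The defining relations of the pseudo braid monoid `PM n`. -/
inductive PMRel (n : ℕ) : FreeMonoid (PMGen n) → FreeMonoid (PMGen n) → Prop
  | inv_right (i : ℕ) (h : 1 ≤ i ∧ i ≤ n - 1) :
      PMRel n (pmS n i * pmSI n i) 1
  | inv_left (i : ℕ) (h : 1 ≤ i ∧ i ≤ n - 1) :
      PMRel n (pmSI n i * pmS n i) 1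
  | braid (i : ℕ) (h : 1 ≤ i ∧ i + 1 ≤ n - 1) :
      PMRel n (pmS n i * pmS n (i+1) * pmS n i) (pmS n (i+1) * pmS n i * pmS n (i+1))
  | sig_comm (i j : ℕ) (hi : 1 ≤ i ∧ i ≤ n - 1) (hj : 1 ≤ j ∧ j ≤ n - 1)
      (hij : i + 2 ≤ j ∨ j + 2 ≤ i) :
      PMRel n (pmS n i * pmS n j) (pmS n j * pmS n i)
  | p_comm (i j : ℕ) (hi : 1 ≤ i ∧ i ≤ n - 1) (hj : 1 ≤ j ∧ j ≤ n - 1)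
      (hij : i + 2 ≤ j ∨ j + 2 ≤ i) :
      PMRel n (pmP n i * pmP n j) (pmP n j * pmP n i)
  | p_sig_far_pos (i j : ℕ) (hi : 1 ≤ i ∧ i ≤ n - 1) (hj : 1 ≤ j ∧ j ≤ n - 1)
      (hij : i + 2 ≤ j ∨ j + 2 ≤ i) :
      PMRel n (pmP n i * pmS n j) (pmS n j * pmP n i)
  | p_sig_far_neg (i j : ℕ) (hi : 1 ≤ i ∧ i ≤ n - 1) (hj : 1 ≤ j ∧ j ≤ n - 1)
      (hij : i + 2 ≤ j ∨ j + 2 ≤ i) :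
      PMRel n (pmP n i * pmSI n j) (pmSI n j * pmP n i)
  | p_sig_pos (i : ℕ) (h : 1 ≤ i ∧ i ≤ n - 1) :
      PMRel n (pmP n i * pmS n i) (pmS n i * pmP n i)
  | p_sig_neg (i : ℕ) (h : 1 ≤ i ∧ i ≤ n - 1) :
      PMRel n (pmP n i * pmSI n i) (pmSI n i * pmP n i)
  | ssp (i : ℕ) (h : 1 ≤ i ∧ i + 1 ≤ n - 1) :
      PMRel n (pmS n i * pmS n (i+1) * pmP n i) (pmP n (i+1) * pmS n i * pmS n (i+1))
  | ssp' (i : ℕ) (h : 1 ≤ i ∧ i + 1 ≤ n - 1) :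
      PMRel n (pmS n (i+1) * pmS n i * pmP n (i+1)) (pmP n i * pmS n (i+1) * pmS n i)

/-- The pseudo braid monoid `PM n`. -/
def PM (n : ℕ) := (conGen (PMRel n)).Quotient

instance (n : ℕ) : Monoid (PM n) :=
  inferInstanceAs (Monoid ((conGen (PMRel n)).Quotient))

/-- The generator σ_i of `PM n` (defined for 1 ≤ i ≤ n−1; junk value 1 otherwise). -/
def PM.s (n i : ℕ) : PM n := (conGen (PMRel n)).mk' (pmS n i)

/-- The generator σ_i⁻¹ of `PM n` (defined for 1 ≤ i ≤ n−1; junk value 1 otherwise). -/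
def PM.sInv (n i : ℕ) : PM n := (conGen (PMRel n)).mk' (pmSI n i)

/-- The generator p_i of `PM n` (defined for 1 ≤ i ≤ n−1; junk value 1 otherwise). -/
def PM.p (n i : ℕ) : PM n := (conGen (PMRel n)).mk' (pmP n i)
namespace PMEmb

/-! ### Basic identities in `PM n` -/

lemma rel_mk {n : ℕ} {a b : FreeMonoid (PMGen n)} (h : PMRel n a b) :
    (conGen (PMRel n)).mk' a = (conGen (PMRel n)).mk' b := by
  exact (Con.eq _).mpr (ConGen.Rel.of a b h)

lemma s_mul_sInv (n i : ℕ) : PM.s n i * PM.sInv n i = 1 := by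
  by_cases h : 1 ≤ i ∧ i ≤ n - 1
  · have := rel_mk (PMRel.inv_right i h)
    rw [map_mul, map_one] at this; exact this
  · simp [PM.s, PM.sInv, pmS, pmSI, dif_neg h]; exact mul_one _

lemma sInv_mul_s (n i : ℕ) : PM.sInv n i * PM.s n i = 1 := by
  by_cases h : 1 ≤ i ∧ i ≤ n - 1
  · have := rel_mk (PMRel.inv_left i h)
    rw [map_mul, map_one] at this; exact this
  · simp [PM.s, PM.sInv, pmS, pmSI, dif_neg h]; exact mul_one _

/-- The generator `σ_i` as a unit of `PM n`. -/
def un (n i : ℕ) : (PM n)ˣ :=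
  ⟨PM.s n i, PM.sInv n i, s_mul_sInv n i, sInv_mul_s n i⟩

@[simp] lemma un_val (n i : ℕ) : ((un n i : (PM n)ˣ) : PM n) = PM.s n i := rfl
@[simp] lemma un_inv_val (n i : ℕ) : (((un n i)⁻¹ : (PM n)ˣ) : PM n) = PM.sInv n i := rfl

lemma braid_pm {n i : ℕ} (h : 1 ≤ i ∧ i + 1 ≤ n - 1) :
    PM.s n i * PM.s n (i+1) * PM.s n i = PM.s n (i+1) * PM.s n i * PM.s n (i+1) := by
  have := rel_mk (PMRel.braid i h); rw [map_mul, map_mul, map_mul, map_mul] at this; exact this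

lemma s_comm_pm {n i j : ℕ} (hi : 1 ≤ i ∧ i ≤ n - 1) (hj : 1 ≤ j ∧ j ≤ n - 1)
    (hij : i + 2 ≤ j ∨ j + 2 ≤ i) : PM.s n i * PM.s n j = PM.s n j * PM.s n i := by
  have := rel_mk (PMRel.sig_comm i j hi hj hij); rw [map_mul, map_mul] at this; exact this

lemma p_comm_pm {n i j : ℕ} (hi : 1 ≤ i ∧ i ≤ n - 1) (hj : 1 ≤ j ∧ j ≤ n - 1)
    (hij : i + 2 ≤ j ∨ j + 2 ≤ i) : PM.p n i * PM.p n j = PM.p n j * PM.p n i := by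
  have := rel_mk (PMRel.p_comm i j hi hj hij); rw [map_mul, map_mul] at this; exact this

lemma ps_far_pos_pm {n i j : ℕ} (hi : 1 ≤ i ∧ i ≤ n - 1) (hj : 1 ≤ j ∧ j ≤ n - 1)
    (hij : i + 2 ≤ j ∨ j + 2 ≤ i) : PM.p n i * PM.s n j = PM.s n j * PM.p n i := by
  have := rel_mk (PMRel.p_sig_far_pos i j hi hj hij); rw [map_mul, map_mul] at this; exact this

lemma ps_pos_pm {n i : ℕ} (h : 1 ≤ i ∧ i ≤ n - 1) :
    PM.p n i * PM.s n i = PM.s n i * PM.p n i := by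
  have := rel_mk (PMRel.p_sig_pos i h); rw [map_mul, map_mul] at this; exact this

lemma ssp_pm {n i : ℕ} (h : 1 ≤ i ∧ i + 1 ≤ n - 1) :
    PM.s n i * PM.s n (i+1) * PM.p n i = PM.p n (i+1) * (PM.s n i * PM.s n (i+1)) := by
  have := rel_mk (PMRel.ssp i h); rw [map_mul, map_mul, map_mul, map_mul] at this; exact this.trans (mul_assoc _ _ _)

lemma ssp'_pm {n i : ℕ} (h : 1 ≤ i ∧ i + 1 ≤ n - 1) :
    PM.s n (i+1) * PM.s n i * PM.p n (i+1) = PM.p n i * (PM.s n (i+1) * PM.s n i) := by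
  have := rel_mk (PMRel.ssp' i h); rw [map_mul, map_mul, map_mul, map_mul] at this; exact this.trans (mul_assoc _ _ _)

/-! ### Commutation helpers for units -/

lemma comm_inv {M : Type} [Monoid M] (b : Mˣ) (m : M) (h : ↑b * m = m * ↑b) :
    ↑b⁻¹ * m = m * ↑b⁻¹ := by
  have : (↑b⁻¹ : M) * (↑b * m) * ↑b⁻¹ = ↑b⁻¹ * (m * ↑b) * ↑b⁻¹ := by rw [h]
  simpa [mul_assoc, Units.inv_mul, Units.mul_inv] using this.symm

lemma conj_eq {M : Type} [Monoid M] (a : Mˣ) (x y : M) (h : ↑a * x = y * ↑a) :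
    ↑a * x * ↑a⁻¹ = y := by
  rw [h, mul_assoc, Units.mul_inv, mul_one]

/-! ### The centralizer of `p 1` and the coset space `S` -/

/-- The subgroup of units commuting with `p 1`. -/
def Hs (n : ℕ) : Subgroup (PM n)ˣ where
  carrier := {b | (b : PM n) * PM.p n 1 = PM.p n 1 * b}
  one_mem' := by simp
  mul_mem' := by
    intro a b ha hb
    show ((a * b : (PM n)ˣ) : PM n) * PM.p n 1 = PM.p n 1 * ((a * b : (PM n)ˣ) : PM n)
    rw [Units.val_mul, mul_assoc, hb, ← mul_assoc, ha, mul_assoc]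
  inv_mem' := by
    intro a ha
    exact comm_inv a _ ha

lemma mem_Hs {n : ℕ} {b : (PM n)ˣ} :
    b ∈ Hs n ↔ (b : PM n) * PM.p n 1 = PM.p n 1 * b := Iff.rfl

/-- The coset space on which everything is built. -/
abbrev Sn (n : ℕ) : Type := (PM n)ˣ ⧸ Hs n

/-- Conjugate of `p 1` indexed by a coset. -/
def cc {n : ℕ} : Sn n → PM n :=
  Quotient.lift (fun b : (PM n)ˣ => (b : PM n) * PM.p n 1 * ↑b⁻¹) (by
    intro a b hab
    have h : a⁻¹ * b ∈ Hs n := (QuotientGroup.leftRel_apply).1 hab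
    obtain ⟨h', hh', rfl⟩ : ∃ h' : (PM n)ˣ, h' ∈ Hs n ∧ b = a * h' :=
      ⟨a⁻¹ * b, h, by group⟩
    show (↑a * PM.p n 1 * ↑a⁻¹ : PM n) = ↑(a * h') * PM.p n 1 * ↑(a * h')⁻¹
    have key : (h' : PM n) * PM.p n 1 * ↑h'⁻¹ = PM.p n 1 := conj_eq h' _ _ hh'
    refine Eq.symm ?_
    calc ((a * h' : (PM n)ˣ) : PM n) * PM.p n 1 * ↑(a * h')⁻¹
        = ↑a * ((h' : PM n) * PM.p n 1 * ↑h'⁻¹) * ↑a⁻¹ := by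
          rw [mul_inv_rev, Units.val_mul, Units.val_mul]
          simp [mul_assoc]
      _ = ↑a * PM.p n 1 * ↑a⁻¹ := by rw [key])

@[simp] lemma cc_mk {n : ℕ} (b : (PM n)ˣ) :
    cc (QuotientGroup.mk b : Sn n) = (b : PM n) * PM.p n 1 * ↑b⁻¹ := rfl

lemma cc_smul {n : ℕ} (b : (PM n)ˣ) (x : Sn n) :
    cc (b • x) = ↑b * cc x * ↑b⁻¹ := by
  induction x using QuotientGroup.induction_on with
  | H g =>
    rw [show b • (QuotientGroup.mk g : Sn n) = QuotientGroup.mk (b * g) from rfl]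
    rw [cc_mk, cc_mk, mul_inv_rev, Units.val_mul, Units.val_mul]
    simp [mul_assoc]

lemma smul_eq_of_comm {n : ℕ} {b : (PM n)ˣ} {x : Sn n}
    (h : ↑b * cc x = cc x * ↑b) : b • x = x := by
  induction x using QuotientGroup.induction_on with
  | H g =>
    rw [show b • (QuotientGroup.mk g : Sn n) = QuotientGroup.mk (b * g) from rfl]
    rw [QuotientGroup.eq]
    show ((((b * g)⁻¹ * g : (PM n)ˣ)) : PM n) * PM.p n 1 = PM.p n 1 * _
    have hbinv : (↑b⁻¹ : PM n) * (↑g * PM.p n 1 * ↑g⁻¹) = (↑g * PM.p n 1 * ↑g⁻¹) * ↑b⁻¹ :=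
      comm_inv b _ (by simpa using h)
    have : ((b * g)⁻¹ * g : (PM n)ˣ) = g⁻¹ * b⁻¹ * g := by group
    rw [this]
    rw [Units.val_mul, Units.val_mul]
    have expand : (↑g⁻¹ : PM n) * ↑b⁻¹ * ↑g * PM.p n 1
        = ↑g⁻¹ * (↑b⁻¹ * (↑g * PM.p n 1 * ↑g⁻¹)) * ↑g := by
      simp [mul_assoc, Units.inv_mul]
    rw [expand, hbinv]
    simp [mul_assoc, Units.inv_mul]

end PMEmb
namespace PMEmb

/-! ### The distinguished cosets `sIdx` -/

/-- The braid unit conjugating `p 1` to `p i`. -/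
def vv (n : ℕ) : ℕ → (PM n)ˣ
  | 0 => 1
  | 1 => 1
  | (i+2) => un n (i+1) * un n (i+2) * vv n (i+1)

/-- The coset corresponding to the generator `p i`. -/
def sIdx (n i : ℕ) : Sn n := QuotientGroup.mk (vv n i)

lemma cc_sIdx (n : ℕ) : ∀ i, 1 ≤ i → i ≤ n - 1 → cc (sIdx n i) = PM.p n i
  | 0, h, _ => absurd h (by omega)
  | 1, _, _ => by simp [sIdx, vv]
  | (j+2), _, h2 => by
    have IH : cc (sIdx n (j+1)) = PM.p n (j+1) := cc_sIdx n (j+1) (by omega) (by omega)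
    have hv : 1 ≤ j + 1 ∧ (j + 1) + 1 ≤ n - 1 := ⟨by omega, by omega⟩
    have : sIdx n (j+2) = (un n (j+1) * un n (j+2)) • sIdx n (j+1) := by
      rw [sIdx, sIdx, vv, MulAction.Quotient.smul_mk]
      rfl
    rw [this, cc_smul, IH]
    apply conj_eq
    rw [Units.val_mul, un_val, un_val]
    exact ssp_pm hv

lemma smul_sIdx_far {n i j : ℕ} (hi : 1 ≤ i ∧ i ≤ n - 1) (hj : 1 ≤ j ∧ j ≤ n - 1)
    (hij : i + 2 ≤ j ∨ j + 2 ≤ i) : un n j • sIdx n i = sIdx n i := by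
  apply smul_eq_of_comm
  rw [cc_sIdx n i hi.1 hi.2, un_val]
  exact (ps_far_pos_pm hi hj hij).symm

lemma smul_sIdx_far_inv {n i j : ℕ} (hi : 1 ≤ i ∧ i ≤ n - 1) (hj : 1 ≤ j ∧ j ≤ n - 1)
    (hij : i + 2 ≤ j ∨ j + 2 ≤ i) : (un n j)⁻¹ • sIdx n i = sIdx n i := by
  rw [inv_smul_eq_iff, smul_sIdx_far hi hj hij]

lemma smul_sIdx_self {n i : ℕ} (h : 1 ≤ i ∧ i ≤ n - 1) :
    un n i • sIdx n i = sIdx n i := by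
  apply smul_eq_of_comm
  rw [cc_sIdx n i h.1 h.2, un_val]
  exact (ps_pos_pm h).symm

lemma smul_sIdx_self_inv {n i : ℕ} (h : 1 ≤ i ∧ i ≤ n - 1) :
    (un n i)⁻¹ • sIdx n i = sIdx n i := by
  rw [inv_smul_eq_iff, smul_sIdx_self h]

lemma smul_sIdx_up {n i : ℕ} (h : 1 ≤ i ∧ i + 1 ≤ n - 1) :
    (un n i * un n (i+1)) • sIdx n i = sIdx n (i+1) := by
  obtain ⟨j, rfl⟩ : ∃ j, i = j + 1 := ⟨i - 1, by omega⟩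
  rw [sIdx, sIdx, MulAction.Quotient.smul_mk]
  rfl

lemma smul_sIdx_down {n i : ℕ} (h : 1 ≤ i ∧ i + 1 ≤ n - 1) :
    (un n (i+1) * un n i) • sIdx n (i+1) = sIdx n i := by
  rw [← smul_sIdx_up h, smul_smul]
  apply smul_eq_of_comm
  rw [cc_sIdx n i h.1 (by omega)]
  have hval : ((un n (i+1) * un n i * (un n i * un n (i+1)) : (PM n)ˣ) : PM n)
      = PM.s n (i+1) * PM.s n i * (PM.s n i * PM.s n (i+1)) := by
    simp [Units.val_mul]
  rw [hval]
  calc PM.s n (i+1) * PM.s n i * (PM.s n i * PM.s n (i+1)) * PM.p n i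
      = PM.s n (i+1) * PM.s n i * (PM.s n i * PM.s n (i+1) * PM.p n i) := by
        simp [mul_assoc]
    _ = PM.s n (i+1) * PM.s n i * (PM.p n (i+1) * (PM.s n i * PM.s n (i+1))) := by
        rw [ssp_pm h]
    _ = PM.s n (i+1) * PM.s n i * PM.p n (i+1) * (PM.s n i * PM.s n (i+1)) := by
        simp [mul_assoc]
    _ = PM.p n i * (PM.s n (i+1) * PM.s n i) * (PM.s n i * PM.s n (i+1)) := by
        rw [ssp'_pm h]
    _ = PM.p n i * (PM.s n (i+1) * PM.s n i * (PM.s n i * PM.s n (i+1))) := by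
        simp [mul_assoc]

end PMEmb
namespace PMEmb

/-! ### The trace monoid `Tn` on `Sn` and the action of units on it -/

/-- Commutation relation on cosets. -/
def Ecc {n : ℕ} (a b : Sn n) : Prop := cc a * cc b = cc b * cc a

lemma Ecc_symm {n : ℕ} {a b : Sn n} (h : Ecc a b) : Ecc b a := h.symm

lemma Ecc_smul {n : ℕ} (β : (PM n)ˣ) {a b : Sn n} (h : Ecc a b) : Ecc (β • a) (β • b) := by
  unfold Ecc at h ⊢
  rw [cc_smul, cc_smul]
  simp only [mul_assoc, Units.inv_mul_cancel_left]
  rw [← mul_assoc (cc a), h, mul_assoc]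

lemma Ecc_smul_iff {n : ℕ} (β : (PM n)ˣ) {a b : Sn n} :
    Ecc (β • a) (β • b) ↔ Ecc a b := by
  constructor
  · intro h
    have := Ecc_smul β⁻¹ h
    simpa [inv_smul_smul] using this
  · exact Ecc_smul β

/-- Swap relation generating the trace monoid congruence. -/
def swapRel (n : ℕ) : FreeMonoid (Sn n) → FreeMonoid (Sn n) → Prop :=
  fun x y => ∃ a b : Sn n, Ecc a b ∧
    x = FreeMonoid.of a * FreeMonoid.of b ∧ y = FreeMonoid.of b * FreeMonoid.of a

/-- The trace monoid congruence. -/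
def Tcon (n : ℕ) : Con (FreeMonoid (Sn n)) := conGen (swapRel n)

/-- The trace monoid on `Sn`. -/
def Tn (n : ℕ) := (Tcon n).Quotient

instance (n : ℕ) : Monoid (Tn n) := inferInstanceAs (Monoid ((Tcon n).Quotient))

/-- Generator of the trace monoid. -/
def xg {n : ℕ} (x : Sn n) : Tn n := (Tcon n).mk' (FreeMonoid.of x)

lemma xg_mul_xg {n : ℕ} {a b : Sn n} (h : Ecc a b) : xg a * xg b = xg b * xg a := by
  show (Tcon n).mk' _ * (Tcon n).mk' _ = (Tcon n).mk' _ * (Tcon n).mk' _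
  rw [← map_mul, ← map_mul]
  exact (Con.eq _).mpr (ConGen.Rel.of _ _ ⟨a, b, h, rfl, rfl⟩)

/-- `mk'` with target `Tn`. -/
def tmk (n : ℕ) : FreeMonoid (Sn n) →* Tn n := (Tcon n).mk'

lemma T_hom_ext {n : ℕ} {M : Type} [Monoid M] {f g : Tn n →* M}
    (h : ∀ x, f (xg x) = g (xg x)) : f = g := by
  ext t
  induction t using Con.induction_on with
  | H w =>
    show f (tmk n w) = g (tmk n w)
    induction w using FreeMonoid.inductionOn' with
    | one => simp only [map_one]
    | of_mul a w IH =>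
      have e : tmk n (FreeMonoid.of a * w) = xg a * tmk n w := map_mul (tmk n) _ _
      rw [e, map_mul, map_mul, h a, IH]

/-- The action of a unit on the trace monoid. -/
def actT {n : ℕ} (b : (PM n)ˣ) : Tn n →* Tn n :=
  Con.lift (Tcon n) ((Tcon n).mk'.comp (FreeMonoid.map (fun x => b • x)))
    (Con.conGen_le.2 (by
      rintro x y ⟨a, c, hE, rfl, rfl⟩
      show (Tcon n).mk' ((FreeMonoid.map fun x => b • x) _)
          = (Tcon n).mk' ((FreeMonoid.map fun x => b • x) _)
      simp only [map_mul, FreeMonoid.map_of]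
      exact (Con.eq _).mpr (ConGen.Rel.of _ _ ⟨b • a, b • c, Ecc_smul b hE, rfl, rfl⟩)))

@[simp] lemma actT_xg {n : ℕ} (b : (PM n)ˣ) (x : Sn n) : actT b (xg x) = xg (b • x) := by
  exact Con.lift_mk' _ _

lemma actT_mul_apply {n : ℕ} (b₁ b₂ : (PM n)ˣ) (t : Tn n) :
    actT (b₁ * b₂) t = actT b₁ (actT b₂ t) := by
  have : actT (b₁ * b₂) = (actT b₁).comp (actT b₂) :=
    T_hom_ext (by intro x; simp [mul_smul])
  rw [this]; rfl

lemma actT_one_apply {n : ℕ} (t : Tn n) : actT (1 : (PM n)ˣ) t = t := by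
  have : actT (1 : (PM n)ˣ) = MonoidHom.id (Tn n) := T_hom_ext (by intro x; simp)
  rw [this]; rfl

/-! ### The monoid `Nsd`, semidirect product of the trace monoid and the units -/

/-- Semidirect product (as a monoid) of `Tn n` and `(PM n)ˣ`. -/
structure Nsd (n : ℕ) where
  t : Tn n
  b : (PM n)ˣ

instance (n : ℕ) : Monoid (Nsd n) where
  mul a b := ⟨a.t * actT a.b b.t, a.b * b.b⟩
  one := ⟨1, 1⟩
  mul_assoc a b c := by
    obtain ⟨t₁, b₁⟩ := a; obtain ⟨t₂, b₂⟩ := b; obtain ⟨t₃, b₃⟩ := c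
    show Nsd.mk _ _ = Nsd.mk _ _
    congr 1
    · show t₁ * actT b₁ t₂ * actT (b₁ * b₂) t₃ = t₁ * actT b₁ (t₂ * actT b₂ t₃)
      rw [map_mul, actT_mul_apply, mul_assoc]
    · exact mul_assoc _ _ _
  one_mul a := by
    obtain ⟨t, b⟩ := a
    show Nsd.mk _ _ = Nsd.mk _ _
    congr 1
    · show (1 : Tn n) * actT 1 t = t
      rw [actT_one_apply, one_mul]
    · exact one_mul _
  mul_one a := by
    obtain ⟨t, b⟩ := a
    show Nsd.mk _ _ = Nsd.mk _ _
    congr 1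
    · show t * actT b 1 = t
      rw [map_one, mul_one]
    · exact mul_one _

lemma nsd_mul {n : ℕ} (t t' : Tn n) (b b' : (PM n)ˣ) :
    (Nsd.mk t b * Nsd.mk t' b' : Nsd n) = Nsd.mk (t * actT b t') (b * b') := rfl

lemma nsd_one {n : ℕ} : (1 : Nsd n) = Nsd.mk (1 : Tn n) (1 : (PM n)ˣ) := rfl

end PMEmb
namespace PMEmb

/-! ### The homomorphism `PM n →* Nsd n` -/

/-- Images of the generators in `Nsd`. -/
def h1F {n : ℕ} : PMGen n → Nsd n
  | .sig i _ => ⟨1, un n i⟩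
  | .sigInv i _ => ⟨1, (un n i)⁻¹⟩
  | .p i _ => ⟨xg (sIdx n i), 1⟩

/-- The induced homomorphism on words. -/
def wordF (n : ℕ) : FreeMonoid (PMGen n) →* Nsd n := FreeMonoid.lift h1F

lemma wordF_pmS {n i : ℕ} (h : 1 ≤ i ∧ i ≤ n - 1) : wordF n (pmS n i) = ⟨1, un n i⟩ := by
  rw [pmS, dif_pos h]; rfl

lemma wordF_pmSI {n i : ℕ} (h : 1 ≤ i ∧ i ≤ n - 1) : wordF n (pmSI n i) = ⟨1, (un n i)⁻¹⟩ := by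
  rw [pmSI, dif_pos h]; rfl

lemma wordF_pmP {n i : ℕ} (h : 1 ≤ i ∧ i ≤ n - 1) : wordF n (pmP n i) = ⟨xg (sIdx n i), 1⟩ := by
  rw [pmP, dif_pos h]; rfl

lemma wordF_rel {n : ℕ} {x y : FreeMonoid (PMGen n)} (h : PMRel n x y) :
    wordF n x = wordF n y := by
  cases h with
  | inv_right i h =>
    rw [map_mul, map_one, wordF_pmS h, wordF_pmSI h]
    simp [nsd_mul, nsd_one, Nsd.mk.injEq]
  | inv_left i h =>
    rw [map_mul, map_one, wordF_pmS h, wordF_pmSI h]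
    simp [nsd_mul, nsd_one, Nsd.mk.injEq]
  | braid i h =>
    have hi : 1 ≤ i ∧ i ≤ n - 1 := ⟨h.1, by omega⟩
    have hi1 : 1 ≤ i + 1 ∧ i + 1 ≤ n - 1 := ⟨by omega, h.2⟩
    rw [map_mul, map_mul, map_mul, map_mul, wordF_pmS hi, wordF_pmS hi1]
    simp [nsd_mul, Nsd.mk.injEq, Units.ext_iff, Units.val_mul, braid_pm h]
  | sig_comm i j hi hj hij =>
    rw [map_mul, map_mul, wordF_pmS hi, wordF_pmS hj]
    simp [nsd_mul, Nsd.mk.injEq, Units.ext_iff, Units.val_mul, s_comm_pm hi hj hij]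
  | p_comm i j hi hj hij =>
    have hc : xg (sIdx n i) * xg (sIdx n j) = xg (sIdx n j) * xg (sIdx n i) :=
      xg_mul_xg (by
        show cc _ * cc _ = cc _ * cc _
        rw [cc_sIdx n i hi.1 hi.2, cc_sIdx n j hj.1 hj.2]
        exact p_comm_pm hi hj hij)
    rw [map_mul, map_mul, wordF_pmP hi, wordF_pmP hj]
    simp [nsd_mul, Nsd.mk.injEq, hc]
  | p_sig_far_pos i j hi hj hij =>
    rw [map_mul, map_mul, wordF_pmP hi, wordF_pmS hj]
    simp [nsd_mul, Nsd.mk.injEq, smul_sIdx_far hi hj hij]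
  | p_sig_far_neg i j hi hj hij =>
    rw [map_mul, map_mul, wordF_pmP hi, wordF_pmSI hj]
    simp [nsd_mul, Nsd.mk.injEq, smul_sIdx_far_inv hi hj hij]
  | p_sig_pos i h =>
    rw [map_mul, map_mul, wordF_pmP h, wordF_pmS h]
    simp [nsd_mul, Nsd.mk.injEq, smul_sIdx_self h]
  | p_sig_neg i h =>
    rw [map_mul, map_mul, wordF_pmP h, wordF_pmSI h]
    simp [nsd_mul, Nsd.mk.injEq, smul_sIdx_self_inv h]
  | ssp i h =>
    have hi : 1 ≤ i ∧ i ≤ n - 1 := ⟨h.1, by omega⟩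
    have hi1 : 1 ≤ i + 1 ∧ i + 1 ≤ n - 1 := ⟨by omega, h.2⟩
    rw [map_mul, map_mul, map_mul, map_mul, wordF_pmS hi, wordF_pmS hi1,
      wordF_pmP hi, wordF_pmP hi1]
    simp [nsd_mul, Nsd.mk.injEq, smul_sIdx_up h, mul_assoc]
  | ssp' i h =>
    have hi : 1 ≤ i ∧ i ≤ n - 1 := ⟨h.1, by omega⟩
    have hi1 : 1 ≤ i + 1 ∧ i + 1 ≤ n - 1 := ⟨by omega, h.2⟩
    rw [map_mul, map_mul, map_mul, map_mul, wordF_pmS hi, wordF_pmS hi1,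
      wordF_pmP hi, wordF_pmP hi1]
    simp [nsd_mul, Nsd.mk.injEq, smul_sIdx_down h, mul_assoc]

/-- The homomorphism from the pseudo braid monoid to `Nsd`. -/
def h1 (n : ℕ) : PM n →* Nsd n :=
  Con.lift (conGen (PMRel n)) (wordF n)
    (Con.conGen_le.2 (fun _ _ h => wordF_rel h))

lemma h1_mk (n : ℕ) (w : FreeMonoid (PMGen n)) :
    h1 n ((conGen (PMRel n)).mk' w) = wordF n w := Con.lift_mk' _ _

end PMEmb
namespace PMEmb

/-! ### The retraction `Nsd n →* PM n` -/

/-- `mk'` with target `PM`. -/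
def pmk (n : ℕ) : FreeMonoid (PMGen n) →* PM n := (conGen (PMRel n)).mk'

/-- The homomorphism from the trace monoid to `PM n` sending `xg x` to `cc x`. -/
def phiT (n : ℕ) : Tn n →* PM n :=
  Con.lift (Tcon n) (FreeMonoid.lift cc)
    (Con.conGen_le.2 (by
      rintro x y ⟨a, b, hE, rfl, rfl⟩
      show FreeMonoid.lift cc _ = FreeMonoid.lift cc _
      rw [map_mul, map_mul, FreeMonoid.lift_eval_of, FreeMonoid.lift_eval_of]
      exact hE))

lemma phiT_xg {n : ℕ} (x : Sn n) : phiT n (xg x) = cc x := Con.lift_mk' _ _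

/-- Conjugation by a unit, as a monoid homomorphism. -/
def conjU {n : ℕ} (b : (PM n)ˣ) : PM n →* PM n where
  toFun m := ↑b * m * ↑b⁻¹
  map_one' := by simp
  map_mul' x y := by
    simp only [mul_assoc]
    rw [Units.inv_mul_cancel_left]

lemma phiT_actT {n : ℕ} (b : (PM n)ˣ) (t : Tn n) :
    phiT n (actT b t) = ↑b * phiT n t * ↑b⁻¹ := by
  have key : (phiT n).comp (actT b) = (conjU b).comp (phiT n) :=
    T_hom_ext (fun x => by
      show phiT n (actT b (xg x)) = conjU b (phiT n (xg x))
      rw [actT_xg, phiT_xg, phiT_xg, cc_smul]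
      rfl)
  exact DFunLike.congr_fun key t

/-- The retraction from `Nsd n` to `PM n`. -/
def h3 (n : ℕ) : Nsd n →* PM n where
  toFun a := phiT n a.t * ↑a.b
  map_one' := by
    show phiT n (1 : Tn n) * ((1 : (PM n)ˣ) : PM n) = 1
    rw [map_one, one_mul, Units.val_one]
  map_mul' a b := by
    obtain ⟨t₁, b₁⟩ := a; obtain ⟨t₂, b₂⟩ := b
    show phiT n (t₁ * actT b₁ t₂) * ↑(b₁ * b₂) = (phiT n t₁ * ↑b₁) * (phiT n t₂ * ↑b₂)
    rw [map_mul, phiT_actT, Units.val_mul]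
    simp only [mul_assoc]
    rw [Units.inv_mul_cancel_left]

lemma h3_h1 (n : ℕ) (x : PM n) : h3 n (h1 n x) = x := by
  induction x using Con.induction_on with
  | H w =>
    show h3 n (h1 n (pmk n w)) = pmk n w
    induction w using FreeMonoid.inductionOn' with
    | one => rw [map_one, map_one, map_one]
    | of_mul a w IH =>
      rw [map_mul, map_mul, map_mul, IH]
      congr 1
      cases a with
      | sig i hv =>
        have e1 : h1 n (pmk n (FreeMonoid.of (PMGen.sig i hv))) = ⟨1, un n i⟩ := by
          rw [show h1 n (pmk n (FreeMonoid.of (PMGen.sig i hv)))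
              = wordF n (FreeMonoid.of (PMGen.sig i hv)) from h1_mk n _]
          rfl
        rw [e1]
        show phiT n (1 : Tn n) * PM.s n i = pmk n (FreeMonoid.of (PMGen.sig i hv))
        rw [map_one, one_mul, show pmk n (FreeMonoid.of (PMGen.sig i hv)) = PM.s n i from by
          rw [PM.s, pmS, dif_pos hv]; rfl]
      | sigInv i hv =>
        have e1 : h1 n (pmk n (FreeMonoid.of (PMGen.sigInv i hv))) = ⟨1, (un n i)⁻¹⟩ := by
          rw [show h1 n (pmk n (FreeMonoid.of (PMGen.sigInv i hv)))
              = wordF n (FreeMonoid.of (PMGen.sigInv i hv)) from h1_mk n _]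
          rfl
        rw [e1]
        show phiT n (1 : Tn n) * PM.sInv n i = pmk n (FreeMonoid.of (PMGen.sigInv i hv))
        rw [map_one, one_mul, show pmk n (FreeMonoid.of (PMGen.sigInv i hv)) = PM.sInv n i from by
          rw [PM.sInv, pmSI, dif_pos hv]; rfl]
      | p i hv =>
        have e1 : h1 n (pmk n (FreeMonoid.of (PMGen.p i hv))) = ⟨xg (sIdx n i), 1⟩ := by
          rw [show h1 n (pmk n (FreeMonoid.of (PMGen.p i hv)))
              = wordF n (FreeMonoid.of (PMGen.p i hv)) from h1_mk n _]
          rfl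
        rw [e1]
        show phiT n (xg (sIdx n i)) * ((1 : (PM n)ˣ) : PM n) = pmk n (FreeMonoid.of (PMGen.p i hv))
        rw [phiT_xg, Units.val_one, mul_one, cc_sIdx n i hv.1 hv.2,
          show pmk n (FreeMonoid.of (PMGen.p i hv)) = PM.p n i from by
            rw [PM.p, pmP, dif_pos hv]; rfl]

lemma h1_injective (n : ℕ) : Function.Injective (h1 n) := by
  intro x y hxy
  rw [← h3_h1 n x, ← h3_h1 n y, hxy]

end PMEmb
namespace PMEmb

/-! ### The target group: functions to free groups, semidirect with the units -/

/-- Dependence relation on cosets. -/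
def dep {n : ℕ} (u v : Sn n) : Prop := u = v ∨ ¬ Ecc u v

lemma dep_smul {n : ℕ} (β : (PM n)ˣ) {u v : Sn n} : dep (β • u) (β • v) ↔ dep u v := by
  unfold dep
  rw [smul_left_cancel_iff, Ecc_smul_iff]

-- The building block recording occurrences of a letter in components indexed by dependent pairs.
open Classical in
noncomputable def Pg {n : ℕ} (s : Sn n) : (Sn n × Sn n) → FreeGroup (Sn n) :=
  fun d => if (s = d.1 ∨ s = d.2) ∧ dep d.1 d.2 then FreeGroup.of s else 1

/-- The normal part of the target group. -/
def An (n : ℕ) : Type := (Sn n × Sn n) → FreeGroup (Sn n)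

noncomputable instance (n : ℕ) : Group (An n) :=
  inferInstanceAs (Group ((Sn n × Sn n) → FreeGroup (Sn n)))

lemma An_mul_apply {n : ℕ} (a b : An n) (d : Sn n × Sn n) : (a * b) d = a d * b d := rfl
lemma An_one_apply {n : ℕ} (d : Sn n × Sn n) : (1 : An n) d = 1 := rfl

lemma Pg_comm {n : ℕ} {a b : Sn n} (hE : Ecc a b) :
    (Pg a : An n) * Pg b = (Pg b : An n) * Pg a := by
  funext d
  rw [Pi.mul_apply, Pi.mul_apply]
  by_cases hab : a = b
  · rw [hab]
  unfold Pg
  by_cases ha : (a = d.1 ∨ a = d.2) ∧ dep d.1 d.2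
  · by_cases hb : (b = d.1 ∨ b = d.2) ∧ dep d.1 d.2
    · exfalso
      rcases ha.2 with h12 | hne
      · rcases ha.1 with rfl | rfl <;> rcases hb.1 with h | h
        · exact hab h.symm
        · exact hab (h12.trans h.symm)
        · exact hab (h12.symm.trans h.symm)
        · exact hab h.symm
      · rcases ha.1 with rfl | rfl <;> rcases hb.1 with h | h
        · exact hab h.symm
        · exact hne (h ▸ hE)
        · exact hne (h ▸ (Ecc_symm hE))
        · exact hab h.symm
    · rw [if_pos ha, if_neg hb, one_mul, mul_one]
  · rw [if_neg ha, one_mul, mul_one]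

/-- The action of a unit on `An`. -/
noncomputable def phiA {n : ℕ} (β : (PM n)ˣ) : An n ≃* An n where
  toFun a d := FreeGroup.map (fun x => β • x) (a (β⁻¹ • d.1, β⁻¹ • d.2))
  invFun a d := FreeGroup.map (fun x => β⁻¹ • x) (a (β • d.1, β • d.2))
  left_inv a := by
    funext d
    dsimp only
    rw [FreeGroup.map.comp]
    have h1 : (fun x : Sn n => β⁻¹ • β • x) = id := funext fun x => inv_smul_smul β x
    have h2 : ∀ y : Sn n, β⁻¹ • β • y = y := fun y => inv_smul_smul β y
    rw [show ((fun x : Sn n => β⁻¹ • x) ∘ fun x => β • x) = id from h1]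
    rw [FreeGroup.map.id]
    rw [h2, h2]
  right_inv a := by
    funext d
    dsimp only
    rw [FreeGroup.map.comp]
    have h1 : (fun x : Sn n => β • β⁻¹ • x) = id := funext fun x => smul_inv_smul β x
    have h2 : ∀ y : Sn n, β • β⁻¹ • y = y := fun y => smul_inv_smul β y
    rw [show ((fun x : Sn n => β • x) ∘ fun x => β⁻¹ • x) = id from h1]
    rw [FreeGroup.map.id]
    rw [h2, h2]
  map_mul' a b := by
    funext d
    rw [An_mul_apply, map_mul]
    rfl

lemma phiA_apply {n : ℕ} (β : (PM n)ˣ) (a : An n) (d : Sn n × Sn n) :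
    phiA β a d = FreeGroup.map (fun x => β • x) (a (β⁻¹ • d.1, β⁻¹ • d.2)) := rfl

/-- The action as a homomorphism into the automorphism group. -/
noncomputable def φact (n : ℕ) : (PM n)ˣ →* MulAut (An n) where
  toFun := phiA
  map_one' := by
    refine MulEquiv.ext fun a => ?_
    funext d
    rw [show (1 : MulAut (An n)) a = a from rfl, phiA_apply]
    have h1 : (fun x : Sn n => (1 : (PM n)ˣ) • x) = id := funext fun x => one_smul _ x
    rw [h1, FreeGroup.map.id, inv_one, one_smul, one_smul]
  map_mul' β₁ β₂ := by
    refine MulEquiv.ext fun a => ?_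
    funext d
    rw [show (phiA β₁ * phiA β₂ : MulAut (An n)) a = phiA β₁ (phiA β₂ a) from rfl]
    rw [phiA_apply, phiA_apply, phiA_apply, FreeGroup.map.comp]
    have h1 : ((fun x : Sn n => β₁ • x) ∘ fun x => β₂ • x) = fun x => (β₁ * β₂) • x :=
      funext fun x => (mul_smul β₁ β₂ x).symm
    rw [h1]
    simp only [mul_inv_rev, mul_smul]

/-- The ambient group. -/
noncomputable abbrev Gfin (n : ℕ) := SemidirectProduct (An n) (PM n)ˣ (φact n)

/-- The embedding of the trace monoid into `An`. -/
noncomputable def iota (n : ℕ) : Tn n →* An n :=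
  Con.lift (Tcon n) (FreeMonoid.lift Pg)
    (Con.conGen_le.2 (by
      rintro x y ⟨a, b, hE, rfl, rfl⟩
      show FreeMonoid.lift Pg _ = FreeMonoid.lift Pg _
      rw [map_mul, map_mul, FreeMonoid.lift_eval_of, FreeMonoid.lift_eval_of]
      exact Pg_comm hE))

lemma iota_xg {n : ℕ} (x : Sn n) : iota n (xg x) = Pg x := Con.lift_mk' _ _

lemma iota_actT {n : ℕ} (β : (PM n)ˣ) (t : Tn n) :
    iota n (actT β t) = phiA β (iota n t) := by
  have key : (iota n).comp (actT β) = (phiA β).toMonoidHom.comp (iota n) :=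
    T_hom_ext (fun x => by
      show iota n (actT β (xg x)) = phiA β (iota n (xg x))
      rw [actT_xg, iota_xg, iota_xg]
      funext d
      show Pg (β • x) d = FreeGroup.map (fun x => β • x) (Pg x (β⁻¹ • d.1, β⁻¹ • d.2))
      unfold Pg
      rw [apply_ite (FreeGroup.map (fun x : Sn n => β • x)), map_one, FreeGroup.map.of]
      have e1 : ∀ y : Sn n, β • x = y ↔ x = β⁻¹ • y := fun y =>
        ⟨fun h => by rw [← h, inv_smul_smul], fun h => by rw [h, smul_inv_smul]⟩
      have e2 : dep d.1 d.2 ↔ dep (β⁻¹ • d.1) (β⁻¹ • d.2) := by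
        rw [dep_smul β⁻¹]
      have hiff := and_congr (or_congr (e1 d.1) (e1 d.2)) e2
      by_cases hc : (β • x = d.1 ∨ β • x = d.2) ∧ dep d.1 d.2
      · rw [if_pos hc, if_pos (hiff.1 hc)]
      · rw [if_neg hc, if_neg (fun hh => hc (hiff.2 hh))])
  exact DFunLike.congr_fun key t

/-- The homomorphism from `Nsd` to the ambient group. -/
noncomputable def h2 (n : ℕ) : Nsd n →* Gfin n where
  toFun a := ⟨iota n a.t, a.b⟩
  map_one' := by
    show (⟨iota n (1 : Tn n), (1 : (PM n)ˣ)⟩ : Gfin n) = 1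
    rw [map_one]
    rfl
  map_mul' a b := by
    obtain ⟨t₁, b₁⟩ := a; obtain ⟨t₂, b₂⟩ := b
    show (⟨iota n (t₁ * actT b₁ t₂), b₁ * b₂⟩ : Gfin n) = _
    rw [map_mul, iota_actT]
    rfl

end PMEmb
namespace PMEmb

/-! ### The projection lemma: `iota` is injective -/

-- projection of a word onto the letters of a pair
open Classical in
noncomputable def pj {n : ℕ} (u v : Sn n) (w : List (Sn n)) : List (Sn n) :=
  w.filter (fun s => decide (s = u ∨ s = v))

lemma pj_nil {n : ℕ} (u v : Sn n) : pj u v [] = [] := rfl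

lemma pj_cons_pos {n : ℕ} {u v a : Sn n} (w : List (Sn n)) (h : a = u ∨ a = v) :
    pj u v (a :: w) = a :: pj u v w := by
  simp [pj, h]

lemma pj_cons_neg {n : ℕ} {u v a : Sn n} (w : List (Sn n)) (h : ¬(a = u ∨ a = v)) :
    pj u v (a :: w) = pj u v w := by
  simp [pj, h]

lemma pj_append {n : ℕ} (u v : Sn n) (w w' : List (Sn n)) :
    pj u v (w ++ w') = pj u v w ++ pj u v w' := by
  simp [pj]

lemma mem_pj {n : ℕ} {u v x : Sn n} {w : List (Sn n)} :
    x ∈ pj u v w ↔ x ∈ w ∧ (x = u ∨ x = v) := by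
  simp [pj, List.mem_filter]

/-- Positive word in the free group. -/
def Jw {n : ℕ} (l : List (Sn n)) : FreeGroup (Sn n) := (l.map FreeGroup.of).prod

lemma Jw_nil {n : ℕ} : Jw (n := n) [] = 1 := rfl

lemma Jw_cons {n : ℕ} (a : Sn n) (l : List (Sn n)) :
    Jw (a :: l) = FreeGroup.of a * Jw l := by
  simp [Jw]

lemma Jw_eq_mk {n : ℕ} : ∀ l : List (Sn n),
    Jw l = FreeGroup.mk (l.map (fun s => (s, true)))
  | [] => by
    rw [Jw_nil, List.map_nil]
    rfl
  | a :: l => by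
    rw [Jw_cons, Jw_eq_mk l, List.map_cons]
    rw [show (FreeGroup.of a : FreeGroup (Sn n)) = FreeGroup.mk [(a, true)] from rfl,
      FreeGroup.mul_mk]
    rfl

lemma reduce_pos {α : Type} [DecidableEq α] : ∀ l : List α,
    FreeGroup.reduce (l.map (fun s => (s, true))) = l.map (fun s => (s, true))
  | [] => rfl
  | a :: l => by
    rw [List.map_cons, FreeGroup.reduce.cons, reduce_pos l]
    cases l with
    | nil => rfl
    | cons b l' => simp

lemma Jw_inj {n : ℕ} : Function.Injective (Jw (n := n)) := by
  classical
  intro l l' h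
  rw [Jw_eq_mk, Jw_eq_mk] at h
  have h2 := congrArg FreeGroup.toWord h
  rw [FreeGroup.toWord_mk, FreeGroup.toWord_mk, reduce_pos, reduce_pos] at h2
  have : Function.Injective (fun s : Sn n => (s, true)) := fun a b hab => by
    simpa using congrArg Prod.fst hab
  exact List.map_injective_iff.2 this h2

lemma lift_Pg_apply {n : ℕ} {u v : Sn n} (hdep : dep u v) : ∀ w : List (Sn n),
    (FreeMonoid.lift Pg (FreeMonoid.ofList w) : An n) (u, v) = Jw (pj u v w)
  | [] => by
    rw [FreeMonoid.ofList_nil, map_one, pj_nil, Jw_nil]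
    rfl
  | a :: w => by
    rw [FreeMonoid.ofList_cons, map_mul, FreeMonoid.lift_eval_of, Pi.mul_apply,
      lift_Pg_apply hdep w]
    by_cases hc : a = u ∨ a = v
    · rw [pj_cons_pos w hc, Jw_cons]
      congr 1
      unfold Pg
      rw [if_pos ⟨hc, hdep⟩]
    · rw [pj_cons_neg w hc]
      have : Pg a (u, v) = 1 := by
        unfold Pg
        rw [if_neg (fun hh => hc hh.1)]
      rw [this, one_mul]

lemma move_head {n : ℕ} {s : Sn n} : ∀ (A B : List (Sn n)), (∀ t ∈ A, Ecc s t) →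
    (Tcon n) (FreeMonoid.ofList (A ++ s :: B)) (FreeMonoid.ofList (s :: (A ++ B)))
  | [], B, _ => (Tcon n).refl _
  | t :: A, B, h => by
    have IH := move_head A B (fun x hx => h x (List.mem_cons_of_mem _ hx))
    have hst : Ecc s t := h t (List.mem_cons_self)
    have step1 : (Tcon n) (FreeMonoid.ofList (t :: (A ++ s :: B)))
        (FreeMonoid.ofList (t :: s :: (A ++ B))) := by
      rw [FreeMonoid.ofList_cons, FreeMonoid.ofList_cons]
      exact (Tcon n).mul ((Tcon n).refl _) IH
    have swap : (Tcon n) (FreeMonoid.of t * FreeMonoid.of s)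
        (FreeMonoid.of s * FreeMonoid.of t) :=
      ConGen.Rel.of _ _ ⟨t, s, Ecc_symm hst, rfl, rfl⟩
    have step2 : (Tcon n) (FreeMonoid.ofList (t :: s :: (A ++ B)))
        (FreeMonoid.ofList (s :: t :: (A ++ B))) := by
      rw [FreeMonoid.ofList_cons, FreeMonoid.ofList_cons,
        FreeMonoid.ofList_cons, FreeMonoid.ofList_cons, ← mul_assoc, ← mul_assoc]
      exact (Tcon n).mul swap ((Tcon n).refl _)
    exact (Tcon n).trans step1 step2

lemma first_occ {n : ℕ} {s : Sn n} : ∀ w : List (Sn n), s ∈ w →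
    ∃ A B, w = A ++ s :: B ∧ ∀ t ∈ A, t ≠ s
  | [], h => absurd h List.not_mem_nil
  | a :: w, h => by
    by_cases ha : a = s
    · exact ⟨[], w, by rw [ha, List.nil_append], by simp⟩
    · have hs : s ∈ w := by
        rcases List.mem_cons.1 h with h' | h'
        · exact absurd h'.symm ha
        · exact h'
      obtain ⟨A, B, hw, hA⟩ := first_occ w hs
      exact ⟨a :: A, B, by rw [hw, List.cons_append], by
        intro t ht
        rcases List.mem_cons.1 ht with rfl | ht'
        · exact ha
        · exact hA t ht'⟩

/-- Filtering as a monoid homomorphism on words. -/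
noncomputable def filtH {n : ℕ} (u v : Sn n) : FreeMonoid (Sn n) →* FreeMonoid (Sn n) where
  toFun w := FreeMonoid.ofList (pj u v (FreeMonoid.toList w))
  map_one' := rfl
  map_mul' x y := by
    show FreeMonoid.ofList (pj u v (FreeMonoid.toList x ++ FreeMonoid.toList y)) = _
    rw [pj_append, FreeMonoid.ofList_append]

lemma filt_invariant {n : ℕ} {u v : Sn n} (hdep : dep u v) {x y : FreeMonoid (Sn n)}
    (hxy : (Tcon n) x y) : pj u v (FreeMonoid.toList x) = pj u v (FreeMonoid.toList y) := by
  have hle : (Tcon n) ≤ Con.ker (filtH u v) := Con.conGen_le.2 (by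
    rintro x y ⟨a, b, hE, rfl, rfl⟩
    show filtH u v _ = filtH u v _
    show FreeMonoid.ofList (pj u v [a, b]) = FreeMonoid.ofList (pj u v [b, a])
    by_cases hab : a = b
    · rw [hab]
    by_cases hA : a = u ∨ a = v
    · by_cases hB : b = u ∨ b = v
      · exfalso
        rcases hdep with h12 | hne
        · rcases hA with rfl | rfl <;> rcases hB with h | h
          · exact hab h.symm
          · exact hab (h12.trans h.symm)
          · exact hab (h12.symm.trans h.symm)
          · exact hab h.symm
        · rcases hA with rfl | rfl <;> rcases hB with h | h
          · exact hab h.symm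
          · exact hne (h ▸ hE)
          · exact hne (h ▸ (Ecc_symm hE))
          · exact hab h.symm
      · rw [show [a, b] = [a] ++ [b] from rfl, show [b, a] = [b] ++ [a] from rfl,
          pj_append, pj_append, pj_cons_neg _ hB, pj_cons_pos _ hA, pj_nil]
        simp
    · by_cases hB : b = u ∨ b = v
      · rw [show [a, b] = [a] ++ [b] from rfl, show [b, a] = [b] ++ [a] from rfl,
          pj_append, pj_append, pj_cons_neg _ hA, pj_cons_pos _ hB, pj_nil]
        simp
      · rw [show [a, b] = [a] ++ [b] from rfl, show [b, a] = [b] ++ [a] from rfl,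
          pj_append, pj_append, pj_cons_neg _ hA, pj_cons_neg _ hB])
  have := hle hxy
  have h2 : filtH u v x = filtH u v y := this
  have h3 := congrArg FreeMonoid.toList h2
  exact h3

lemma dep_refl {n : ℕ} (a : Sn n) : dep a a := Or.inl rfl

lemma main_proj {n : ℕ} : ∀ (k : ℕ) (w w' : List (Sn n)), w.length ≤ k →
    (∀ u v : Sn n, dep u v → pj u v w = pj u v w') →
    (Tcon n) (FreeMonoid.ofList w) (FreeMonoid.ofList w') := by
  intro k
  induction k with
  | zero =>
    intro w w' hlen H
    have hw : w = [] := List.eq_nil_of_length_eq_zero (by omega)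
    subst hw
    cases w' with
    | nil => exact (Tcon n).refl _
    | cons a w'' =>
      exfalso
      have := H a a (dep_refl a)
      rw [pj_nil, pj_cons_pos _ (Or.inl rfl)] at this
      exact List.cons_ne_nil _ _ this.symm
  | succ k IHk =>
    intro w w' hlen H
    cases w with
    | nil =>
      cases w' with
      | nil => exact (Tcon n).refl _
      | cons a w'' =>
        exfalso
        have := H a a (dep_refl a)
        rw [pj_nil, pj_cons_pos _ (Or.inl rfl)] at this
        exact List.cons_ne_nil _ _ this.symm
    | cons s w₀ =>
      -- s occurs in w'
      have hsw' : s ∈ w' := by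
        have := H s s (dep_refl s)
        rw [pj_cons_pos _ (Or.inl rfl)] at this
        have hmem : s ∈ pj s s w' := by rw [← this]; exact List.mem_cons_self
        exact (mem_pj.1 hmem).1
      obtain ⟨A, B, rfl, hA⟩ := first_occ w' hsw'
      -- every letter before the first s commutes with s
      have hAE : ∀ t ∈ A, Ecc s t := by
        intro t ht
        by_contra hE
        have hts : t ≠ s := hA t ht
        have hdep_st : dep s t := Or.inr hE
        have hH := H s t hdep_st
        rw [pj_cons_pos _ (Or.inl rfl), pj_append] at hH
        have htmem : t ∈ pj s t A := mem_pj.2 ⟨ht, Or.inr rfl⟩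
        cases hpjA : pj s t A with
        | nil => rw [hpjA] at htmem; exact List.not_mem_nil htmem
        | cons x xs =>
          have hx : x ∈ pj s t A := by rw [hpjA]; exact List.mem_cons_self
          have hxt : x = t := by
            rcases (mem_pj.1 hx).2 with h' | h'
            · exact absurd h' (by
                intro hxeq
                have : x ∈ A := (mem_pj.1 hx).1
                exact hA x this hxeq)
            · exact h'
          rw [hpjA] at hH
          have : s = x := by
            have := congrArg (fun l => l.head? ) hH
            simpa using this
          exact hts (by rw [← hxt, ← this])
      have hw'move : (Tcon n) (FreeMonoid.ofList (A ++ s :: B))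
          (FreeMonoid.ofList (s :: (A ++ B))) := move_head A B hAE
      -- new projection hypothesis
      have Hnew : ∀ u v : Sn n, dep u v → pj u v w₀ = pj u v (A ++ B) := by
        intro u v hd
        have h1 := H u v hd
        have h2 := filt_invariant hd hw'move
        rw [show FreeMonoid.toList (FreeMonoid.ofList (A ++ s :: B)) = A ++ s :: B from rfl,
          show FreeMonoid.toList (FreeMonoid.ofList (s :: (A ++ B))) = s :: (A ++ B) from rfl]
          at h2
        have h3 : pj u v (s :: w₀) = pj u v (s :: (A ++ B)) := by rw [h1, h2]
        by_cases hc : s = u ∨ s = v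
        · rw [pj_cons_pos _ hc, pj_cons_pos _ hc] at h3
          exact List.tail_eq_of_cons_eq h3
        · rw [pj_cons_neg _ hc, pj_cons_neg _ hc] at h3
          exact h3
      have IH := IHk w₀ (A ++ B) (by
        simp only [List.length_cons] at hlen
        omega) Hnew
      have step : (Tcon n) (FreeMonoid.ofList (s :: w₀))
          (FreeMonoid.ofList (s :: (A ++ B))) := by
        rw [FreeMonoid.ofList_cons, FreeMonoid.ofList_cons]
        exact (Tcon n).mul ((Tcon n).refl _) IH
      exact (Tcon n).trans step ((Tcon n).symm hw'move)

lemma iota_inj {n : ℕ} : Function.Injective (iota n) := by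
  intro t t' h
  induction t using Con.induction_on with
  | H w =>
    induction t' using Con.induction_on with
    | H w' =>
      have hw : iota n ((Tcon n).mk' w) = FreeMonoid.lift Pg w := Con.lift_mk' _ _
      have hw' : iota n ((Tcon n).mk' w') = FreeMonoid.lift Pg w' := Con.lift_mk' _ _
      have h2 : (FreeMonoid.lift Pg w : An n) = FreeMonoid.lift Pg w' := by
        rw [← hw, ← hw']
        exact h
      have hproj : ∀ u v : Sn n, dep u v →
          pj u v (FreeMonoid.toList w) = pj u v (FreeMonoid.toList w') := by
        intro u v hd
        apply Jw_inj
        rw [← lift_Pg_apply hd (FreeMonoid.toList w), ← lift_Pg_apply hd (FreeMonoid.toList w')]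
        rw [FreeMonoid.ofList_toList, FreeMonoid.ofList_toList]
        exact congrFun h2 (u, v)
      have := main_proj (FreeMonoid.toList w).length (FreeMonoid.toList w)
        (FreeMonoid.toList w') le_rfl hproj
      rw [FreeMonoid.ofList_toList, FreeMonoid.ofList_toList] at this
      exact (Con.eq _).mpr this

lemma h2_inj {n : ℕ} : Function.Injective (h2 n) := by
  intro a b h
  obtain ⟨t₁, b₁⟩ := a; obtain ⟨t₂, b₂⟩ := b
  have hl : iota n t₁ = iota n t₂ := congrArg SemidirectProduct.left h
  have hr : b₁ = b₂ := congrArg SemidirectProduct.right h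
  rw [iota_inj hl, hr]

end PMEmb
/-- **The pseudo braid monoid embeds in a group**: for every n ≥ 2, there exist a group G
and an injective monoid homomorphism from `PM n` to G. -/
theorem pm_embeds_in_group (n : ℕ) (hn : 2 ≤ n) :
    ∃ (G : Type) (_ : Group G) (f : PM n →* G), Function.Injective f := by
  refine ⟨PMEmb.Gfin n, inferInstance, (PMEmb.h2 n).comp (PMEmb.h1 n), ?_⟩
  intro x y hxy
  exact PMEmb.h1_injective n (PMEmb.h2_inj hxy)
end

section
/- Mobility property for tied braids: for every n ≥ 2, every element α of the tied braid monoid TM_n can be written as α = β γ, where β lies in the submonoid of TM_n generated by the elements σ_1,…,σ_{n−1}, σ_1⁻¹,…,σ_{n−1}⁻¹ and γ lies in the submonoid of TM_n generated by the generalized ties η_{i,j} for 1 ≤ i < j ≤ n. -/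
/-!
The tied braid monoid `TM n` (n ≥ 2), presented by generators
σ_1,…,σ_{n−1}, σ_1⁻¹,…,σ_{n−1}⁻¹, η_1,…,η_{n−1} subject to the relations:
σ_i σ_i⁻¹ = σ_i⁻¹ σ_i = 1; σ_i σ_{i+1} σ_i = σ_{i+1} σ_i σ_{i+1};
σ_i σ_j = σ_j σ_i for |i−j| ≥ 2; η_i η_j = η_j η_i for all i, j;
η_i σ_i = σ_i η_i; η_i σ_j = σ_j η_i for |i−j| ≥ 2;
η_i σ_j σ_i^ε = σ_j σ_i^ε η_j for |i−j| = 1, ε = ±1;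
η_i η_j σ_i = η_j σ_i η_j = σ_i η_i η_j for |i−j| = 1; η_i² = η_i.
-/

/-- Generators of the tied braid monoid: σ_i, σ_i⁻¹ and η_i for 1 ≤ i ≤ n−1. -/
inductive TMGen (n : ℕ) : Type
  | sig (i : ℕ) (h : 1 ≤ i ∧ i ≤ n - 1) : TMGen n
  | sigInv (i : ℕ) (h : 1 ≤ i ∧ i ≤ n - 1) : TMGen n
  | eta (i : ℕ) (h : 1 ≤ i ∧ i ≤ n - 1) : TMGen n

/-- The word σ_i in the free monoid on the generators. -/
def wS (n i : ℕ) : FreeMonoid (TMGen n) :=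
  if h : 1 ≤ i ∧ i ≤ n - 1 then FreeMonoid.of (TMGen.sig i h) else 1

/-- The word σ_i⁻¹ in the free monoid on the generators. -/
def wSI (n i : ℕ) : FreeMonoid (TMGen n) :=
  if h : 1 ≤ i ∧ i ≤ n - 1 then FreeMonoid.of (TMGen.sigInv i h) else 1

/-- The word η_i in the free monoid on the generators. -/
def wE (n i : ℕ) : FreeMonoid (TMGen n) :=
  if h : 1 ≤ i ∧ i ≤ n - 1 then FreeMonoid.of (TMGen.eta i h) else 1

/-- The defining relations of the tied braid monoid `TM n`. -/
inductive TMRel (n : ℕ) : FreeMonoid (TMGen n) → FreeMonoid (TMGen n) → Prop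
  | inv_right (i : ℕ) (h : 1 ≤ i ∧ i ≤ n - 1) :
      TMRel n (wS n i * wSI n i) 1
  | inv_left (i : ℕ) (h : 1 ≤ i ∧ i ≤ n - 1) :
      TMRel n (wSI n i * wS n i) 1
  | braid (i : ℕ) (h : 1 ≤ i ∧ i + 1 ≤ n - 1) :
      TMRel n (wS n i * wS n (i+1) * wS n i) (wS n (i+1) * wS n i * wS n (i+1))
  | sig_comm (i j : ℕ) (hi : 1 ≤ i ∧ i ≤ n - 1) (hj : 1 ≤ j ∧ j ≤ n - 1)
      (hij : i + 2 ≤ j ∨ j + 2 ≤ i) :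
      TMRel n (wS n i * wS n j) (wS n j * wS n i)
  | eta_comm (i j : ℕ) (hi : 1 ≤ i ∧ i ≤ n - 1) (hj : 1 ≤ j ∧ j ≤ n - 1) :
      TMRel n (wE n i * wE n j) (wE n j * wE n i)
  | eta_sig (i : ℕ) (h : 1 ≤ i ∧ i ≤ n - 1) :
      TMRel n (wE n i * wS n i) (wS n i * wE n i)
  | eta_sig_far (i j : ℕ) (hi : 1 ≤ i ∧ i ≤ n - 1) (hj : 1 ≤ j ∧ j ≤ n - 1)
      (hij : i + 2 ≤ j ∨ j + 2 ≤ i) :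
      TMRel n (wE n i * wS n j) (wS n j * wE n i)
  | eta_slide_pos (i j : ℕ) (hi : 1 ≤ i ∧ i ≤ n - 1) (hj : 1 ≤ j ∧ j ≤ n - 1)
      (hij : j = i + 1 ∨ i = j + 1) :
      TMRel n (wE n i * wS n j * wS n i) (wS n j * wS n i * wE n j)
  | eta_slide_neg (i j : ℕ) (hi : 1 ≤ i ∧ i ≤ n - 1) (hj : 1 ≤ j ∧ j ≤ n - 1)
      (hij : j = i + 1 ∨ i = j + 1) :
      TMRel n (wE n i * wS n j * wSI n i) (wS n j * wSI n i * wE n j)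
  | eta_eta_sig₁ (i j : ℕ) (hi : 1 ≤ i ∧ i ≤ n - 1) (hj : 1 ≤ j ∧ j ≤ n - 1)
      (hij : j = i + 1 ∨ i = j + 1) :
      TMRel n (wE n i * wE n j * wS n i) (wE n j * wS n i * wE n j)
  | eta_eta_sig₂ (i j : ℕ) (hi : 1 ≤ i ∧ i ≤ n - 1) (hj : 1 ≤ j ∧ j ≤ n - 1)
      (hij : j = i + 1 ∨ i = j + 1) :
      TMRel n (wE n j * wS n i * wE n j) (wS n i * wE n i * wE n j)
  | eta_idem (i : ℕ) (h : 1 ≤ i ∧ i ≤ n - 1) :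
      TMRel n (wE n i * wE n i) (wE n i)

/-- The tied braid monoid `TM n`: the quotient of the free monoid on the
generators by the congruence generated by the defining relations. -/
def TM (n : ℕ) := (conGen (TMRel n)).Quotient

instance (n : ℕ) : Monoid (TM n) :=
  inferInstanceAs (Monoid ((conGen (TMRel n)).Quotient))

/-- The generator σ_i of `TM n` (defined for 1 ≤ i ≤ n−1; junk value 1 otherwise). -/
def TM.s (n i : ℕ) : TM n := (conGen (TMRel n)).mk' (wS n i)

/-- The generator σ_i⁻¹ of `TM n` (defined for 1 ≤ i ≤ n−1; junk value 1 otherwise). -/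
def TM.sInv (n i : ℕ) : TM n := (conGen (TMRel n)).mk' (wSI n i)

/-- The generator η_i of `TM n` (defined for 1 ≤ i ≤ n−1; junk value 1 otherwise). -/
def TM.e (n i : ℕ) : TM n := (conGen (TMRel n)).mk' (wE n i)

/-- The generalized tie η_{i,j} = σ_i σ_{i+1} ⋯ σ_{j−2} η_{j−1} σ_{j−2}⁻¹ ⋯ σ_{i+1}⁻¹ σ_i⁻¹,
for 1 ≤ i < j ≤ n (in particular η_{i,i+1} = η_i). -/
def TM.genTie (n i j : ℕ) : TM n :=
  (((List.range' i (j - 1 - i)).map (TM.s n)).prod) * TM.e n (j - 1) *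
    (((List.range' i (j - 1 - i)).reverse.map (TM.sInv n)).prod)

namespace TMob

variable {n : ℕ}

theorem rel_eq {a b : FreeMonoid (TMGen n)} (h : TMRel n a b) :
    (conGen (TMRel n)).mk' a = (conGen (TMRel n)).mk' b :=
  (Con.eq _).mpr (ConGen.Rel.of _ _ h)

theorem s_one {i : ℕ} (h : ¬(1 ≤ i ∧ i ≤ n - 1)) : TM.s n i = 1 := by
  rw [TM.s, wS, dif_neg h, map_one]
  rfl

theorem sInv_one {i : ℕ} (h : ¬(1 ≤ i ∧ i ≤ n - 1)) : TM.sInv n i = 1 := by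
  rw [TM.sInv, wSI, dif_neg h, map_one]
  rfl

theorem e_one {i : ℕ} (h : ¬(1 ≤ i ∧ i ≤ n - 1)) : TM.e n i = 1 := by
  rw [TM.e, wE, dif_neg h, map_one]
  rfl

theorem s_mul_sInv (i : ℕ) : TM.s n i * TM.sInv n i = 1 := by
  by_cases h : 1 ≤ i ∧ i ≤ n - 1
  · have := rel_eq (n := n) (TMRel.inv_right i h)
    rw [map_mul, map_one] at this
    exact this
  · rw [s_one h, sInv_one h, mul_one]

theorem sInv_mul_s (i : ℕ) : TM.sInv n i * TM.s n i = 1 := by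
  by_cases h : 1 ≤ i ∧ i ≤ n - 1
  · have := rel_eq (n := n) (TMRel.inv_left i h)
    rw [map_mul, map_one] at this
    exact this
  · rw [s_one h, sInv_one h, mul_one]

theorem s_braid {i : ℕ} (h : 1 ≤ i ∧ i + 1 ≤ n - 1) :
    TM.s n i * TM.s n (i+1) * TM.s n i = TM.s n (i+1) * TM.s n i * TM.s n (i+1) := by
  have := rel_eq (n := n) (TMRel.braid i h)
  simp only [map_mul] at this
  exact this

theorem s_comm {i j : ℕ} (hij : i + 2 ≤ j ∨ j + 2 ≤ i) :
    TM.s n i * TM.s n j = TM.s n j * TM.s n i := by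
  by_cases hi : 1 ≤ i ∧ i ≤ n - 1
  · by_cases hj : 1 ≤ j ∧ j ≤ n - 1
    · have := rel_eq (n := n) (TMRel.sig_comm i j hi hj hij)
      simp only [map_mul] at this
      exact this
    · rw [s_one hj, one_mul, mul_one]
  · rw [s_one hi, one_mul, mul_one]

theorem e_s (i : ℕ) : TM.e n i * TM.s n i = TM.s n i * TM.e n i := by
  by_cases h : 1 ≤ i ∧ i ≤ n - 1
  · have := rel_eq (n := n) (TMRel.eta_sig i h)
    simp only [map_mul] at this
    exact this
  · rw [s_one h, e_one h]

theorem e_s_far {i j : ℕ} (hij : i + 2 ≤ j ∨ j + 2 ≤ i) :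
    TM.e n i * TM.s n j = TM.s n j * TM.e n i := by
  by_cases hi : 1 ≤ i ∧ i ≤ n - 1
  · by_cases hj : 1 ≤ j ∧ j ≤ n - 1
    · have := rel_eq (n := n) (TMRel.eta_sig_far i j hi hj hij)
      simp only [map_mul] at this
      exact this
    · rw [s_one hj, one_mul, mul_one]
  · rw [e_one hi, one_mul, mul_one]

theorem slide_pos {i j : ℕ} (hi : 1 ≤ i ∧ i ≤ n - 1) (hj : 1 ≤ j ∧ j ≤ n - 1)
    (hij : j = i + 1 ∨ i = j + 1) :
    TM.e n i * TM.s n j * TM.s n i = TM.s n j * TM.s n i * TM.e n j := by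
  have := rel_eq (n := n) (TMRel.eta_slide_pos i j hi hj hij)
  simp only [map_mul] at this
  exact this

theorem slide_neg {i j : ℕ} (hi : 1 ≤ i ∧ i ≤ n - 1) (hj : 1 ≤ j ∧ j ≤ n - 1)
    (hij : j = i + 1 ∨ i = j + 1) :
    TM.e n i * TM.s n j * TM.sInv n i = TM.s n j * TM.sInv n i * TM.e n j := by
  have := rel_eq (n := n) (TMRel.eta_slide_neg i j hi hj hij)
  simp only [map_mul] at this
  exact this


/-- σ_i as a unit of `TM n`. -/
def su (n i : ℕ) : (TM n)ˣ :=
  ⟨TM.s n i, TM.sInv n i, s_mul_sInv i, sInv_mul_s i⟩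

@[simp] theorem su_val (i : ℕ) : ((su n i : (TM n)ˣ) : TM n) = TM.s n i := rfl
@[simp] theorem su_inv_val (i : ℕ) : (((su n i)⁻¹ : (TM n)ˣ) : TM n) = TM.sInv n i := rfl

theorem su_braid {i : ℕ} (h : 1 ≤ i ∧ i + 1 ≤ n - 1) :
    su n i * su n (i+1) * su n i = su n (i+1) * su n i * su n (i+1) :=
  Units.ext (by simpa [Units.val_mul] using s_braid h)

theorem su_comm {i j : ℕ} (hij : i + 2 ≤ j ∨ j + 2 ≤ i) :
    su n i * su n j = su n j * su n i :=
  Units.ext (by simpa [Units.val_mul] using s_comm hij)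

/-- Conjugation by a unit. -/
def cj (u : (TM n)ˣ) (x : TM n) : TM n := ↑u * x * ↑u⁻¹

theorem cj_one (x : TM n) : cj 1 x = x := by simp [cj]

theorem cj_cj (u v : (TM n)ˣ) (x : TM n) : cj u (cj v x) = cj (u * v) x := by
  simp [cj, mul_assoc]

theorem cj_of_comm {u : (TM n)ˣ} {x : TM n} (h : ↑u * x = x * ↑u) : cj u x = x := by
  rw [cj, h, mul_assoc]; simp

theorem comm_inv {u : (TM n)ˣ} {x : TM n} (h : ↑u * x = x * ↑u) :
    ↑u⁻¹ * x = x * ↑u⁻¹ := by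
  have h2 : ↑u⁻¹ * (↑u * x) * ↑u⁻¹ = ↑u⁻¹ * (x * ↑u) * ↑u⁻¹ := by rw [h]
  simpa [mul_assoc] using h2.symm

theorem cj_inv_eq {u : (TM n)ˣ} {x y : TM n} (h : cj u x = y) : cj u⁻¹ y = x := by
  rw [← h]; simp [cj, mul_assoc]

theorem mul_coe_eq (x : TM n) (u : (TM n)ˣ) : x * ↑u = ↑u * cj u⁻¹ x := by
  simp [cj, mul_assoc]

theorem conj_helper {u v : (TM n)ˣ} {x y : TM n} (h : x * ↑u * ↑v = ↑u * ↑v * y) :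
    cj u⁻¹ x = cj v y := by
  rw [cj, cj, inv_inv]
  have h2 : ↑u⁻¹ * (x * ↑u * ↑v) * ↑v⁻¹ = ↑u⁻¹ * (↑u * ↑v * y) * ↑v⁻¹ := by rw [h]
  simpa [mul_assoc] using h2

theorem cj_e_same (k : ℕ) (u : (TM n)ˣ) (hu : u = su n k ∨ u = (su n k)⁻¹) :
    cj u (TM.e n k) = TM.e n k := by
  have hc : ↑(su n k) * TM.e n k = TM.e n k * ↑(su n k) := (e_s k).symm
  rcases hu with rfl | rfl
  · exact cj_of_comm hc
  · exact cj_of_comm (comm_inv hc)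

theorem cj_e_far {k t : ℕ} (h : k + 2 ≤ t ∨ t + 2 ≤ k) (u : (TM n)ˣ)
    (hu : u = su n k ∨ u = (su n k)⁻¹) :
    cj u (TM.e n t) = TM.e n t := by
  have hc : ↑(su n k) * TM.e n t = TM.e n t * ↑(su n k) :=
    (e_s_far (i := t) (j := k) (Or.symm h)).symm
  rcases hu with rfl | rfl
  · exact cj_of_comm hc
  · exact cj_of_comm (comm_inv hc)

/-- The braid word σ_i σ_{i+1} ⋯ σ_{i+m-1} as a unit. -/
def wu (n i m : ℕ) : (TM n)ˣ := ((List.range' i m).map (su n)).prod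

theorem wu_zero (i : ℕ) : wu n i 0 = 1 := rfl

theorem wu_succ_left (i m : ℕ) : wu n i (m+1) = su n i * wu n (i+1) m := by
  rw [wu, wu, List.range'_succ]; simp

theorem wu_succ_right (i m : ℕ) : wu n i (m+1) = wu n i m * su n (i+m) := by
  rw [wu, wu, List.range'_concat]; simp

theorem wu_val (i m : ℕ) :
    (↑(wu n i m) : TM n) = ((List.range' i m).map (TM.s n)).prod := by
  induction m generalizing i with
  | zero => simp [wu_zero]
  | succ m ih =>
    rw [wu_succ_left, List.range'_succ]
    simp [Units.val_mul, ih]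

theorem wu_inv_val (i m : ℕ) :
    (↑(wu n i m)⁻¹ : TM n) = ((List.range' i m).reverse.map (TM.sInv n)).prod := by
  induction m generalizing i with
  | zero => simp [wu_zero]
  | succ m ih =>
    rw [wu_succ_left, List.range'_succ, mul_inv_rev]
    simp [Units.val_mul, ih]

theorem genTie_eq (i m : ℕ) :
    TM.genTie n i (i+m+1) = cj (wu n i m) (TM.e n (i+m)) := by
  have e1 : i + m + 1 - 1 - i = m := by omega
  have e2 : i + m + 1 - 1 = i + m := by omega
  rw [TM.genTie, e1, e2, cj, wu_val, wu_inv_val]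

theorem wu_far {k i m : ℕ} (h : k + 2 ≤ i ∨ i + m + 1 ≤ k) :
    su n k * wu n i m = wu n i m * su n k := by
  induction m generalizing i with
  | zero => rw [wu_zero, mul_one, one_mul]
  | succ m ih =>
    have h1 : su n k * su n i = su n i * su n k := su_comm (by omega)
    have h2 : su n k * wu n (i+1) m = wu n (i+1) m * su n k := ih (by omega)
    rw [wu_succ_left, ← mul_assoc, h1, mul_assoc, h2, mul_assoc]

theorem wu_pass : ∀ m i c, 1 ≤ i → i + m ≤ n → i ≤ c → c + 2 ≤ i + m →
    su n (c+1) * wu n i m = wu n i m * su n c := by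
  intro m
  induction m with
  | zero => intro i c _ _ _ h; omega
  | succ m ih =>
    intro i c h1 hn hc1 hc2
    rcases eq_or_lt_of_le hc1 with rfl | hlt
    · -- c = i : the braid step
      obtain ⟨m', rfl⟩ : ∃ m', m = m' + 1 := ⟨m - 1, by omega⟩
      have hb : su n i * su n (i+1) * su n i = su n (i+1) * su n i * su n (i+1) :=
        su_braid ⟨h1, by omega⟩
      have hf : su n i * wu n (i+2) m' = wu n (i+2) m' * su n i :=
        wu_far (Or.inl (by omega))
      rw [wu_succ_left, wu_succ_left]
      calc su n (i+1) * (su n i * (su n (i+1) * wu n (i+2) m'))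
          = su n (i+1) * su n i * su n (i+1) * wu n (i+2) m' := by
            rw [← mul_assoc, ← mul_assoc]
        _ = su n i * su n (i+1) * su n i * wu n (i+2) m' := by rw [← hb]
        _ = su n i * su n (i+1) * (su n i * wu n (i+2) m') := by
            rw [mul_assoc (su n i * su n (i+1))]
        _ = su n i * su n (i+1) * (wu n (i+2) m' * su n i) := by rw [hf]
        _ = su n i * (su n (i+1) * wu n (i+2) m') * su n i := by
            simp [mul_assoc]
    · -- i < c : recurse
      have h1' : su n (c+1) * su n i = su n i * su n (c+1) := su_comm (by omega)
      have h2 : su n (c+1) * wu n (i+1) m = wu n (i+1) m * su n c :=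
        ih (i+1) c (by omega) (by omega) (by omega) (by omega)
      rw [wu_succ_left, ← mul_assoc, h1', mul_assoc, h2, mul_assoc]

theorem unit_pass_inv {a b w : (TM n)ˣ} (h : a * w = w * b) : a⁻¹ * w = w * b⁻¹ := by
  have h2 : a⁻¹ * (a * w) * b⁻¹ = a⁻¹ * (w * b) * b⁻¹ := by rw [h]
  simpa [mul_assoc] using h2.symm


theorem adj_pp {a : ℕ} (ha : 1 ≤ a) (han : a + 1 ≤ n - 1) :
    cj (su n (a+1))⁻¹ (TM.e n a) = cj (su n a) (TM.e n (a+1)) :=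
  conj_helper (slide_pos ⟨ha, by omega⟩ ⟨by omega, han⟩ (Or.inl rfl))

theorem adj_pm {a : ℕ} (ha : 1 ≤ a) (han : a + 1 ≤ n - 1) :
    cj (su n (a+1))⁻¹ (TM.e n a) = cj (su n a)⁻¹ (TM.e n (a+1)) :=
  conj_helper (slide_neg ⟨ha, by omega⟩ ⟨by omega, han⟩ (Or.inl rfl))

theorem adj_mp {a : ℕ} (ha : 1 ≤ a) (han : a + 1 ≤ n - 1) :
    cj (su n (a+1)) (TM.e n a) = cj (su n a)⁻¹ (TM.e n (a+1)) :=
  (conj_helper (slide_pos (i := a+1) (j := a) ⟨by omega, han⟩ ⟨ha, by omega⟩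
    (Or.inr rfl))).symm

/-- Master adjacency lemma: conjugating η_a by σ_{a+1}^{±1} equals conjugating
η_{a+1} by σ_a^{±1}, for any choice of signs. -/
theorem adj_master {a : ℕ} (ha : 1 ≤ a) (han : a + 1 ≤ n - 1) {u v : (TM n)ˣ}
    (hu : u = su n (a+1) ∨ u = (su n (a+1))⁻¹) (hv : v = su n a ∨ v = (su n a)⁻¹) :
    cj u (TM.e n a) = cj v (TM.e n (a+1)) := by
  have h1 := adj_pp (n := n) ha han
  have h2 := adj_pm (n := n) ha han
  have h3 := adj_mp (n := n) ha han
  rcases hu with rfl | rfl <;> rcases hv with rfl | rfl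
  · exact h3.trans (h2.symm.trans h1)
  · exact h3
  · exact h1
  · exact h2

theorem hu_inv {k : ℕ} {u : (TM n)ˣ} (hu : u = su n k ∨ u = (su n k)⁻¹) :
    u⁻¹ = su n k ∨ u⁻¹ = (su n k)⁻¹ := by
  rcases hu with rfl | rfl
  · exact Or.inr rfl
  · exact Or.inl (inv_inv _)

theorem comm_with_inv {a w : (TM n)ˣ} (h : a * w = w * a) : a * w⁻¹ = w⁻¹ * a :=
  (unit_pass_inv (a := w) (b := w) h.symm).symm

theorem cj_cancel {u w : (TM n)ˣ} (h : u * w = w * u) (x : TM n) :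
    cj (u * w * u⁻¹) x = cj w x := by
  rw [h, mul_assoc, mul_inv_cancel, mul_one]

/-- Commutation of `u = σ_k^{±1}` with a braid word, far case. -/
theorem u_far_wu {k i m : ℕ} (h : k + 2 ≤ i ∨ i + m + 1 ≤ k) {u : (TM n)ˣ}
    (hu : u = su n k ∨ u = (su n k)⁻¹) : u * wu n i m = wu n i m * u := by
  rcases hu with rfl | rfl
  · exact wu_far h
  · exact unit_pass_inv (wu_far h)

/-- Alternative form of the generalized tie:
η_{i,j} = σ_{j-1}⁻¹ ⋯ σ_{i+1}⁻¹ η_i σ_{i+1} ⋯ σ_{j-1}. -/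
theorem genTie_alt (i : ℕ) : ∀ m, 1 ≤ i → i + m + 1 ≤ n →
    TM.genTie n i (i+m+1) = cj (wu n (i+1) m)⁻¹ (TM.e n i) := by
  intro m
  induction m with
  | zero =>
    intro h1 _
    rw [genTie_eq i 0, wu_zero, wu_zero, inv_one, cj_one, cj_one]
    norm_num
  | succ m ih =>
    intro h1 hn2
    have key : cj (su n (i+m)) (TM.e n (i+m+1)) = cj (su n (i+m+1))⁻¹ (TM.e n (i+m)) :=
      (adj_master (a := i+m) (by omega) (by omega) (Or.inr rfl) (Or.inl rfl)).symm
    have hfar' : (su n (i+m+1))⁻¹ * wu n i m = wu n i m * (su n (i+m+1))⁻¹ :=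
      unit_pass_inv (wu_far (Or.inr (by omega)))
    have step1 : TM.genTie n i (i+(m+1)+1)
        = cj (wu n i m * (su n (i+m+1))⁻¹) (TM.e n (i+m)) := by
      have hg := genTie_eq (n := n) i (m+1)
      rw [wu_succ_right] at hg
      rw [hg, ← cj_cj]
      have he : i + (m+1) = (i+m)+1 := by omega
      rw [he, key, cj_cj]
    have harith : i + 1 + m = i + m + 1 := by omega
    rw [step1, ← hfar', ← cj_cj, ← genTie_eq i m, ih h1 (by omega), cj_cj,
      wu_succ_right (i+1) m, harith, mul_inv_rev]

/-- Fixing case: far generator. -/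
theorem conj_far {i m k : ℕ} (h : k + 2 ≤ i ∨ i + m + 2 ≤ k) {u : (TM n)ˣ}
    (hu : u = su n k ∨ u = (su n k)⁻¹) :
    cj u (TM.genTie n i (i+m+1)) = TM.genTie n i (i+m+1) := by
  have hc : u * wu n i m = wu n i m * u := u_far_wu (by omega) hu
  rw [genTie_eq i m, cj_cj, hc, ← cj_cj, cj_e_far (by omega) u hu]

/-- Fixing case: interior generator. -/
theorem conj_interior {i m c : ℕ} (h1 : 1 ≤ i) (hn : i + m + 1 ≤ n)
    (hc1 : i ≤ c) (hc2 : c + 2 ≤ i + m) {u : (TM n)ˣ}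
    (hu : u = su n (c+1) ∨ u = (su n (c+1))⁻¹) :
    cj u (TM.genTie n i (i+m+1)) = TM.genTie n i (i+m+1) := by
  have hp : su n (c+1) * wu n i m = wu n i m * su n c :=
    wu_pass m i c h1 (by omega) hc1 hc2
  obtain ⟨u', hpass, hu'⟩ : ∃ u' : (TM n)ˣ, u * wu n i m = wu n i m * u' ∧
      (u' = su n c ∨ u' = (su n c)⁻¹) := by
    rcases hu with rfl | rfl
    · exact ⟨su n c, hp, Or.inl rfl⟩
    · exact ⟨(su n c)⁻¹, unit_pass_inv hp, Or.inr rfl⟩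
  rw [genTie_eq i m, cj_cj, hpass, ← cj_cj, cj_e_far (by omega) u' hu']

/-- Fixing case: k = i = j-1. -/
theorem conj_same {i : ℕ} {u : (TM n)ˣ} (hu : u = su n i ∨ u = (su n i)⁻¹) :
    cj u (TM.genTie n i (i+1)) = TM.genTie n i (i+1) := by
  have hg := genTie_eq (n := n) i 0
  rw [wu_zero, cj_one] at hg
  rw [hg]
  exact cj_e_same i u hu

/-- Moving case A: k = i < j - 1 sends η_{i,j} to η_{i+1,j}. -/
theorem conj_A {i m : ℕ} (h1 : 1 ≤ i) (hn : i + (m+1) + 1 ≤ n) {u : (TM n)ˣ}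
    (hu : u = su n i ∨ u = (su n i)⁻¹) :
    cj u (TM.genTie n i (i+(m+1)+1)) = TM.genTie n (i+1) ((i+1)+m+1) := by
  have hcX : u * (wu n (i+1+1) m)⁻¹ = (wu n (i+1+1) m)⁻¹ * u :=
    comm_with_inv (u_far_wu (i := i+1+1) (Or.inl (by omega)) hu)
  have inner : cj (su n (i+1))⁻¹ (TM.e n i) = cj u⁻¹ (TM.e n (i+1)) :=
    adj_master h1 (by omega) (Or.inr rfl) (hu_inv hu)
  rw [genTie_alt i (m+1) h1 hn, genTie_alt (i+1) m (by omega) (by omega),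
    wu_succ_left (i+1) m, mul_inv_rev, ← cj_cj, inner, cj_cj, cj_cj]
  exact cj_cancel hcX (TM.e n (i+1))

theorem conj_A' {i j : ℕ} (h1 : 1 ≤ i) (hij : i + 1 < j) (hn : j ≤ n) {u : (TM n)ˣ}
    (hu : u = su n i ∨ u = (su n i)⁻¹) :
    cj u (TM.genTie n i j) = TM.genTie n (i+1) j := by
  obtain ⟨m, rfl⟩ : ∃ m, j = i + (m+1) + 1 := ⟨j - i - 2, by omega⟩
  rw [conj_A h1 hn hu]
  congr 1
  omega

/-- Moving case B: k = j - 1 > i sends η_{i,j} to η_{i,j-1}. -/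
theorem conj_B {i d : ℕ} (h1 : 1 ≤ i) (hn : i + d + 1 ≤ n - 1) {u : (TM n)ˣ}
    (hu : u = su n (i+d+1) ∨ u = (su n (i+d+1))⁻¹) :
    cj u (TM.genTie n i (i+(d+1)+1)) = TM.genTie n i (i+d+1) := by
  have hg := genTie_eq (n := n) i (d+1)
  rw [wu_succ_right] at hg
  have inner : cj (su n (i+d)) (TM.e n (i+(d+1))) = cj u⁻¹ (TM.e n (i+d)) := by
    have he : i + (d+1) = (i+d) + 1 := by omega
    rw [he]
    exact (adj_master (by omega) hn (hu_inv hu) (Or.inl rfl)).symm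
  have hcW : u * wu n i d = wu n i d * u := u_far_wu (Or.inr (by omega)) hu
  rw [hg, genTie_eq i d, ← cj_cj, inner, cj_cj, cj_cj]
  exact cj_cancel hcW (TM.e n (i+d))

theorem conj_B' {i j : ℕ} (h1 : 1 ≤ i) (hij : i + 1 < j) (hn : j ≤ n) {u : (TM n)ˣ}
    (hu : u = su n (j-1) ∨ u = (su n (j-1))⁻¹) :
    cj u (TM.genTie n i j) = TM.genTie n i (j-1) := by
  obtain ⟨d, rfl⟩ : ∃ d, j = i + (d+1) + 1 := ⟨j - i - 2, by omega⟩
  rw [show i + (d+1) + 1 - 1 = i + d + 1 from by omega] at hu ⊢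
  exact conj_B h1 (by omega) hu

/-- Full conjugation dispatch: conjugating a generalized tie by σ_k^{±1}
yields a generalized tie. -/
theorem tie_conj {i j k : ℕ} (h1 : 1 ≤ i) (hij : i < j) (hjn : j ≤ n)
    (hk1 : 1 ≤ k) (hk2 : k ≤ n - 1) {u : (TM n)ˣ}
    (hu : u = su n k ∨ u = (su n k)⁻¹) :
    ∃ i' j', 1 ≤ i' ∧ i' < j' ∧ j' ≤ n ∧ cj u (TM.genTie n i j) = TM.genTie n i' j' := by
  by_cases hfar : k + 2 ≤ i ∨ j + 1 ≤ k
  · refine ⟨i, j, h1, hij, hjn, ?_⟩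
    obtain ⟨m, rfl⟩ : ∃ m, j = i + m + 1 := ⟨j - i - 1, by omega⟩
    exact conj_far (by omega) hu
  · push_neg at hfar
    by_cases hkA : k + 1 = i
    · -- k = i - 1
      refine ⟨k, j, hk1, by omega, hjn, ?_⟩
      have hA : cj u⁻¹ (TM.genTie n k j) = TM.genTie n (k+1) j :=
        conj_A' hk1 (by omega) hjn (hu_inv hu)
      have h2 := cj_inv_eq hA
      rw [inv_inv] at h2
      rw [← hkA]
      exact h2
    · by_cases hkB : k = i
      · subst hkB
        by_cases hj1 : j = k + 1
        · refine ⟨k, j, h1, hij, hjn, ?_⟩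
          rw [hj1]
          exact conj_same hu
        · -- k = i < j - 1
          exact ⟨k+1, j, by omega, by omega, hjn, conj_A' h1 (by omega) hjn hu⟩
      · by_cases hkC : k + 1 < j
        · -- interior: i < k < j - 1
          refine ⟨i, j, h1, hij, hjn, ?_⟩
          obtain ⟨m, rfl⟩ : ∃ m, j = i + m + 1 := ⟨j - i - 1, by omega⟩
          obtain ⟨c, rfl⟩ : ∃ c, k = c + 1 := ⟨k - 1, by omega⟩
          exact conj_interior h1 (by omega) (by omega) (by omega) hu
        · by_cases hkD : k + 1 = j
          · -- k = j - 1 > i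
            refine ⟨i, k, h1, by omega, by omega, ?_⟩
            have hB : cj u (TM.genTie n i j) = TM.genTie n i (j-1) := by
              refine conj_B' h1 (by omega) hjn ?_
              rw [show j - 1 = k from by omega]
              exact hu
            rw [hB, show j - 1 = k from by omega]
          · -- k = j
            have hkj : k = j := by omega
            subst hkj
            refine ⟨i, k+1, h1, by omega, by omega, ?_⟩
            have hB : cj u⁻¹ (TM.genTie n i (k+1)) = TM.genTie n i (k+1-1) :=
              conj_B' h1 (by omega) (by omega)
                (by rw [show k + 1 - 1 = k from by omega]; exact hu_inv hu)
            rw [show k + 1 - 1 = k from by omega] at hB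
            have h2 := cj_inv_eq hB
            rw [inv_inv] at h2
            exact h2

/-- The set of generalized ties. -/
def TS (n : ℕ) : Set (TM n) :=
  {x : TM n | ∃ i j : ℕ, 1 ≤ i ∧ i < j ∧ j ≤ n ∧ x = TM.genTie n i j}

/-- The set of braid generators and their inverses. -/
def BS (n : ℕ) : Set (TM n) :=
  {x : TM n | ∃ i : ℕ, 1 ≤ i ∧ i ≤ n - 1 ∧ (x = TM.s n i ∨ x = TM.sInv n i)}

theorem T_slide {γ : TM n} (hγ : γ ∈ Submonoid.closure (TS n)) :
    ∀ (k : ℕ), 1 ≤ k → k ≤ n - 1 → ∀ v : (TM n)ˣ, (v = su n k ∨ v = (su n k)⁻¹) →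
    ∃ γ' ∈ Submonoid.closure (TS n), γ * ↑v = ↑v * γ' := by
  induction hγ using Submonoid.closure_induction with
  | mem x hx =>
    obtain ⟨i, j, h1, hij, hjn, rfl⟩ := hx
    intro k hk1 hk2 v hv
    obtain ⟨i', j', h1', hij', hjn', heq⟩ :=
      tie_conj (u := v⁻¹) h1 hij hjn hk1 hk2 (hu_inv hv)
    refine ⟨TM.genTie n i' j',
      Submonoid.subset_closure ⟨i', j', h1', hij', hjn', rfl⟩, ?_⟩
    rw [mul_coe_eq, heq]
  | one =>
    intro k _ _ v _
    exact ⟨1, one_mem _, by rw [one_mul, mul_one]⟩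
  | mul x y hx hy ihx ihy =>
    intro k hk1 hk2 v hv
    obtain ⟨y', hy', hyc⟩ := ihy k hk1 hk2 v hv
    obtain ⟨x', hx', hxc⟩ := ihx k hk1 hk2 v hv
    refine ⟨x' * y', mul_mem hx' hy', ?_⟩
    rw [mul_assoc, hyc, ← mul_assoc, hxc, mul_assoc]

theorem e_mem_TS (hn : 2 ≤ n) {i : ℕ} (h : 1 ≤ i ∧ i ≤ n - 1) :
    TM.e n i ∈ TS n := by
  have hg : TM.genTie n i (i+1) = TM.e n i := by
    rw [genTie_eq i 0, wu_zero, cj_one]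
    norm_num
  exact ⟨i, i+1, h.1, by omega, by omega, hg.symm⟩

theorem key_decomp (hn : 2 ≤ n) (l : List (TMGen n)) :
    ∃ β γ : TM n, β ∈ Submonoid.closure (BS n) ∧ γ ∈ Submonoid.closure (TS n) ∧
      (conGen (TMRel n)).mk' (FreeMonoid.ofList l) = β * γ := by
  induction l using List.reverseRecOn with
  | nil =>
    refine ⟨1, 1, one_mem _, one_mem _, ?_⟩
    rw [show FreeMonoid.ofList ([] : List (TMGen n)) = 1 from rfl, map_one, one_mul]
    rfl
  | append_singleton l g ih =>
    obtain ⟨β, γ, hβ, hγ, heq⟩ := ih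
    rw [FreeMonoid.ofList_append, map_mul, heq, FreeMonoid.ofList_singleton]
    cases g with
    | sig i h =>
      have hs : (conGen (TMRel n)).mk' (FreeMonoid.of (TMGen.sig i h)) = TM.s n i := by
        rw [TM.s, wS, dif_pos h]
      obtain ⟨γ', hγ', hc⟩ := T_slide hγ i h.1 h.2 (su n i) (Or.inl rfl)
      refine ⟨β * TM.s n i, γ',
        mul_mem hβ (Submonoid.subset_closure ⟨i, h.1, h.2, Or.inl rfl⟩), hγ', ?_⟩
      rw [hs]
      show β * γ * TM.s n i = β * TM.s n i * γ'
      rw [mul_assoc, show γ * TM.s n i = TM.s n i * γ' from hc, ← mul_assoc]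
    | sigInv i h =>
      have hs : (conGen (TMRel n)).mk' (FreeMonoid.of (TMGen.sigInv i h)) = TM.sInv n i := by
        rw [TM.sInv, wSI, dif_pos h]
      obtain ⟨γ', hγ', hc⟩ := T_slide hγ i h.1 h.2 (su n i)⁻¹ (Or.inr rfl)
      refine ⟨β * TM.sInv n i, γ',
        mul_mem hβ (Submonoid.subset_closure ⟨i, h.1, h.2, Or.inr rfl⟩), hγ', ?_⟩
      rw [hs]
      show β * γ * TM.sInv n i = β * TM.sInv n i * γ'
      rw [mul_assoc, show γ * TM.sInv n i = TM.sInv n i * γ' from hc, ← mul_assoc]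
    | eta i h =>
      have hs : (conGen (TMRel n)).mk' (FreeMonoid.of (TMGen.eta i h)) = TM.e n i := by
        rw [TM.e, wE, dif_pos h]
      refine ⟨β, γ * TM.e n i, hβ,
        mul_mem hγ (Submonoid.subset_closure (e_mem_TS hn h)), ?_⟩
      rw [hs]
      show β * γ * TM.e n i = β * (γ * TM.e n i)
      rw [mul_assoc]

end TMob

/-- **Mobility property for tied braids**: for every n ≥ 2, every element α of the tied
braid monoid `TM n` can be written as α = β γ with β in the submonoid generated by the
σ_i, σ_i⁻¹ (1 ≤ i ≤ n−1) and γ in the submonoid generated by the generalized ties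
η_{i,j} (1 ≤ i < j ≤ n). -/
theorem tm_mobility (n : ℕ) (hn : 2 ≤ n) (α : TM n) :
    ∃ β γ : TM n,
      β ∈ Submonoid.closure
          {x : TM n | ∃ i : ℕ, 1 ≤ i ∧ i ≤ n - 1 ∧ (x = TM.s n i ∨ x = TM.sInv n i)} ∧
      γ ∈ Submonoid.closure
          {x : TM n | ∃ i j : ℕ, 1 ≤ i ∧ i < j ∧ j ≤ n ∧ x = TM.genTie n i j} ∧
      α = β * γ := by
  induction α using Con.induction_on with
  | _ w =>
    obtain ⟨β, γ, hβ, hγ, heq⟩ := TMob.key_decomp hn (FreeMonoid.toList w)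
    rw [FreeMonoid.ofList_toList] at heq
    exact ⟨β, γ, hβ, hγ, heq⟩
end

section
/- Transitivity relations for generalized ties: for every n ≥ 2 and all indices 1 ≤ i < k < m ≤ n, the following equalities hold in the tied braid monoid TM_n: η_{i,k} η_{k,m} = η_{i,k} η_{i,m} = η_{k,m} η_{i,m}. -/
-- ==== development starts here ====

namespace TMDev

lemma rel_mk {n : ℕ} {a b : FreeMonoid (TMGen n)} (h : TMRel n a b) :
    (conGen (TMRel n)).mk' a = (conGen (TMRel n)).mk' b :=
  (Con.eq _).mpr (ConGen.Rel.of a b h)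

variable {n : ℕ}

lemma s_sInv {i : ℕ} (h : 1 ≤ i ∧ i ≤ n - 1) : TM.s n i * TM.sInv n i = 1 := by
  have := rel_mk (TMRel.inv_right (n := n) i h)
  simp only [map_mul, map_one] at this; exact this

lemma sInv_s {i : ℕ} (h : 1 ≤ i ∧ i ≤ n - 1) : TM.sInv n i * TM.s n i = 1 := by
  have := rel_mk (TMRel.inv_left (n := n) i h)
  simp only [map_mul, map_one] at this; exact this

lemma s_comm {i j : ℕ} (hi : 1 ≤ i ∧ i ≤ n - 1) (hj : 1 ≤ j ∧ j ≤ n - 1)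
    (hij : i + 2 ≤ j ∨ j + 2 ≤ i) : TM.s n i * TM.s n j = TM.s n j * TM.s n i := by
  have := rel_mk (TMRel.sig_comm (n := n) i j hi hj hij)
  simp only [map_mul] at this; exact this

lemma e_s {i : ℕ} (h : 1 ≤ i ∧ i ≤ n - 1) : TM.e n i * TM.s n i = TM.s n i * TM.e n i := by
  have := rel_mk (TMRel.eta_sig (n := n) i h)
  simp only [map_mul] at this; exact this

lemma e_s_far {i j : ℕ} (hi : 1 ≤ i ∧ i ≤ n - 1) (hj : 1 ≤ j ∧ j ≤ n - 1)
    (hij : i + 2 ≤ j ∨ j + 2 ≤ i) : TM.e n i * TM.s n j = TM.s n j * TM.e n i := by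
  have := rel_mk (TMRel.eta_sig_far (n := n) i j hi hj hij)
  simp only [map_mul] at this; exact this

lemma slide_pos {i j : ℕ} (hi : 1 ≤ i ∧ i ≤ n - 1) (hj : 1 ≤ j ∧ j ≤ n - 1)
    (hij : j = i + 1 ∨ i = j + 1) :
    TM.e n i * TM.s n j * TM.s n i = TM.s n j * TM.s n i * TM.e n j := by
  have := rel_mk (TMRel.eta_slide_pos (n := n) i j hi hj hij)
  simp only [map_mul] at this; exact this

lemma slide_neg {i j : ℕ} (hi : 1 ≤ i ∧ i ≤ n - 1) (hj : 1 ≤ j ∧ j ≤ n - 1)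
    (hij : j = i + 1 ∨ i = j + 1) :
    TM.e n i * TM.s n j * TM.sInv n i = TM.s n j * TM.sInv n i * TM.e n j := by
  have := rel_mk (TMRel.eta_slide_neg (n := n) i j hi hj hij)
  simp only [map_mul] at this; exact this

lemma ees₁ {i j : ℕ} (hi : 1 ≤ i ∧ i ≤ n - 1) (hj : 1 ≤ j ∧ j ≤ n - 1)
    (hij : j = i + 1 ∨ i = j + 1) :
    TM.e n i * TM.e n j * TM.s n i = TM.e n j * TM.s n i * TM.e n j := by
  have := rel_mk (TMRel.eta_eta_sig₁ (n := n) i j hi hj hij)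
  simp only [map_mul] at this; exact this

lemma ees₂ {i j : ℕ} (hi : 1 ≤ i ∧ i ≤ n - 1) (hj : 1 ≤ j ∧ j ≤ n - 1)
    (hij : j = i + 1 ∨ i = j + 1) :
    TM.e n j * TM.s n i * TM.e n j = TM.s n i * TM.e n i * TM.e n j := by
  have := rel_mk (TMRel.eta_eta_sig₂ (n := n) i j hi hj hij)
  simp only [map_mul] at this; exact this

end TMDev
-- generic monoid helpers
section Generic
variable {M : Type*} [Monoid M]

lemma comm2 {x a b : M} (h1 : x * a = a * x) (h2 : x * b = b * x) :
    x * (a * b) = (a * b) * x := by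
  rw [← mul_assoc, h1, mul_assoc, h2, ← mul_assoc]

lemma conj_comm_of_comm {u v a : M} (huv : u * v = 1) (hvu : v * u = 1)
    (h : u * a = a * u) : v * a = a * v := by
  calc v * a = v * a * (u * v) := by rw [huv, mul_one]
    _ = v * (a * u) * v := by rw [← mul_assoc, mul_assoc v a u]
    _ = v * (u * a) * v := by rw [h]
    _ = v * u * a * v := by rw [mul_assoc v u a]
    _ = a * v := by rw [hvu, one_mul]

lemma conj_fix {u v a : M} (huv : u * v = 1) (h : u * a = a * u) :
    u * a * v = a := by rw [h, mul_assoc, huv, mul_one]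

lemma tm_conj_mul {u v : M} (hvu : v * u = 1) (x y : M) :
    (u * x * v) * (u * y * v) = u * (x * y) * v := by
  have hz : ∀ z : M, v * (u * z) = z := fun z => by rw [← mul_assoc, hvu, one_mul]
  calc (u * x * v) * (u * y * v) = u * (x * (v * (u * (y * v)))) := by
        simp only [mul_assoc]
    _ = u * (x * (y * v)) := by rw [hz]
    _ = u * (x * y) * v := by simp only [mul_assoc]

lemma trip_conj {u v A B C A' B' C' : M} (hvu : v * u = 1)
    (hA : A = u * A' * v) (hB : B = u * B' * v) (hC : C = u * C' * v)
    (h1 : A' * B' = A' * C') (h2 : A' * C' = B' * C') :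
    A * B = A * C ∧ A * C = B * C := by
  subst hA hB hC
  rw [tm_conj_mul hvu, tm_conj_mul hvu, tm_conj_mul hvu, h1, h2]
  exact ⟨rfl, rfl⟩

end Generic

namespace TMDev
variable {n : ℕ}

lemma sInv_s_comm {l t : ℕ} (hl : 1 ≤ l ∧ l ≤ n - 1) (ht : 1 ≤ t ∧ t ≤ n - 1)
    (hlt : l + 2 ≤ t ∨ t + 2 ≤ l) :
    TM.sInv n l * TM.s n t = TM.s n t * TM.sInv n l :=
  conj_comm_of_comm (s_sInv hl) (sInv_s hl) (s_comm hl ht hlt)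

lemma s_sInv_comm {l t : ℕ} (hl : 1 ≤ l ∧ l ≤ n - 1) (ht : 1 ≤ t ∧ t ≤ n - 1)
    (hlt : l + 2 ≤ t ∨ t + 2 ≤ l) :
    TM.s n l * TM.sInv n t = TM.sInv n t * TM.s n l :=
  (conj_comm_of_comm (s_sInv ht) (sInv_s ht) (s_comm ht hl hlt.symm)).symm

lemma sInv_sInv_comm {l t : ℕ} (hl : 1 ≤ l ∧ l ≤ n - 1) (ht : 1 ≤ t ∧ t ≤ n - 1)
    (hlt : l + 2 ≤ t ∨ t + 2 ≤ l) :
    TM.sInv n l * TM.sInv n t = TM.sInv n t * TM.sInv n l :=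
  conj_comm_of_comm (s_sInv hl) (sInv_s hl) (s_sInv_comm hl ht hlt)

lemma e_sInv_far {i t : ℕ} (hi : 1 ≤ i ∧ i ≤ n - 1) (ht : 1 ≤ t ∧ t ≤ n - 1)
    (hit : i + 2 ≤ t ∨ t + 2 ≤ i) :
    TM.e n i * TM.sInv n t = TM.sInv n t * TM.e n i :=
  (conj_comm_of_comm (s_sInv ht) (sInv_s ht) (e_s_far hi ht hit).symm).symm

/-- the key swap identity: σ_a η_{a+1} σ_a⁻¹ = σ_{a+1} η_a σ_{a+1}⁻¹ -/
lemma conj_swap {a : ℕ} (ha : 1 ≤ a) (ha2 : a + 1 ≤ n - 1) :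
    TM.s n a * TM.e n (a+1) * TM.sInv n a =
    TM.s n (a+1) * TM.e n a * TM.sInv n (a+1) := by
  have hva : 1 ≤ a ∧ a ≤ n - 1 := ⟨ha, by omega⟩
  have hvb : 1 ≤ a + 1 ∧ a + 1 ≤ n - 1 := ⟨by omega, ha2⟩
  have P : TM.e n a * TM.s n (a+1) * TM.s n a
      = TM.s n (a+1) * TM.s n a * TM.e n (a+1) := slide_pos hva hvb (Or.inl rfl)
  have P' : TM.e n (a+1) * TM.s n a * TM.s n (a+1)
      = TM.s n a * TM.s n (a+1) * TM.e n a := slide_pos hvb hva (Or.inr rfl)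
  have N : TM.e n a * TM.s n (a+1) * TM.sInv n a
      = TM.s n (a+1) * TM.sInv n a * TM.e n (a+1) := slide_neg hva hvb (Or.inl rfl)
  have hub : TM.s n (a+1) * TM.sInv n (a+1) = 1 := s_sInv hvb
  have hbu : TM.sInv n (a+1) * TM.s n (a+1) = 1 := sInv_s hvb
  have hua : TM.s n a * TM.sInv n a = 1 := s_sInv hva
  have hau : TM.sInv n a * TM.s n a = 1 := sInv_s hva
  -- step 1 : s a * e (a+1) * sInv a = sInv (a+1) * e a * s (a+1)
  have step1 : TM.s n a * TM.e n (a+1) * TM.sInv n a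
      = TM.sInv n (a+1) * TM.e n a * TM.s n (a+1) := by
    have h1 : TM.s n a * TM.e n (a+1)
        = TM.sInv n (a+1) * TM.e n a * TM.s n (a+1) * TM.s n a := by
      calc TM.s n a * TM.e n (a+1)
          = TM.sInv n (a+1) * (TM.s n (a+1) * TM.s n a * TM.e n (a+1)) := by
            simp only [← mul_assoc, hbu, one_mul]
        _ = TM.sInv n (a+1) * (TM.e n a * TM.s n (a+1) * TM.s n a) := by rw [← P]
        _ = TM.sInv n (a+1) * TM.e n a * TM.s n (a+1) * TM.s n a := by
            simp only [mul_assoc]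
    rw [h1, mul_assoc, hua, mul_one]
  -- step 2 : sInv (a+1) * e a * s (a+1) = sInv a * e (a+1) * s a
  have step2 : TM.sInv n (a+1) * TM.e n a * TM.s n (a+1)
      = TM.sInv n a * TM.e n (a+1) * TM.s n a := by
    have h1 : TM.e n a * TM.s n (a+1)
        = TM.s n (a+1) * (TM.sInv n a * TM.e n (a+1) * TM.s n a) := by
      calc TM.e n a * TM.s n (a+1)
          = TM.e n a * TM.s n (a+1) * TM.sInv n a * TM.s n a := by
            rw [mul_assoc _ _ (TM.s n a), hau, mul_one]
        _ = TM.s n (a+1) * TM.sInv n a * TM.e n (a+1) * TM.s n a := by rw [N]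
        _ = TM.s n (a+1) * (TM.sInv n a * TM.e n (a+1) * TM.s n a) := by
            simp only [mul_assoc]
    rw [mul_assoc, h1, ← mul_assoc, hbu, one_mul]
  -- step 3 : sInv a * e (a+1) * s a = s (a+1) * e a * sInv (a+1)
  have step3 : TM.sInv n a * TM.e n (a+1) * TM.s n a
      = TM.s n (a+1) * TM.e n a * TM.sInv n (a+1) := by
    have h1 : TM.sInv n a * TM.e n (a+1) * TM.s n a * TM.s n (a+1)
        = TM.s n (a+1) * TM.e n a := by
      calc TM.sInv n a * TM.e n (a+1) * TM.s n a * TM.s n (a+1)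
          = TM.sInv n a * (TM.e n (a+1) * TM.s n a * TM.s n (a+1)) := by
            simp only [mul_assoc]
        _ = TM.sInv n a * (TM.s n a * TM.s n (a+1) * TM.e n a) := by rw [P']
        _ = TM.s n (a+1) * TM.e n a := by simp only [← mul_assoc, hau, one_mul]
    calc TM.sInv n a * TM.e n (a+1) * TM.s n a
        = TM.sInv n a * TM.e n (a+1) * TM.s n a * (TM.s n (a+1) * TM.sInv n (a+1)) := by
          rw [hub, mul_one]
      _ = TM.sInv n a * TM.e n (a+1) * TM.s n a * TM.s n (a+1) * TM.sInv n (a+1) := by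
          rw [← mul_assoc]
      _ = TM.s n (a+1) * TM.e n a * TM.sInv n (a+1) := by rw [h1]
  rw [step1, step2, step3]

end TMDev
namespace TMDev
variable {n : ℕ}

lemma s_prodS_comm {l : ℕ} (hl : 1 ≤ l ∧ l ≤ n - 1) {L : List ℕ}
    (hL : ∀ t ∈ L, (1 ≤ t ∧ t ≤ n - 1) ∧ (t + 2 ≤ l ∨ l + 2 ≤ t)) :
    TM.s n l * (L.map (TM.s n)).prod = (L.map (TM.s n)).prod * TM.s n l := by
  induction L with
  | nil => simp
  | cons a L ih =>
    obtain ⟨ha, hfar⟩ := hL a List.mem_cons_self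
    have h1 : TM.s n l * TM.s n a = TM.s n a * TM.s n l := s_comm hl ha hfar.symm
    simp only [List.map_cons, List.prod_cons]
    rw [← mul_assoc, h1, mul_assoc, ih (fun t ht => hL t (List.mem_cons_of_mem _ ht)),
      ← mul_assoc]

lemma s_prodSI_comm {l : ℕ} (hl : 1 ≤ l ∧ l ≤ n - 1) {L : List ℕ}
    (hL : ∀ t ∈ L, (1 ≤ t ∧ t ≤ n - 1) ∧ (t + 2 ≤ l ∨ l + 2 ≤ t)) :
    TM.s n l * (L.map (TM.sInv n)).prod = (L.map (TM.sInv n)).prod * TM.s n l := by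
  induction L with
  | nil => simp
  | cons a L ih =>
    obtain ⟨ha, hfar⟩ := hL a List.mem_cons_self
    have h1 : TM.s n l * TM.sInv n a = TM.sInv n a * TM.s n l :=
      s_sInv_comm hl ha hfar.symm
    simp only [List.map_cons, List.prod_cons]
    rw [← mul_assoc, h1, mul_assoc, ih (fun t ht => hL t (List.mem_cons_of_mem _ ht)),
      ← mul_assoc]

/-- σ_l commutes with the generalized tie η_{i,k} when l is "far" from [i,k]. -/
lemma s_genTie_comm {l i k : ℕ} (hl : 1 ≤ l ∧ l ≤ n - 1) (hi : 1 ≤ i) (hik : i < k)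
    (hk : k ≤ n) (hfar : k + 1 ≤ l ∨ l + 2 ≤ i) :
    TM.s n l * TM.genTie n i k = TM.genTie n i k * TM.s n l := by
  have hmem : ∀ t ∈ List.range' i (k - 1 - i), (1 ≤ t ∧ t ≤ n - 1) ∧ (t + 2 ≤ l ∨ l + 2 ≤ t) := by
    intro t ht
    rw [List.mem_range'_1] at ht
    constructor
    · omega
    · rcases hfar with h | h
      · left; omega
      · right; omega
  have hmemr : ∀ t ∈ (List.range' i (k - 1 - i)).reverse,
      (1 ≤ t ∧ t ≤ n - 1) ∧ (t + 2 ≤ l ∨ l + 2 ≤ t) := by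
    intro t ht; exact hmem t (List.mem_reverse.mp ht)
  have hE : TM.s n l * TM.e n (k-1) = TM.e n (k-1) * TM.s n l := by
    refine (e_s_far ⟨by omega, by omega⟩ hl ?_).symm
    rcases hfar with h | h
    · left; omega
    · right; omega
  unfold TM.genTie
  exact comm2 (comm2 (s_prodS_comm hl hmem) hE) (s_prodSI_comm hl hmemr)

lemma genTie_succ (i : ℕ) : TM.genTie n i (i+1) = TM.e n i := by
  unfold TM.genTie
  have h0 : i + 1 - 1 - i = 0 := by omega
  rw [h0]
  simp

lemma genTie_left {i j : ℕ} (h : i + 2 ≤ j) :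
    TM.genTie n i j = TM.s n i * TM.genTie n (i+1) j * TM.sInv n i := by
  unfold TM.genTie
  have h1 : j - 1 - i = (j - 1 - (i+1)) + 1 := by omega
  rw [h1, List.range'_succ]
  simp only [List.map_cons, List.prod_cons, List.reverse_cons, List.map_append,
    List.prod_append, List.map_cons, List.map_nil, List.prod_cons, List.prod_nil, mul_one]
  simp only [mul_assoc]

lemma genTie_right {i j : ℕ} (hi : 1 ≤ i) (h : i + 2 ≤ j) (hj : j ≤ n) :
    TM.genTie n i j = TM.s n (j-1) * TM.genTie n i (j-1) * TM.sInv n (j-1) := by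
  have hva : 1 ≤ j - 2 := by omega
  have hva2 : (j - 2) + 1 ≤ n - 1 := by omega
  have key : TM.s n (j-2) * TM.e n ((j-2)+1) * TM.sInv n (j-2)
      = TM.s n ((j-2)+1) * TM.e n (j-2) * TM.sInv n ((j-2)+1) := conj_swap hva hva2
  have hj1 : (j - 2) + 1 = j - 1 := by omega
  rw [hj1] at key
  unfold TM.genTie
  have h1 : j - 1 - i = (j - 2 - i) + 1 := by omega
  have h2 : j - 1 - 1 - i = j - 2 - i := by omega
  have h3 : i + (j - 2 - i) = j - 2 := by omega
  have h4 : j - 1 - 1 = j - 2 := by omega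
  rw [h1, h2, h4, List.range'_1_concat, h3]
  set Q := ((List.range' i (j - 2 - i)).map (TM.s n)).prod with hQdef
  set Q' := ((List.range' i (j - 2 - i)).reverse.map (TM.sInv n)).prod with hQ'def
  have hmem : ∀ t ∈ List.range' i (j - 2 - i), (1 ≤ t ∧ t ≤ n - 1) ∧
      (t + 2 ≤ j - 1 ∨ (j-1) + 2 ≤ t) := by
    intro t ht
    rw [List.mem_range'_1] at ht
    exact ⟨⟨by omega, by omega⟩, Or.inl (by omega)⟩
  have hmemr : ∀ t ∈ (List.range' i (j - 2 - i)).reverse, (1 ≤ t ∧ t ≤ n - 1) ∧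
      (t + 2 ≤ j - 1 ∨ (j-1) + 2 ≤ t) := fun t ht => hmem t (List.mem_reverse.mp ht)
  have hl : 1 ≤ j - 1 ∧ j - 1 ≤ n - 1 := ⟨by omega, by omega⟩
  have hQ : TM.s n (j-1) * Q = Q * TM.s n (j-1) := s_prodS_comm hl hmem
  have hQ' : TM.s n (j-1) * Q' = Q' * TM.s n (j-1) := s_prodSI_comm hl hmemr
  have hQ'' : TM.sInv n (j-1) * Q' = Q' * TM.sInv n (j-1) :=
    conj_comm_of_comm (s_sInv hl) (sInv_s hl) hQ'
  simp only [List.map_append, List.prod_append, List.map_cons, List.map_nil,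
    List.prod_cons, List.prod_nil, mul_one, List.reverse_append, List.reverse_cons,
    List.reverse_nil, List.nil_append, List.cons_append, List.singleton_append]
  calc Q * TM.s n (j-2) * TM.e n (j-1) * (TM.sInv n (j-2) * Q')
      = Q * (TM.s n (j-2) * TM.e n (j-1) * TM.sInv n (j-2)) * Q' := by
        simp only [mul_assoc]
    _ = Q * (TM.s n (j-1) * TM.e n (j-2) * TM.sInv n (j-1)) * Q' := by rw [key]
    _ = (Q * TM.s n (j-1)) * TM.e n (j-2) * (TM.sInv n (j-1) * Q') := by
        simp only [mul_assoc]
    _ = (TM.s n (j-1) * Q) * TM.e n (j-2) * (Q' * TM.sInv n (j-1)) := by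
        rw [← hQ, hQ'']
    _ = TM.s n (j-1) * (Q * TM.e n (j-2) * Q') * TM.sInv n (j-1) := by
        simp only [mul_assoc]

end TMDev
namespace TMDev
variable {n : ℕ}

lemma genTie_two (i : ℕ) :
    TM.genTie n i (i+2) = TM.s n i * TM.e n (i+1) * TM.sInv n i := by
  unfold TM.genTie
  have h : i + 2 - 1 - i = 1 := by omega
  have h2 : i + 2 - 1 = i + 1 := by omega
  rw [h, h2, List.range'_one]
  simp

lemma base {i : ℕ} (hi : 1 ≤ i) (h2 : i + 1 ≤ n - 1) :
    TM.e n i * TM.e n (i+1) = TM.e n i * (TM.s n i * TM.e n (i+1) * TM.sInv n i) ∧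
    TM.e n i * (TM.s n i * TM.e n (i+1) * TM.sInv n i)
      = TM.e n (i+1) * (TM.s n i * TM.e n (i+1) * TM.sInv n i) := by
  have hvi : 1 ≤ i ∧ i ≤ n - 1 := ⟨hi, by omega⟩
  have hvj : 1 ≤ i + 1 ∧ i + 1 ≤ n - 1 := ⟨by omega, h2⟩
  have R1 : TM.e n i * TM.s n i = TM.s n i * TM.e n i := e_s hvi
  have R2 : TM.e n i * TM.e n (i+1) * TM.s n i
      = TM.e n (i+1) * TM.s n i * TM.e n (i+1) := ees₁ hvi hvj (Or.inl rfl)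
  have R3 : TM.e n (i+1) * TM.s n i * TM.e n (i+1)
      = TM.s n i * TM.e n i * TM.e n (i+1) := ees₂ hvi hvj (Or.inl rfl)
  have R4 : TM.s n i * TM.sInv n i = 1 := s_sInv hvi
  have hcommon : TM.e n i * (TM.s n i * TM.e n (i+1) * TM.sInv n i)
      = TM.s n i * TM.e n i * TM.e n (i+1) * TM.sInv n i := by
    calc TM.e n i * (TM.s n i * TM.e n (i+1) * TM.sInv n i)
        = (TM.e n i * TM.s n i) * TM.e n (i+1) * TM.sInv n i := by
          simp only [mul_assoc]
      _ = (TM.s n i * TM.e n i) * TM.e n (i+1) * TM.sInv n i := by rw [R1]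
  constructor
  · calc TM.e n i * TM.e n (i+1)
        = TM.e n i * TM.e n (i+1) * (TM.s n i * TM.sInv n i) := by rw [R4, mul_one]
      _ = (TM.e n i * TM.e n (i+1) * TM.s n i) * TM.sInv n i := by rw [← mul_assoc]
      _ = (TM.s n i * TM.e n i * TM.e n (i+1)) * TM.sInv n i := by rw [R2, R3]
      _ = TM.e n i * (TM.s n i * TM.e n (i+1) * TM.sInv n i) := hcommon.symm
  · calc TM.e n i * (TM.s n i * TM.e n (i+1) * TM.sInv n i)
        = TM.s n i * TM.e n i * TM.e n (i+1) * TM.sInv n i := hcommon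
      _ = (TM.e n (i+1) * TM.s n i * TM.e n (i+1)) * TM.sInv n i := by rw [← R3]
      _ = TM.e n (i+1) * (TM.s n i * TM.e n (i+1) * TM.sInv n i) := by
          simp only [mul_assoc]

lemma aux : ∀ (d i k m : ℕ), m - i ≤ d → 1 ≤ i → i < k → k < m → m ≤ n →
    (TM.genTie n i k * TM.genTie n k m = TM.genTie n i k * TM.genTie n i m ∧
     TM.genTie n i k * TM.genTie n i m = TM.genTie n k m * TM.genTie n i m) := by
  intro d
  induction d with
  | zero => intro i k m h1 h2 h3 h4 h5; omega
  | succ d ih =>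
    intro i k m hd hi hik hkm hm
    by_cases hm2 : k + 2 ≤ m
    · -- reduce m to m - 1, conjugating by σ_{m-1}
      have prev := ih i k (m-1) (by omega) hi hik (by omega) (by omega)
      have hl : 1 ≤ m - 1 ∧ m - 1 ≤ n - 1 := ⟨by omega, by omega⟩
      have hB : TM.genTie n k m
          = TM.s n (m-1) * TM.genTie n k (m-1) * TM.sInv n (m-1) :=
        genTie_right (by omega) hm2 hm
      have hC : TM.genTie n i m
          = TM.s n (m-1) * TM.genTie n i (m-1) * TM.sInv n (m-1) :=
        genTie_right hi (by omega) hm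
      have hAfix : TM.s n (m-1) * TM.genTie n i k * TM.sInv n (m-1)
          = TM.genTie n i k :=
        conj_fix (s_sInv hl) (s_genTie_comm hl hi hik (by omega) (Or.inl (by omega)))
      exact trip_conj (sInv_s hl) hAfix.symm hB hC prev.1 prev.2
    · by_cases hk2 : i + 2 ≤ k
      · -- m = k + 1 ; reduce i to i + 1, conjugating by σ_i
        have prev := ih (i+1) k m (by omega) (by omega) (by omega) hkm hm
        have hvi : 1 ≤ i ∧ i ≤ n - 1 := ⟨hi, by omega⟩
        have hA : TM.genTie n i k = TM.s n i * TM.genTie n (i+1) k * TM.sInv n i :=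
          genTie_left hk2
        have hC : TM.genTie n i m = TM.s n i * TM.genTie n (i+1) m * TM.sInv n i :=
          genTie_left (by omega)
        have hBfix : TM.s n i * TM.genTie n k m * TM.sInv n i = TM.genTie n k m :=
          conj_fix (s_sInv hvi) (s_genTie_comm hvi (by omega) hkm hm (Or.inr hk2))
        exact trip_conj (sInv_s hvi) hA hBfix.symm hC prev.1 prev.2
      · -- base case : k = i + 1, m = i + 2
        have hk : k = i + 1 := by omega
        have hmm : m = i + 2 := by omega
        subst hk; subst hmm
        have e1 : TM.genTie n i (i+1) = TM.e n i := genTie_succ i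
        have e2 : TM.genTie n (i+1) (i+2) = TM.e n (i+1) := by
          rw [show i + 2 = i + 1 + 1 from rfl]
          exact genTie_succ (i+1)
        have e3 : TM.genTie n i (i+2) = TM.s n i * TM.e n (i+1) * TM.sInv n i :=
          genTie_two i
        rw [e1, e2, e3]
        exact base hi (by omega)

end TMDev


/-- **Transitivity relations for generalized ties**: for every n ≥ 2 and all indices
1 ≤ i < k < m ≤ n, η_{i,k} η_{k,m} = η_{i,k} η_{i,m} = η_{k,m} η_{i,m} in `TM n`. -/
theorem tm_genTie_transitivity (n : ℕ) (hn : 2 ≤ n) (i k m : ℕ)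
    (hi : 1 ≤ i) (hik : i < k) (hkm : k < m) (hm : m ≤ n) :
    TM.genTie n i k * TM.genTie n k m = TM.genTie n i k * TM.genTie n i m ∧
    TM.genTie n i k * TM.genTie n i m = TM.genTie n k m * TM.genTie n i m :=
  TMDev.aux (m - i) i k m le_rfl hi hik hkm hm
end
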